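/- arXiv:1911.08720 — 7 statements merged into one kernel-verified Lean document; each statement's English description precedes it below -/
import Mathlib

section
/- For integers 1 ≤ k ≤ d, the Euclidean volume of the hypersimplex Δ̃_{k,d} = {(z_1,…,z_{d-1}) ∈ ℝ^{d-1} : 0 ≤ z_1 ≤ 1, 0 ≤ z_i − z_{i-1} ≤ 1 for 2 ≤ i ≤ d-1, and k-1 ≤ z_{d-1} ≤ k} equals A_{k,d-1}/(d-1)!, where A_{k,d-1} is the number of permutations of {1,…,d-1} with exactly k-1 descents. (Here one may take the convention of the paper, with z_0 = 0.) -/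
open MeasureTheory Finset ENNReal

/-- One-line notation value: `ov w i` is `w_i ∈ {1,…,d}` for `1 ≤ i ≤ d`,
and `0` otherwise (in particular `w_0 = 0`). -/
def ov {d : ℕ} (w : Equiv.Perm (Fin d)) (i : ℕ) : ℕ :=
  if h : 1 ≤ i ∧ i ≤ d then (w ⟨i - 1, by omega⟩).val + 1 else 0

/-- Number of descents of the consecutive subword `w_a w_{a+1} ⋯ w_b`. -/
def des {d : ℕ} (w : Equiv.Perm (Fin d)) (a b : ℕ) : ℕ :=
  ((Finset.Ico a b).filter (fun ℓ => ov w (ℓ + 1) < ov w ℓ)).card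

/-- `zcoord z i` is the `i`-th coordinate `z_i` (1-based), with `z_0 = 0`. -/
noncomputable def zcoord {m : ℕ} (z : Fin m → ℝ) (i : ℕ) : ℝ :=
  if h : 1 ≤ i ∧ i ≤ m then z ⟨i - 1, by omega⟩ else 0

/-- `Ycoord y i` is the 0-indexed coordinate `y_i`. -/
noncomputable def Ycoord {d : ℕ} (y : Fin d → ℝ) (i : ℕ) : ℝ :=
  if h : i < d then y ⟨i, h⟩ else 0

namespace HypAux

variable {m : ℕ}

/-- The translation vector attached to a permutation. -/
noncomputable def cst (w : Equiv.Perm (Fin m)) : Fin m → ℝ := fun j => (des w 1 (j.val + 1) : ℝ)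

/-- The open order chamber attached to a permutation. -/
def Cham (w : Equiv.Perm (Fin m)) : Set (Fin m → ℝ) :=
  {y | (∀ j, y j ∈ Set.Ioo (0:ℝ) 1) ∧ ∀ i j, w i < w j → y i < y j}

/-- The translated chamber in `z`-coordinates. -/
noncomputable def Eset (w : Equiv.Perm (Fin m)) : Set (Fin m → ℝ) :=
  (fun z => z - cst w) ⁻¹' Cham w

lemma ov_eq (w : Equiv.Perm (Fin m)) {i : ℕ} (h1 : 1 ≤ i) (h2 : i ≤ m) :
    ov w i = (w ⟨i - 1, by omega⟩).val + 1 := by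
  rw [ov, dif_pos ⟨h1, h2⟩]

lemma des_one (w : Equiv.Perm (Fin m)) : des w 1 1 = 0 := by
  simp [des]

lemma des_succ (w : Equiv.Perm (Fin m)) {j : ℕ} (h : 1 ≤ j) :
    des w 1 (j + 1) = des w 1 j + if ov w (j + 1) < ov w j then 1 else 0 := by
  rw [des, des, Nat.Ico_succ_right_eq_insert_Ico h, Finset.filter_insert]
  by_cases hd : ov w (j + 1) < ov w j
  · rw [if_pos hd, if_pos hd, Finset.card_insert_of_notMem (by simp)]
  · rw [if_neg hd, if_neg hd, add_zero]

lemma exists_rank (y : Fin m → ℝ) (hy : Function.Injective y) :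
    ∃ w : Equiv.Perm (Fin m), ∀ i j, w i < w j ↔ y i < y j := by
  classical
  set σ := Tuple.sort y with hσ
  have hg : StrictMono (y ∘ σ) :=
    (Tuple.monotone_sort y).strictMono_of_injective (hy.comp σ.injective)
  refine ⟨σ⁻¹, fun i j => ?_⟩
  have h1 : y i = (y ∘ σ) (σ⁻¹ i) := by simp
  have h2 : y j = (y ∘ σ) (σ⁻¹ j) := by simp
  rw [h1, h2, hg.lt_iff_lt]

lemma rank_unique {w w' : Equiv.Perm (Fin m)} {y : Fin m → ℝ}
    (hw : ∀ i j, w i < w j → y i < y j) (hw' : ∀ i j, w' i < w' j → y i < y j) : w = w' := by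
  have key : ∀ i j, w i < w j → w' i < w' j := by
    intro i j h
    have hij : i ≠ j := by rintro rfl; exact lt_irrefl _ h
    rcases lt_trichotomy (w' i) (w' j) with h' | h' | h'
    · exact h'
    · exact absurd (w'.injective h') hij
    · exact absurd (hw' j i h') (not_lt.2 (hw i j h).le)
  have hg : StrictMono (fun a => w' (w.symm a)) := by
    intro a b hab
    exact key (w.symm a) (w.symm b) (by simpa using hab)
  have hrange : Set.range (fun a => w' (w.symm a)) = Set.range (id : Fin m → Fin m) := by
    rw [Set.range_id]
    exact (w'.surjective.comp w.symm.surjective).range_eq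
  haveI : WellFoundedLT (Fin m) := inferInstance
  have hid : (fun a => w' (w.symm a)) = (id : Fin m → Fin m) :=
    (hg.range_inj strictMono_id).1 hrange
  symm
  ext i
  have h2 := congrFun hid (w i)
  have h3 : w' i = w i := by simpa using h2
  rw [h3]

lemma measurableSet_Cham (w : Equiv.Perm (Fin m)) : MeasurableSet (Cham w) := by
  have h1 : MeasurableSet {y : Fin m → ℝ | ∀ j, y j ∈ Set.Ioo (0:ℝ) 1} := by
    have : {y : Fin m → ℝ | ∀ j, y j ∈ Set.Ioo (0:ℝ) 1}
        = ⋂ j, (fun y : Fin m → ℝ => y j) ⁻¹' Set.Ioo 0 1 := by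
      ext y; simp
    rw [this]
    exact MeasurableSet.iInter fun j => (measurable_pi_apply j) measurableSet_Ioo
  have h2 : MeasurableSet {y : Fin m → ℝ | ∀ i j, w i < w j → y i < y j} := by
    have : {y : Fin m → ℝ | ∀ i j, w i < w j → y i < y j}
        = ⋂ i, ⋂ j, {y : Fin m → ℝ | w i < w j → y i < y j} := by
      ext y; simp
    rw [this]
    refine MeasurableSet.iInter fun i => MeasurableSet.iInter fun j => ?_
    by_cases h : w i < w j
    · simp only [h, true_implies]
      exact measurableSet_lt (measurable_pi_apply i) (measurable_pi_apply j)
    · simp [h]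
  have : Cham w = {y : Fin m → ℝ | ∀ j, y j ∈ Set.Ioo (0:ℝ) 1}
      ∩ {y : Fin m → ℝ | ∀ i j, w i < w j → y i < y j} := rfl
  rw [this]; exact h1.inter h2

lemma measurableSet_Eset (w : Equiv.Perm (Fin m)) : MeasurableSet (Eset w) := by
  have hme : Measurable (fun z : Fin m → ℝ => z - cst w) :=
    measurable_id.sub_const (cst w)
  exact hme (measurableSet_Cham w)

lemma null_int_fiber (L : (Fin m → ℝ) →ₗ[ℝ] ℝ) (v : Fin m → ℝ) (hv : L v ≠ 0) :
    volume {z : Fin m → ℝ | ∃ n : ℤ, L z = (n : ℝ)} = 0 := by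
  have hker : MeasurableSet (LinearMap.ker L : Set (Fin m → ℝ)) := by
    have hc : Continuous L := L.continuous_of_finiteDimensional
    have : (LinearMap.ker L : Set (Fin m → ℝ)) = L ⁻¹' {0} := rfl
    rw [this]
    exact (isClosed_singleton.preimage hc).measurableSet
  have hker0 : volume (LinearMap.ker L : Set (Fin m → ℝ)) = 0 := by
    refine Measure.addHaar_submodule volume _ (fun h => hv ?_)
    have : v ∈ LinearMap.ker L := h ▸ Submodule.mem_top
    exact LinearMap.mem_ker.1 this
  have hset : {z : Fin m → ℝ | ∃ n : ℤ, L z = (n : ℝ)}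
      = ⋃ n : ℤ, (fun z => z + (-(((n : ℝ) / L v) • v))) ⁻¹' (LinearMap.ker L : Set (Fin m → ℝ)) := by
    ext z
    simp only [Set.mem_setOf_eq, Set.mem_iUnion, Set.mem_preimage, SetLike.mem_coe,
      LinearMap.mem_ker, map_add, map_neg, _root_.map_smul, smul_eq_mul]
    constructor
    · rintro ⟨n, hn⟩
      exact ⟨n, by rw [hn, div_mul_cancel₀ _ hv]; ring⟩
    · rintro ⟨n, hn⟩
      refine ⟨n, ?_⟩
      rw [div_mul_cancel₀ _ hv] at hn
      linarith
  rw [hset]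
  refine measure_iUnion_null fun n => ?_
  rw [(measurePreserving_add_right volume _).measure_preimage hker.nullMeasurableSet, hker0]

/-- The "generic position" null set. -/
def Nset (m : ℕ) : Set (Fin m → ℝ) :=
  {z | ∃ j, ∃ n : ℤ, z j = (n : ℝ)} ∪ {z | ∃ i j, i ≠ j ∧ ∃ n : ℤ, z i - z j = (n : ℝ)}

lemma null_N : volume (Nset m) = 0 := by
  refine measure_union_null ?_ ?_
  · have : {z : Fin m → ℝ | ∃ j, ∃ n : ℤ, z j = (n : ℝ)}
        = ⋃ j, {z : Fin m → ℝ | ∃ n : ℤ, (LinearMap.proj j : (Fin m → ℝ) →ₗ[ℝ] ℝ) z = (n : ℝ)} := by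
      ext z; simp [LinearMap.proj_apply]
    rw [this]
    refine measure_iUnion_null fun j => ?_
    refine null_int_fiber _ (Pi.single j 1) ?_
    simp [LinearMap.proj_apply]
  · have : {z : Fin m → ℝ | ∃ i j, i ≠ j ∧ ∃ n : ℤ, z i - z j = (n : ℝ)}
        = ⋃ i, ⋃ j, {z : Fin m → ℝ | i ≠ j ∧ ∃ n : ℤ, z i - z j = (n : ℝ)} := by
      ext z; simp
    rw [this]
    refine measure_iUnion_null fun i => measure_iUnion_null fun j => ?_
    by_cases hij : i = j
    · simp [hij]
    · have hsub : {z : Fin m → ℝ | i ≠ j ∧ ∃ n : ℤ, z i - z j = (n : ℝ)}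
          ⊆ {z : Fin m → ℝ | ∃ n : ℤ,
              (((LinearMap.proj i : (Fin m → ℝ) →ₗ[ℝ] ℝ) - (LinearMap.proj j : (Fin m → ℝ) →ₗ[ℝ] ℝ))) z = (n : ℝ)} := by
        rintro z ⟨-, n, hn⟩
        exact ⟨n, by simpa [LinearMap.proj_apply] using hn⟩
      refine measure_mono_null hsub ?_
      refine null_int_fiber _ (Pi.single i 1) ?_
      simp [LinearMap.proj_apply, Pi.single_eq_of_ne (Ne.symm hij)]

lemma Cham_subset_cube (w : Equiv.Perm (Fin m)) :
    Cham w ⊆ {y : Fin m → ℝ | ∀ j, y j ∈ Set.Ioo (0:ℝ) 1} := fun _ h => h.1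

lemma volume_cube : volume {y : Fin m → ℝ | ∀ j, y j ∈ Set.Ioo (0:ℝ) 1} = 1 := by
  have : {y : Fin m → ℝ | ∀ j, y j ∈ Set.Ioo (0:ℝ) 1}
      = Set.pi Set.univ (fun _ : Fin m => Set.Ioo (0:ℝ) 1) := by
    ext y; simp [Set.mem_pi]
  rw [this, volume_pi_pi]
  simp [Real.volume_Ioo]

lemma Cham_disjoint {w w' : Equiv.Perm (Fin m)} (h : w ≠ w') : Disjoint (Cham w) (Cham w') := by
  rw [Set.disjoint_left]
  intro y hy hy'
  exact h (rank_unique hy.2 hy'.2)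

lemma volume_Cham_eq_one (w : Equiv.Perm (Fin m)) :
    volume (Cham w) = volume (Cham (1 : Equiv.Perm (Fin m))) := by
  have hmp := volume_preserving_arrowCongr' (w : Fin m ≃ Fin m) (MeasurableEquiv.refl ℝ)
    (MeasurePreserving.id _)
  have hpre : Cham w
      = (MeasurableEquiv.arrowCongr' (w : Fin m ≃ Fin m) (MeasurableEquiv.refl ℝ)) ⁻¹'
        Cham (1 : Equiv.Perm (Fin m)) := by
    ext y
    have happ : ∀ b, (MeasurableEquiv.arrowCongr' (w : Fin m ≃ Fin m)
        (MeasurableEquiv.refl ℝ)) y b = y (w.symm b) := fun b => rfl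
    constructor
    · rintro ⟨hbox, hord⟩
      refine ⟨fun b => by rw [happ]; exact hbox _, fun r s hrs => ?_⟩
      rw [happ, happ]
      refine hord _ _ ?_
      simpa using hrs
    · rintro ⟨hbox, hord⟩
      constructor
      · intro j
        have := hbox (w j)
        rwa [happ, Equiv.symm_apply_apply] at this
      · intro i j hij
        have := hord (w i) (w j) (by simpa using hij)
        rwa [happ, happ, Equiv.symm_apply_apply, Equiv.symm_apply_apply] at this
  rw [hpre, hmp.measure_preimage (measurableSet_Cham _).nullMeasurableSet]

lemma volume_Cham (w : Equiv.Perm (Fin m)) :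
    volume (Cham w) = ((m.factorial : ℝ≥0∞))⁻¹ := by
  classical
  set T := volume (Cham (1 : Equiv.Perm (Fin m))) with hT
  have hcube_sub : {y : Fin m → ℝ | ∀ j, y j ∈ Set.Ioo (0:ℝ) 1}
      ⊆ (⋃ w' : Equiv.Perm (Fin m), Cham w') ∪ Nset m := by
    intro y hy
    by_cases hinj : Function.Injective y
    · obtain ⟨w', hw'⟩ := exists_rank y hinj
      exact Or.inl (Set.mem_iUnion.2 ⟨w', hy, fun i j h => (hw' i j).1 h⟩)
    · simp only [Function.Injective, not_forall] at hinj
      obtain ⟨i, j, hval, hij⟩ := hinj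
      exact Or.inr (Or.inr ⟨i, j, hij, 0, by rw [hval]; simp⟩)
  have hdisj : Pairwise (Function.onFun Disjoint fun w' : Equiv.Perm (Fin m) => Cham w') :=
    fun _ _ h => Cham_disjoint h
  have hiU : volume (⋃ w' : Equiv.Perm (Fin m), Cham w')
      = ∑ w' : Equiv.Perm (Fin m), volume (Cham w') := by
    rw [measure_iUnion hdisj fun w' => measurableSet_Cham w', tsum_fintype]
  have hsum : ∑ w' : Equiv.Perm (Fin m), volume (Cham w') = (m.factorial : ℝ≥0∞) * T := by
    have : ∀ w' : Equiv.Perm (Fin m), volume (Cham w') = T := fun w' => volume_Cham_eq_one w'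
    rw [Finset.sum_congr rfl fun w' _ => this w', Finset.sum_const, nsmul_eq_mul]
    congr 1
    rw [Finset.card_univ, Fintype.card_perm, Fintype.card_fin]
  have hle : (1 : ℝ≥0∞) ≤ (m.factorial : ℝ≥0∞) * T := by
    calc (1 : ℝ≥0∞) = volume {y : Fin m → ℝ | ∀ j, y j ∈ Set.Ioo (0:ℝ) 1} := volume_cube.symm
    _ ≤ volume ((⋃ w' : Equiv.Perm (Fin m), Cham w') ∪ Nset m) := measure_mono hcube_sub
    _ ≤ volume (⋃ w' : Equiv.Perm (Fin m), Cham w') + volume (Nset m) := measure_union_le _ _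
    _ = (m.factorial : ℝ≥0∞) * T := by rw [null_N, add_zero, hiU, hsum]
  have hge : (m.factorial : ℝ≥0∞) * T ≤ 1 := by
    calc (m.factorial : ℝ≥0∞) * T = volume (⋃ w' : Equiv.Perm (Fin m), Cham w') := by
          rw [hiU, hsum]
    _ ≤ volume {y : Fin m → ℝ | ∀ j, y j ∈ Set.Ioo (0:ℝ) 1} :=
          measure_mono (Set.iUnion_subset fun w' => Cham_subset_cube w')
    _ = 1 := volume_cube
  have heq : (m.factorial : ℝ≥0∞) * T = 1 := le_antisymm hge hle
  have hfac0 : (m.factorial : ℝ≥0∞) ≠ 0 := by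
    simp [Nat.factorial_ne_zero]
  have hfactop : (m.factorial : ℝ≥0∞) ≠ ⊤ := by simp
  rw [volume_Cham_eq_one w, ← hT]
  calc T = ((m.factorial : ℝ≥0∞)⁻¹ * (m.factorial : ℝ≥0∞)) * T := by
        rw [ENNReal.inv_mul_cancel hfac0 hfactop, one_mul]
  _ = (m.factorial : ℝ≥0∞)⁻¹ * ((m.factorial : ℝ≥0∞) * T) := by ring
  _ = (m.factorial : ℝ≥0∞)⁻¹ := by rw [heq, mul_one]

lemma volume_Eset (w : Equiv.Perm (Fin m)) :
    volume (Eset w) = ((m.factorial : ℝ≥0∞))⁻¹ := by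
  have hfun : (fun z : Fin m → ℝ => z - cst w) = (fun z => z + (-(cst w))) := by
    funext z; exact sub_eq_add_neg _ _
  have : Eset w = (fun z : Fin m → ℝ => z + (-(cst w))) ⁻¹' Cham w := by
    rw [Eset, hfun]
  rw [this, (measurePreserving_add_right volume _).measure_preimage
    (measurableSet_Cham w).nullMeasurableSet, volume_Cham]

lemma Eset_disjoint {w w' : Equiv.Perm (Fin m)} (h : w ≠ w') : Disjoint (Eset w) (Eset w') := by
  rw [Set.disjoint_left]
  intro z hz hz'
  have hc : cst w = cst w' := by
    funext j
    have h1 := (hz.1 j)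
    have h2 := (hz'.1 j)
    simp only [Pi.sub_apply, Set.mem_Ioo, cst] at h1 h2
    have ha : (des w 1 (j.val + 1) : ℝ) < (des w' 1 (j.val + 1) : ℝ) + 1 := by linarith
    have hb : (des w' 1 (j.val + 1) : ℝ) < (des w 1 (j.val + 1) : ℝ) + 1 := by linarith
    have ha' : des w 1 (j.val + 1) < des w' 1 (j.val + 1) + 1 := by exact_mod_cast ha
    have hb' : des w' 1 (j.val + 1) < des w 1 (j.val + 1) + 1 := by exact_mod_cast hb
    have heq : des w 1 (j.val + 1) = des w' 1 (j.val + 1) := by omega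
    simp only [cst, heq]
  apply h
  refine rank_unique (y := z - cst w) hz.2 ?_
  rw [hc]
  exact hz'.2

end HypAux

open HypAux

lemma zcoord_pos {m : ℕ} (z : Fin m → ℝ) {i : ℕ} (h1 : 1 ≤ i) (h2 : i ≤ m) :
    zcoord z i = z ⟨i - 1, by omega⟩ := by
  rw [zcoord, dif_pos ⟨h1, h2⟩]

lemma zcoord_zero {m : ℕ} (z : Fin m → ℝ) : zcoord z 0 = 0 := by
  rw [zcoord, dif_neg (by omega)]

section Main

variable {m : ℕ}

/-- The hypersimplex region. -/
def Rset (m k : ℕ) : Set (Fin m → ℝ) :=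
  {z : Fin m → ℝ |
      (∀ i, 1 ≤ i → i ≤ m →
        0 ≤ zcoord z i - zcoord z (i - 1) ∧ zcoord z i - zcoord z (i - 1) ≤ 1) ∧
      ((k : ℝ) - 1 ≤ zcoord z m ∧ zcoord z m ≤ (k : ℝ))}

lemma Eset_subset_R {k : ℕ} (hk : 1 ≤ k) (w : Equiv.Perm (Fin m))
    (hdes : des w 1 m = k - 1) : Eset w ⊆ Rset m k := by
  intro z hz
  obtain ⟨hbox, hord⟩ := hz
  have hy : ∀ j : Fin m, 0 < z j - (des w 1 (j.val + 1) : ℝ)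
      ∧ z j - (des w 1 (j.val + 1) : ℝ) < 1 := by
    intro j
    have := hbox j
    simpa [cst, Set.mem_Ioo] using this
  have hyord : ∀ i j : Fin m, w i < w j →
      z i - (des w 1 (i.val + 1) : ℝ) < z j - (des w 1 (j.val + 1) : ℝ) := by
    intro i j hij
    have := hord i j hij
    simpa [cst] using this
  constructor
  · intro i hi1 him
    rcases Nat.lt_or_ge i 2 with hi2 | hi2
    · -- i = 1
      have hi : i = 1 := by omega
      subst hi
      rw [zcoord_pos z le_rfl him, zcoord_zero]
      have := hy ⟨0, by omega⟩
      rw [des_one] at this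
      simp only [Nat.cast_zero, sub_zero] at this
      constructor <;> [linarith [this.1]; linarith [this.2]]
    · -- 2 ≤ i ≤ m
      have ha : i - 1 ≤ m := by omega
      rw [zcoord_pos z hi1 him, zcoord_pos z (by omega) ha]
      set a : Fin m := ⟨i - 1 - 1, by omega⟩ with hadef
      set b : Fin m := ⟨i - 1, by omega⟩ with hbdef
      have hab : a ≠ b := by
        simp only [hadef, hbdef, Fin.mk.injEq, ne_eq]
        omega
      have hrec : des w 1 i = des w 1 (i - 1) + if ov w i < ov w (i-1) then 1 else 0 := by
        have := des_succ w (j := i - 1) (by omega)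
        have hii : i - 1 + 1 = i := by omega
        rw [hii] at this
        exact this
      have hovb : ov w i = (w b).val + 1 := by
        rw [ov_eq w hi1 him]
      have hova : ov w (i - 1) = (w a).val + 1 := by
        rw [ov_eq w (by omega) ha]
      have hya := hy a
      have hyb := hy b
      have hda : a.val + 1 = i - 1 := by
        rw [hadef]
        show i - 1 - 1 + 1 = i - 1
        omega
      have hdb : b.val + 1 = i := by
        rw [hbdef]
        show i - 1 + 1 = i
        omega
      rw [hda] at hya
      rw [hdb] at hyb
      by_cases hcase : w b < w a
      · have hdesc : ov w i < ov w (i - 1) := by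
          have hc' : (w b).val < (w a).val := hcase
          rw [hovb, hova]; omega
        have hrecR : (des w 1 i : ℝ) = (des w 1 (i - 1) : ℝ) + 1 := by
          rw [hrec, if_pos hdesc]; push_cast; ring
        have hlt := hyord b a hcase
        rw [hda, hdb] at hlt
        constructor
        · linarith [hyb.1, hya.2]
        · linarith [hlt]
      · have hwab : w a < w b := by
          rcases lt_trichotomy (w a) (w b) with h | h | h
          · exact h
          · exact absurd (w.injective h) hab
          · exact absurd h hcase
        have hdesc : ¬ (ov w i < ov w (i - 1)) := by
          have hc' : (w a).val < (w b).val := hwab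
          rw [hovb, hova]; omega
        have hrecR : (des w 1 i : ℝ) = (des w 1 (i - 1) : ℝ) := by
          rw [hrec, if_neg hdesc]; push_cast; ring
        have hlt := hyord a b hwab
        rw [hda, hdb] at hlt
        constructor
        · linarith [hlt]
        · linarith [hyb.2, hya.1]
  · rcases Nat.eq_zero_or_pos m with hm0 | hm0
    · subst hm0
      rw [zcoord_zero]
      have hk1 : k = 1 := by
        have : des w 1 0 = 0 := by simp [des]
        omega
      subst hk1
      norm_num
    · rw [zcoord_pos z hm0 le_rfl]
      have := hy ⟨m - 1, by omega⟩
      have hmm : m - 1 + 1 = m := by omega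
      rw [hmm, hdes] at this
      have hcast : ((k - 1 : ℕ) : ℝ) = (k : ℝ) - 1 := by
        push_cast [Nat.cast_sub hk]
        ring
      rw [hcast] at this
      constructor <;> [linarith [this.1]; linarith [this.2]]

lemma R_subset {k : ℕ} (hk : 1 ≤ k) (hm0 : 0 < m) :
    Rset m k ⊆ (⋃ w ∈ Finset.univ.filter
        (fun w : Equiv.Perm (Fin m) => des w 1 m = k - 1), Eset w) ∪ Nset m := by
  classical
  intro z hz
  by_cases hN : z ∈ Nset m
  · exact Or.inr hN
  refine Or.inl ?_
  simp only [Nset, Set.mem_union, Set.mem_setOf_eq, not_or, not_exists] at hN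
  obtain ⟨hN1, hN2⟩ := hN
  have hN2' : ∀ i j : Fin m, i ≠ j → ∀ n : ℤ, z i - z j ≠ (n : ℝ) := by
    intro i j hij n h
    exact hN2 i j ⟨hij, ⟨n, h⟩⟩
  set y : Fin m → ℝ := fun j => Int.fract (z j) with hy
  have hy01 : ∀ j, y j ∈ Set.Ioo (0:ℝ) 1 := by
    intro j
    refine ⟨?_, Int.fract_lt_one _⟩
    rcases lt_or_eq_of_le (Int.fract_nonneg (z j)) with h | h
    · exact h
    · exfalso
      apply hN1 j ⌊z j⌋
      have := Int.floor_add_fract (z j)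
      rw [← h] at this
      linarith
  have hfracteq : ∀ i j : Fin m, y i = y j → i = j := by
    intro i j hij
    by_contra hne
    apply hN2' i j hne (⌊z i⌋ - ⌊z j⌋)
    have h1 := Int.floor_add_fract (z i)
    have h2 := Int.floor_add_fract (z j)
    push_cast
    rw [hy] at hij
    simp only at hij
    linarith
  have hyinj : Function.Injective y := fun i j h => hfracteq i j h
  obtain ⟨w, hw⟩ := exists_rank y hyinj
  -- floors are given by descent counts
  have hfloor : ∀ n (hn : n < m), ⌊z ⟨n, hn⟩⌋ = (des w 1 (n + 1) : ℤ) := by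
    intro n
    induction n with
    | zero =>
      intro hn
      have hcond := hz.1 1 le_rfl (by omega)
      rw [zcoord_pos z le_rfl (by omega), zcoord_zero] at hcond
      simp only [sub_zero] at hcond
      have hne0 : z ⟨0, by omega⟩ ≠ (0 : ℝ) := by
        intro h; exact hN1 ⟨0, by omega⟩ 0 (by exact_mod_cast h)
      have hne1 : z ⟨0, by omega⟩ ≠ (1 : ℝ) := by
        intro h; exact hN1 ⟨0, by omega⟩ 1 (by exact_mod_cast h)
      have : (0:ℝ) < z ⟨0, hn⟩ ∧ z ⟨0, hn⟩ < 1 := by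
        constructor
        · rcases lt_or_eq_of_le hcond.1 with h | h
          · exact h
          · exact absurd h.symm hne0
        · rcases lt_or_eq_of_le hcond.2 with h | h
          · exact h
          · exact absurd h hne1
      have hfl0 : ⌊z ⟨0, hn⟩⌋ = 0 :=
        Int.floor_eq_zero_iff.mpr (Set.mem_Ico.mpr ⟨this.1.le, this.2⟩)
      rw [des_one, hfl0]
      simp
    | succ n ih =>
      intro hn
      have hn' : n < m := by omega
      have iha := ih hn'
      set a : Fin m := ⟨n, hn'⟩ with hadef
      set b : Fin m := ⟨n + 1, hn⟩ with hbdef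
      have hab : a ≠ b := by simp [hadef, hbdef]
      have hcond := hz.1 (n + 2) (by omega) (by omega)
      rw [zcoord_pos z (by omega) (by omega), zcoord_pos z (by omega) (by omega)] at hcond
      have hidx1 : (⟨n + 2 - 1, by omega⟩ : Fin m) = b := by simp [hbdef]
      have hidx2 : (⟨n + 2 - 1 - 1, by omega⟩ : Fin m) = a := by simp [hadef]
      rw [hidx1, hidx2] at hcond
      have hne0 : z b - z a ≠ (0 : ℝ) := by exact_mod_cast hN2' b a (Ne.symm hab) 0
      have hne1 : z b - z a ≠ (1 : ℝ) := by exact_mod_cast hN2' b a (Ne.symm hab) 1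
      have hopen : (0:ℝ) < z b - z a ∧ z b - z a < 1 := by
        constructor
        · rcases lt_or_eq_of_le hcond.1 with h | h
          · exact h
          · exact absurd h.symm (by exact_mod_cast hne0)
        · rcases lt_or_eq_of_le hcond.2 with h | h
          · exact h
          · exact absurd h (by exact_mod_cast hne1)
      have hfa := Int.floor_add_fract (z a)
      have hfb := Int.floor_add_fract (z b)
      have hya : y a = Int.fract (z a) := rfl
      have hyb : y b = Int.fract (z b) := rfl
      have hyane : y a ≠ y b := fun h => hab (hfracteq _ _ h)
      have hrec : des w 1 (n + 2) = des w 1 (n + 1) + if ov w (n+2) < ov w (n+1) then 1 else 0 :=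
        des_succ w (by omega)
      have hovb : ov w (n + 2) = (w b).val + 1 := by
        rw [ov_eq w (by omega) (by omega)]
        congr 1
      have hova : ov w (n + 1) = (w a).val + 1 := by
        rw [ov_eq w (by omega) (by omega)]
        congr 1
      by_cases hcase : y b < y a
      · -- descent
        have hwba : w b < w a := (hw b a).2 hcase
        have hdesc : ov w (n + 2) < ov w (n + 1) := by
          have hc' : (w b).val < (w a).val := hwba
          rw [hovb, hova]; omega
        rw [hrec, if_pos hdesc]
        -- floor difference is 1
        have hdiff : (⌊z b⌋ : ℝ) - (⌊z a⌋ : ℝ) = (z b - z a) - (y b - y a) := by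
          rw [hya, hyb]; linarith
        have hfr1 : Int.fract (z b) - Int.fract (z a) > -1 := by
          have := Int.fract_lt_one (z a)
          have := Int.fract_nonneg (z b)
          linarith
        have hfr2 : Int.fract (z b) - Int.fract (z a) < 0 := by
          rw [← hya, ← hyb]; linarith
        have hb1 : (0:ℝ) < (⌊z b⌋ : ℝ) - (⌊z a⌋ : ℝ) := by
          rw [hdiff, hya, hyb]; linarith [hopen.1]
        have hb2 : (⌊z b⌋ : ℝ) - (⌊z a⌋ : ℝ) < 2 := by
          rw [hdiff, hya, hyb]; linarith [hopen.2]
        have hint : ⌊z b⌋ = ⌊z a⌋ + 1 := by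
          have h1 : (0:ℤ) < ⌊z b⌋ - ⌊z a⌋ := by exact_mod_cast (by push_cast; linarith : (0:ℝ) < ((⌊z b⌋ - ⌊z a⌋ : ℤ) : ℝ))
          have h2 : ⌊z b⌋ - ⌊z a⌋ < 2 := by exact_mod_cast (by push_cast; linarith : ((⌊z b⌋ - ⌊z a⌋ : ℤ) : ℝ) < 2)
          omega
        rw [hint, iha]
        push_cast
        ring
      · -- ascent
        have hyab : y a < y b := lt_of_le_of_ne (not_lt.1 hcase) hyane
        have hwab : w a < w b := (hw a b).2 hyab
        have hdesc : ¬ (ov w (n + 2) < ov w (n + 1)) := by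
          have hc' : (w a).val < (w b).val := hwab
          rw [hovb, hova]; omega
        rw [hrec, if_neg hdesc]
        have hdiff : (⌊z b⌋ : ℝ) - (⌊z a⌋ : ℝ) = (z b - z a) - (y b - y a) := by
          rw [hya, hyb]; linarith
        have hb1 : (-1:ℝ) < (⌊z b⌋ : ℝ) - (⌊z a⌋ : ℝ) := by
          rw [hdiff, hya, hyb]
          have := Int.fract_lt_one (z b)
          have := Int.fract_nonneg (z a)
          linarith [hopen.1]
        have hb2 : (⌊z b⌋ : ℝ) - (⌊z a⌋ : ℝ) < 1 := by
          rw [hdiff, hya, hyb]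
          linarith [hopen.2, hyab]
        have hint : ⌊z b⌋ = ⌊z a⌋ := by
          have h1 : (-1:ℤ) < ⌊z b⌋ - ⌊z a⌋ := by exact_mod_cast (by push_cast; linarith : (-1:ℝ) < ((⌊z b⌋ - ⌊z a⌋ : ℤ) : ℝ))
          have h2 : ⌊z b⌋ - ⌊z a⌋ < 1 := by exact_mod_cast (by push_cast; linarith : ((⌊z b⌋ - ⌊z a⌋ : ℤ) : ℝ) < 1)
          omega
        rw [hint, iha, add_zero]
  -- the total number of descents is k - 1
  have hlast : des w 1 m = k - 1 := by
    have hmm : m - 1 < m := by omega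
    have hfl := hfloor (m - 1) hmm
    have hmm1 : m - 1 + 1 = m := by omega
    rw [hmm1] at hfl
    have hzm := hz.2
    rw [zcoord_pos z hm0 le_rfl] at hzm
    set c : Fin m := ⟨m - 1, hmm⟩ with hcdef
    have hne1 : z c ≠ ((k : ℝ) - 1) := by
      intro h
      exact hN1 c ((k:ℤ) - 1) (by push_cast; linarith)
    have hne2 : z c ≠ (k : ℝ) := by
      intro h
      exact hN1 c (k : ℤ) (by exact_mod_cast h)
    have hzo : (k:ℝ) - 1 < z c ∧ z c < k := by
      constructor
      · rcases lt_or_eq_of_le hzm.1 with h | h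
        · exact h
        · exact absurd h.symm hne1
      · rcases lt_or_eq_of_le hzm.2 with h | h
        · exact h
        · exact absurd h hne2
    have hflo : ⌊z c⌋ = (k : ℤ) - 1 := by
      rw [Int.floor_eq_iff]
      constructor
      · push_cast; linarith [hzo.1]
      · push_cast; linarith [hzo.2]
    rw [hflo] at hfl
    omega
  refine Set.mem_iUnion.2 ⟨w, Set.mem_iUnion.2 ⟨?_, ?_⟩⟩
  · simp only [Finset.mem_filter, Finset.mem_univ, true_and]
    exact hlast
  · -- z ∈ Eset w
    have hkey : ∀ j : Fin m, z j - cst w j = y j := by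
      intro j
      have hfl := hfloor j.val j.isLt
      simp only [Fin.eta] at hfl
      have hcst : (cst w j : ℝ) = ((⌊z j⌋ : ℤ) : ℝ) := by
        simp only [cst]
        rw [hfl]
        push_cast
        ring
      rw [hcst, Int.self_sub_floor]
    show z - cst w ∈ Cham w
    constructor
    · intro j
      have : (z - cst w) j = y j := by rw [Pi.sub_apply, hkey j]
      rw [this]
      exact hy01 j
    · intro i j hij
      have hi' : (z - cst w) i = y i := by rw [Pi.sub_apply, hkey i]
      have hj' : (z - cst w) j = y j := by rw [Pi.sub_apply, hkey j]
      rw [hi', hj']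
      exact (hw i j).1 hij

end Main

theorem stmt4 (d k m : ℕ) (hk : 1 ≤ k) (hkd : k ≤ d) (hm : d = m + 1) :
    volume {z : Fin m → ℝ |
      (∀ i, 1 ≤ i → i ≤ m →
        0 ≤ zcoord z i - zcoord z (i - 1) ∧ zcoord z i - zcoord z (i - 1) ≤ 1) ∧
      ((k : ℝ) - 1 ≤ zcoord z m ∧ zcoord z m ≤ (k : ℝ))} =
    (Nat.card {w : Equiv.Perm (Fin m) // des w 1 m = k - 1} : ℝ≥0∞) /
      (Nat.factorial m : ℝ≥0∞) := by
  classical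
  subst hm
  have hsetR : {z : Fin m → ℝ |
      (∀ i, 1 ≤ i → i ≤ m →
        0 ≤ zcoord z i - zcoord z (i - 1) ∧ zcoord z i - zcoord z (i - 1) ≤ 1) ∧
      ((k : ℝ) - 1 ≤ zcoord z m ∧ zcoord z m ≤ (k : ℝ))} = Rset m k := rfl
  rw [hsetR]
  rcases Nat.eq_zero_or_pos m with rfl | hm0
  · -- m = 0
    have hk1 : k = 1 := by omega
    subst hk1
    have hR : Rset 0 1 = Set.univ := by
      ext z
      simp only [Rset, Set.mem_setOf_eq, Set.mem_univ, iff_true]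
      constructor
      · intro i h1 h0; omega
      · rw [zcoord_zero]; norm_num
    rw [hR]
    have hvol : volume (Set.univ : Set (Fin 0 → ℝ)) = 1 := by
      rw [MeasureTheory.volume_pi, Measure.pi_univ]
      simp
    rw [hvol]
    have hcard : Nat.card {w : Equiv.Perm (Fin 0) // des w 1 0 = 1 - 1} = 1 := by
      rw [Nat.card_eq_fintype_card, Fintype.card_eq_one_iff]
      refine ⟨⟨1, by simp [des]⟩, ?_⟩
      rintro ⟨w, hw⟩
      ext : 1
      apply Subsingleton.elim
    rw [hcard]
    simp
  · set F : Finset (Equiv.Perm (Fin m)) :=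
      Finset.univ.filter (fun w : Equiv.Perm (Fin m) => des w 1 m = k - 1) with hF
    have hsub1 : (⋃ w ∈ F, Eset w) ⊆ Rset m k := by
      refine Set.iUnion₂_subset fun w hw => ?_
      rw [hF, Finset.mem_filter] at hw
      exact Eset_subset_R hk w hw.2
    have hsub2 : Rset m k ⊆ (⋃ w ∈ F, Eset w) ∪ Nset m := R_subset hk hm0
    have hvolR : volume (Rset m k) = volume (⋃ w ∈ F, Eset w) := by
      refine le_antisymm ?_ (measure_mono hsub1)
      calc volume (Rset m k) ≤ volume ((⋃ w ∈ F, Eset w) ∪ Nset m) := measure_mono hsub2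
      _ ≤ volume (⋃ w ∈ F, Eset w) + volume (Nset m) := measure_union_le _ _
      _ = volume (⋃ w ∈ F, Eset w) := by rw [null_N, add_zero]
    rw [hvolR]
    have hdisj : Set.PairwiseDisjoint (F : Set (Equiv.Perm (Fin m))) (fun w => Eset w) := by
      intro w _ w' _ hne
      exact Eset_disjoint hne
    rw [measure_biUnion_finset hdisj (fun w _ => measurableSet_Eset w)]
    have hsum : ∑ w ∈ F, volume (Eset w) = (F.card : ℝ≥0∞) * ((m.factorial : ℝ≥0∞))⁻¹ := by
      rw [Finset.sum_congr rfl fun w _ => volume_Eset w, Finset.sum_const, nsmul_eq_mul]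
    rw [hsum]
    have hcard : (Nat.card {w : Equiv.Perm (Fin m) // des w 1 m = k - 1} : ℝ≥0∞)
        = (F.card : ℝ≥0∞) := by
      rw [Nat.card_eq_fintype_card, Fintype.card_subtype]
    rw [hcard, div_eq_mul_inv]
end

section
/- For every integer t ≥ 2, the Euclidean volume of the polytope {(y_0, y_1, …, y_{t-1}, y') ∈ ℝ^{t+1} : −1 ≤ y_i ≤ 0 for all i, −1 ≤ y' ≤ 0, and −1 ≤ y' + y_0 − y_i ≤ 0 for all 1 ≤ i ≤ t−1} equals 2/(t+1). -/
open MeasureTheory Finset ENNReal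

/-! ### Auxiliary real-integral computations -/

lemma contF (k : ℕ) (a : ℝ) :
    Continuous fun b : ℝ => (min 0 (a+b+1) - max (-1) (a+b))^(k+1) :=
  (((continuous_const.min (by fun_prop)).sub (continuous_const.max (by fun_prop)))).pow _

lemma shift_pow (k : ℕ) (c u v : ℝ) :
    ∫ b in u..v, (b+c)^(k+1) = ((v+c)^(k+2) - (u+c)^(k+2))/(k+2) := by
  rw [intervalIntegral.integral_comp_add_right (f := fun x => x^(k+1)) (d := c),
    integral_pow]
  push_cast; ring_nf

lemma inner_real (k : ℕ) (a : ℝ) (ha : a ∈ Set.Icc (-1:ℝ) 0) :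
    ∫ b in (-1:ℝ)..0, (min 0 (a+b+1) - max (-1) (a+b))^(k+1)
      = (2 - (a+1)^(k+2) - (-a)^(k+2))/(k+2) := by
  obtain ⟨ha1, ha2⟩ := ha
  rw [← intervalIntegral.integral_add_adjacent_intervals (b := -1 - a)
    ((contF k a).intervalIntegrable _ _) ((contF k a).intervalIntegrable _ _)]
  have h1 : ∫ b in (-1:ℝ)..(-1-a), (min 0 (a+b+1) - max (-1) (a+b))^(k+1)
      = ∫ b in (-1:ℝ)..(-1-a), (b+(a+2))^(k+1) := by
    apply intervalIntegral.integral_congr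
    intro b hb
    rw [Set.uIcc_of_le (by linarith)] at hb
    obtain ⟨hb1, hb2⟩ := hb
    have h1 : min (0:ℝ) (a+b+1) = a+b+1 := min_eq_right (by linarith)
    have h2 : max (-1:ℝ) (a+b) = -1 := max_eq_left (by linarith)
    simp only [h1, h2]; ring_nf
  have h2 : ∫ b in (-1-a:ℝ)..0, (min 0 (a+b+1) - max (-1) (a+b))^(k+1)
      = ∫ x in (-0:ℝ)..(-(-1-a)), (x + -a)^(k+1) := by
    rw [← intervalIntegral.integral_comp_neg (f := fun x => (x + -a)^(k+1))]
    apply intervalIntegral.integral_congr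
    intro b hb
    rw [Set.uIcc_of_le (by linarith)] at hb
    obtain ⟨hb1, hb2⟩ := hb
    have h1 : min (0:ℝ) (a+b+1) = 0 := min_eq_left (by linarith)
    have h2 : max (-1:ℝ) (a+b) = a+b := max_eq_right (by linarith)
    simp only [h1, h2]; ring_nf
  rw [h1, h2, shift_pow, shift_pow]
  have hk2 : (0:ℝ) < (k:ℝ)+2 := by positivity
  have e1 : (-1 - a + (a+2) : ℝ) = 1 := by ring
  have e2 : (-1 + (a+2) : ℝ) = a + 1 := by ring
  have e3 : (-(-1-a) + -a : ℝ) = 1 := by ring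
  have e4 : (-0 + -a : ℝ) = -a := by ring
  rw [e1, e2, e3, e4]
  field_simp
  ring

lemma outer_real (k : ℕ) :
    ∫ a in (-1:ℝ)..0, (2 - (a+1)^(k+2) - (-a)^(k+2))/((k:ℝ)+2) = 2/((k:ℝ)+3) := by
  simp_rw [div_eq_mul_inv, intervalIntegral.integral_mul_const]
  have i1 : ∫ a in (-1:ℝ)..0, (2 - (a+1)^(k+2) - (-a)^(k+2))
      = (∫ a in (-1:ℝ)..0, (2:ℝ)) - (∫ a in (-1:ℝ)..0, (a+1)^(k+2))
        - ∫ a in (-1:ℝ)..0, (-a)^(k+2) := by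
    rw [← intervalIntegral.integral_sub, ← intervalIntegral.integral_sub]
    · apply (Continuous.intervalIntegrable (by fun_prop) _ _).sub
        (Continuous.intervalIntegrable (by fun_prop) _ _)
    · exact Continuous.intervalIntegrable (by fun_prop) _ _
    · exact Continuous.intervalIntegrable (by fun_prop) _ _
    · exact Continuous.intervalIntegrable (by fun_prop) _ _
  rw [i1]
  have i2 : ∫ a in (-1:ℝ)..0, (a+1)^(k+2) = 1/((k:ℝ)+3) := by
    rw [show k+2 = (k+1)+1 from rfl, shift_pow]
    norm_num; push_cast; ring_nf
  have i3 : ∫ a in (-1:ℝ)..0, (-a)^(k+2) = 1/((k:ℝ)+3) := by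
    rw [intervalIntegral.integral_comp_neg (f := fun x => x^(k+2)), integral_pow]
    push_cast; norm_num; ring
  rw [i2, i3]
  simp only [intervalIntegral.integral_const, smul_eq_mul]
  have h2 : (0:ℝ) < (k:ℝ)+2 := by positivity
  have h3 : (0:ℝ) < (k:ℝ)+3 := by positivity
  field_simp
  ring

/-! ### lintegral versions -/

lemma fnonneg {a b : ℝ} (ha : a ∈ Set.Icc (-1:ℝ) 0) (hb : b ∈ Set.Icc (-1:ℝ) 0) :
    0 ≤ min 0 (a+b+1) - max (-1) (a+b) := by
  obtain ⟨ha1, ha2⟩ := ha; obtain ⟨hb1, hb2⟩ := hb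
  have : max (-1:ℝ) (a+b) ≤ min 0 (a+b+1) := by
    apply max_le <;> apply le_min <;> linarith
  linarith

lemma lint_inner (k : ℕ) (a : ℝ) (ha : a ∈ Set.Icc (-1:ℝ) 0) :
    ∫⁻ b in Set.Icc (-1:ℝ) 0, (ENNReal.ofReal (min 0 (a+b+1) - max (-1) (a+b)))^(k+1)
      = ENNReal.ofReal ((2 - (a+1)^(k+2) - (-a)^(k+2))/((k:ℝ)+2)) := by
  have step1 : ∫⁻ b in Set.Icc (-1:ℝ) 0,
      (ENNReal.ofReal (min 0 (a+b+1) - max (-1) (a+b)))^(k+1)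
      = ∫⁻ b in Set.Icc (-1:ℝ) 0,
      ENNReal.ofReal ((min 0 (a+b+1) - max (-1) (a+b))^(k+1)) := by
    apply setLIntegral_congr_fun measurableSet_Icc
    intro b hb
    beta_reduce
    rw [ENNReal.ofReal_pow (fnonneg ha hb)]
  rw [step1, ← MeasureTheory.ofReal_integral_eq_lintegral_ofReal]
  · rw [MeasureTheory.integral_Icc_eq_integral_Ioc,
      ← intervalIntegral.integral_of_le (by norm_num : (-1:ℝ) ≤ 0), inner_real k a ha]
  · exact (contF k a).integrableOn_Icc
  · filter_upwards [ae_restrict_mem measurableSet_Icc] with b hb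
    exact pow_nonneg (fnonneg ha hb) _

lemma lint_outer (k : ℕ) :
    ∫⁻ a in Set.Icc (-1:ℝ) 0,
        ENNReal.ofReal ((2 - (a+1)^(k+2) - (-a)^(k+2))/((k:ℝ)+2))
      = ENNReal.ofReal (2/((k:ℝ)+3)) := by
  rw [← MeasureTheory.ofReal_integral_eq_lintegral_ofReal]
  · rw [MeasureTheory.integral_Icc_eq_integral_Ioc,
      ← intervalIntegral.integral_of_le (by norm_num : (-1:ℝ) ≤ 0), outer_real]
  · exact Continuous.integrableOn_Icc (by fun_prop)
  · filter_upwards [ae_restrict_mem measurableSet_Icc] with a ha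
    obtain ⟨ha1, ha2⟩ := ha
    have p1 : (a+1)^(k+2) ≤ 1 := pow_le_one₀ (by linarith) (by linarith)
    have p2 : (-a)^(k+2) ≤ 1 := pow_le_one₀ (by linarith) (by linarith)
    have hk2 : (0:ℝ) < (k:ℝ)+2 := by positivity
    apply div_nonneg (by linarith) (by linarith)

/-! ### The product-space set and its volume -/

def Bset (k : ℕ) : Set (ℝ × ℝ × (Fin (k+1) → ℝ)) :=
  {q | q.1 ∈ Set.Icc (-1:ℝ) 0 ∧ q.2.1 ∈ Set.Icc (-1:ℝ) 0 ∧
    ∀ j, q.2.2 j ∈ Set.Icc (max (-1) (q.1 + q.2.1)) (min 0 (q.1 + q.2.1 + 1))}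

lemma Bset_meas (k : ℕ) : MeasurableSet (Bset k) := by
  have : Bset k = {q : ℝ × ℝ × (Fin (k+1) → ℝ) | q.1 ∈ Set.Icc (-1:ℝ) 0}
      ∩ {q | q.2.1 ∈ Set.Icc (-1:ℝ) 0}
      ∩ ⋂ j, ({q : ℝ × ℝ × (Fin (k+1) → ℝ) | max (-1) (q.1 + q.2.1) ≤ q.2.2 j}
        ∩ {q | q.2.2 j ≤ min 0 (q.1 + q.2.1 + 1)}) := by
    ext q
    simp only [Bset, Set.mem_setOf_eq, Set.mem_inter_iff, Set.mem_iInter, Set.mem_Icc]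
    tauto
  rw [this]
  apply MeasurableSet.inter
  · exact (measurable_fst measurableSet_Icc).inter
      ((measurable_fst.comp measurable_snd) measurableSet_Icc)
  apply MeasurableSet.iInter
  intro j
  have hcoord : Measurable fun q : ℝ × ℝ × (Fin (k+1) → ℝ) => q.2.2 j :=
    (measurable_pi_apply j).comp (measurable_snd.comp measurable_snd)
  exact (measurableSet_le (by fun_prop) hcoord).inter (measurableSet_le hcoord (by fun_prop))

lemma Bset_slice (k : ℕ) (a : ℝ) :
    (Prod.mk a ⁻¹' Bset k) = if a ∈ Set.Icc (-1:ℝ) 0 then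
      {r : ℝ × (Fin (k+1) → ℝ) | r.1 ∈ Set.Icc (-1:ℝ) 0 ∧
        ∀ j, r.2 j ∈ Set.Icc (max (-1) (a + r.1)) (min 0 (a + r.1 + 1))} else ∅ := by
  by_cases ha : a ∈ Set.Icc (-1:ℝ) 0
  · rw [if_pos ha]
    ext r
    simp only [Set.mem_preimage, Bset, Set.mem_setOf_eq]
    tauto
  · rw [if_neg ha]
    ext r
    simp only [Set.mem_preimage, Bset, Set.mem_setOf_eq, Set.mem_empty_iff_false, iff_false]
    rintro ⟨ham, -⟩
    exact ha ham

lemma volume_Bset (k : ℕ) :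
    volume (Bset k) = ∫⁻ a in Set.Icc (-1:ℝ) 0, ∫⁻ b in Set.Icc (-1:ℝ) 0,
      (ENNReal.ofReal (min 0 (a+b+1) - max (-1) (a+b)))^(k+1) := by
  rw [MeasureTheory.Measure.volume_eq_prod, Measure.prod_apply (Bset_meas k)]
  have key : ∀ a : ℝ, volume (Prod.mk a ⁻¹' Bset k)
      = (Set.Icc (-1:ℝ) 0).indicator (fun a => ∫⁻ b in Set.Icc (-1:ℝ) 0,
          (ENNReal.ofReal (min 0 (a+b+1) - max (-1) (a+b)))^(k+1)) a := by
    intro a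
    rw [Bset_slice]
    by_cases ha : a ∈ Set.Icc (-1:ℝ) 0
    · rw [if_pos ha, Set.indicator_of_mem ha]
      have hmeas : MeasurableSet {r : ℝ × (Fin (k+1) → ℝ) | r.1 ∈ Set.Icc (-1:ℝ) 0 ∧
          ∀ j, r.2 j ∈ Set.Icc (max (-1) (a + r.1)) (min 0 (a + r.1 + 1))} := by
        have : {r : ℝ × (Fin (k+1) → ℝ) | r.1 ∈ Set.Icc (-1:ℝ) 0 ∧
            ∀ j, r.2 j ∈ Set.Icc (max (-1) (a + r.1)) (min 0 (a + r.1 + 1))}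
            = {r : ℝ × (Fin (k+1) → ℝ) | r.1 ∈ Set.Icc (-1:ℝ) 0}
            ∩ ⋂ j, ({r : ℝ × (Fin (k+1) → ℝ) | max (-1) (a + r.1) ≤ r.2 j}
              ∩ {r | r.2 j ≤ min 0 (a + r.1 + 1)}) := by
          ext r
          simp only [Set.mem_setOf_eq, Set.mem_inter_iff, Set.mem_iInter, Set.mem_Icc]
          try tauto
        rw [this]
        apply (measurable_fst measurableSet_Icc).inter
        apply MeasurableSet.iInter
        intro j
        have hcoord : Measurable fun r : ℝ × (Fin (k+1) → ℝ) => r.2 j :=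
          (measurable_pi_apply j).comp measurable_snd
        exact (measurableSet_le (by fun_prop) hcoord).inter
          (measurableSet_le hcoord (by fun_prop))
      rw [MeasureTheory.Measure.volume_eq_prod, Measure.prod_apply hmeas]
      have key2 : ∀ b : ℝ, volume (Prod.mk b ⁻¹' {r : ℝ × (Fin (k+1) → ℝ) |
            r.1 ∈ Set.Icc (-1:ℝ) 0 ∧
            ∀ j, r.2 j ∈ Set.Icc (max (-1) (a + r.1)) (min 0 (a + r.1 + 1))})
          = (Set.Icc (-1:ℝ) 0).indicator (fun b =>
              (ENNReal.ofReal (min 0 (a+b+1) - max (-1) (a+b)))^(k+1)) b := by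
        intro b
        by_cases hb : b ∈ Set.Icc (-1:ℝ) 0
        · rw [Set.indicator_of_mem hb]
          have : (Prod.mk b ⁻¹' {r : ℝ × (Fin (k+1) → ℝ) | r.1 ∈ Set.Icc (-1:ℝ) 0 ∧
              ∀ j, r.2 j ∈ Set.Icc (max (-1) (a + r.1)) (min 0 (a + r.1 + 1))})
              = Set.pi Set.univ (fun _ : Fin (k+1) =>
                  Set.Icc (max (-1) (a + b)) (min 0 (a + b + 1))) := by
            ext w
            simp only [Set.mem_preimage, Set.mem_setOf_eq, Set.mem_univ_pi, Set.mem_Icc] at *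
            exact ⟨fun h => h.2, fun h => ⟨hb, h⟩⟩
          rw [this, volume_pi_pi]
          simp [Real.volume_Icc, Finset.prod_const]
        · rw [Set.indicator_of_notMem hb]
          have : (Prod.mk b ⁻¹' {r : ℝ × (Fin (k+1) → ℝ) | r.1 ∈ Set.Icc (-1:ℝ) 0 ∧
              ∀ j, r.2 j ∈ Set.Icc (max (-1) (a + r.1)) (min 0 (a + r.1 + 1))})
              = ∅ := by
            ext w
            simp only [Set.mem_preimage, Set.mem_setOf_eq, Set.mem_empty_iff_false, iff_false]
            rintro ⟨hbm, -⟩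
            exact hb hbm
          rw [this]; simp
      simp_rw [key2]
      rw [lintegral_indicator measurableSet_Icc]
    · rw [if_neg ha, Set.indicator_of_notMem ha]
      simp
  simp_rw [key]
  rw [lintegral_indicator measurableSet_Icc]

lemma volume_Bset_final (k : ℕ) :
    volume (Bset k) = ENNReal.ofReal (2/((k:ℝ)+3)) := by
  rw [volume_Bset k, ← lint_outer k]
  apply setLIntegral_congr_fun measurableSet_Icc
  intro a ha
  exact lint_inner k a ha

set_option maxHeartbeats 2000000 in
theorem stmt9 (t : ℕ) (ht : 2 ≤ t) :
    volume {y : Fin (t + 1) → ℝ |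
      (∀ i, -1 ≤ y i ∧ y i ≤ 0) ∧
      ∀ i, 1 ≤ i → i ≤ t - 1 →
        -1 ≤ Ycoord y t + Ycoord y 0 - Ycoord y i ∧
        Ycoord y t + Ycoord y 0 - Ycoord y i ≤ 0} =
    2 / ((t : ℝ≥0∞) + 1) := by
  obtain ⟨k, rfl⟩ : ∃ k, t = k + 2 := ⟨t - 2, by omega⟩
  set e1 := MeasurableEquiv.piFinSuccAbove (fun _ : Fin (k + 2 + 1) => ℝ) 0 with he1
  set e2 := MeasurableEquiv.piFinSuccAbove (fun _ : Fin (k + 1 + 1) => ℝ) (Fin.last (k+1)) with he2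
  have hp1 : MeasurePreserving e1 volume volume :=
    volume_preserving_piFinSuccAbove _ 0
  have hp2 : MeasurePreserving e2 volume volume :=
    volume_preserving_piFinSuccAbove _ _
  have hp3 : MeasurePreserving (Prod.map (id : ℝ → ℝ) e2) volume volume :=
    (MeasurePreserving.id volume).prod hp2
  -- index bookkeeping
  have hidxT : (0 : Fin (k+2+1)).succAbove (Fin.last (k+1)) = ⟨k+2, by omega⟩ := by
    simp [Fin.succAbove_zero]
    rfl
  have hidxM : ∀ j : Fin (k+1), (0 : Fin (k+2+1)).succAbove ((Fin.last (k+1)).succAbove j)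
      = ⟨j.val + 1, by omega⟩ := by
    intro j
    simp [Fin.succAbove_zero, Fin.succAbove_last]
    rfl
  have hS : {y : Fin (k + 2 + 1) → ℝ |
      (∀ i, -1 ≤ y i ∧ y i ≤ 0) ∧
      ∀ i, 1 ≤ i → i ≤ k + 2 - 1 →
        -1 ≤ Ycoord y (k+2) + Ycoord y 0 - Ycoord y i ∧
        Ycoord y (k+2) + Ycoord y 0 - Ycoord y i ≤ 0}
      = e1 ⁻¹' (Prod.map (id : ℝ → ℝ) e2 ⁻¹' Bset k) := by
    ext y
    have hmem : y ∈ e1 ⁻¹' (Prod.map (id : ℝ → ℝ) e2 ⁻¹' Bset k) ↔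
        (y 0 ∈ Set.Icc (-1:ℝ) 0 ∧
         y ((0 : Fin (k+2+1)).succAbove (Fin.last (k+1))) ∈ Set.Icc (-1:ℝ) 0 ∧
         ∀ j : Fin (k+1), y ((0 : Fin (k+2+1)).succAbove ((Fin.last (k+1)).succAbove j)) ∈
           Set.Icc (max (-1) (y 0 + y ((0 : Fin (k+2+1)).succAbove (Fin.last (k+1)))))
             (min 0 (y 0 + y ((0 : Fin (k+2+1)).succAbove (Fin.last (k+1))) + 1))) := Iff.rfl
    rw [hmem]
    simp only [hidxT, hidxM, Set.mem_setOf_eq, Set.mem_Icc]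
    have hY0 : Ycoord y 0 = y 0 := by
      rw [Ycoord]; simp only [dif_pos (by omega : 0 < k+2+1)]; rfl
    have hYT : Ycoord y (k+2) = y ⟨k+2, by omega⟩ := by
      rw [Ycoord]; simp only [dif_pos (by omega : k+2 < k+2+1)]
    constructor
    · rintro ⟨hbox, hmid⟩
      refine ⟨hbox 0, hbox _, fun j => ?_⟩
      have hYj : Ycoord y (j.val + 1) = y ⟨j.val + 1, by omega⟩ := by
        rw [Ycoord]; simp only [dif_pos (by omega : j.val + 1 < k+2+1)]
      have h1 := hbox ⟨j.val + 1, by omega⟩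
      have h2 := hmid (j.val + 1) (by omega) (by omega)
      rw [hY0, hYT, hYj] at h2
      constructor
      · apply max_le (h1.1) (by linarith [h2.2])
      · apply le_min (h1.2) (by linarith [h2.1])
    · rintro ⟨h0, hT, hmid⟩
      constructor
      · intro i
        by_cases hi0 : (i : ℕ) = 0
        · have : i = 0 := Fin.ext hi0
          rw [this]; exact h0
        by_cases hiT : (i : ℕ) = k + 2
        · have : i = ⟨k+2, by omega⟩ := Fin.ext hiT
          rw [this]; exact hT
        · have hlt : (i : ℕ) - 1 < k + 1 := by omega
          have : i = ⟨((⟨(i : ℕ) - 1, hlt⟩ : Fin (k+1)) : ℕ) + 1, by omega⟩ := by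
            apply Fin.ext; simp; omega
          rw [this]
          have := hmid ⟨(i : ℕ) - 1, hlt⟩
          constructor
          · exact le_trans (le_max_left _ _) this.1
          · exact le_trans this.2 (min_le_left _ _)
      · intro i hi1 hi2
        have hiY : Ycoord y i = y ⟨((⟨i - 1, by omega⟩ : Fin (k+1)) : ℕ) + 1, by omega⟩ := by
          rw [Ycoord]; simp only [dif_pos (by omega : i < k+2+1)]
          congr 1
          apply Fin.ext; simp; omega
        have := hmid ⟨i - 1, by omega⟩
        rw [hY0, hYT, hiY]
        have hle1 := le_trans (le_max_right _ _) this.1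
        have hle2 := le_trans this.2 (min_le_right _ _)
        constructor <;> linarith
  rw [hS, hp1.measure_preimage_equiv, hp3.measure_preimage (Bset_meas k).nullMeasurableSet,
    volume_Bset_final k]
  have h3 : (0:ℝ) < (k:ℝ)+3 := by positivity
  rw [ENNReal.ofReal_div_of_pos h3]
  have : ENNReal.ofReal ((k:ℝ)+3) = (k : ℝ≥0∞) + 3 := by
    rw [ENNReal.ofReal_add (by positivity) (by norm_num)]
    simp [ENNReal.ofReal_natCast]
  rw [this]
  norm_num
  push_cast
  ring_nf
end

section
/- For integers t ≥ 2, p ≥ 0, q > 0 with p + q = t − 1, the Euclidean volume of the polytope {(y', y_1,…,y_t) ∈ ℝ^{t+1} : −1 ≤ y' ≤ 0, −1 ≤ y_i ≤ 0 for all i, c_i − 1 ≤ y' + y_t − y_i ≤ c_i for 1 ≤ i ≤ t−1}, where (c_1,…,c_{t-1}) = (0,…,0,1,…,1) with p zeros followed by q ones, equals 1/(binom(t,q)·(t+1)) = q!(t−q)!/(t+1)!. -/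
open MeasureTheory Finset ENNReal

section
variable (p q : ℕ)

def Emap : (Fin (p+q+2) → ℝ) ≃ᵐ ℝ × (ℝ × (Fin (p+q) → ℝ)) :=
  (MeasurableEquiv.piFinSuccAbove (fun _ => ℝ) 0).trans
    ((MeasurableEquiv.refl ℝ).prodCongr
      (MeasurableEquiv.piFinSuccAbove (fun _ : Fin (p+q+1) => ℝ) (Fin.last (p+q))))

noncomputable def Tset : Set (ℝ × (ℝ × (Fin (p+q) → ℝ))) :=
  {x | x.1 ∈ Set.Icc (-1:ℝ) 0 ∧ x.2.1 ∈ Set.Icc (-1:ℝ) 0 ∧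
    ∀ j : Fin (p+q), x.2.2 j ∈ Set.Icc
      (max (-1) (x.1 + x.2.1 - (if (j:ℕ)+1 ≤ p then (0:ℝ) else 1)))
      (min 0 (x.1 + x.2.1 - (if (j:ℕ)+1 ≤ p then (0:ℝ) else 1) + 1))}

lemma Emap_apply (y : Fin (p+q+2) → ℝ) :
    Emap p q y = (y 0, y (Fin.last _), fun j : Fin (p+q) => y ⟨(j:ℕ)+1, by omega⟩) := by
  have h1 : ∀ j : Fin (p+q), (Fin.succ ((Fin.last (p+q)).succAbove j)) = (⟨(j:ℕ)+1, by omega⟩ : Fin (p+q+2)) := by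
    intro j
    ext
    simp [Fin.succAbove, Fin.lt_iff_val_lt_val, j.isLt]
  simp only [Emap, MeasurableEquiv.trans_apply,
    MeasurableEquiv.prodCongr, MeasurableEquiv.coe_mk, Equiv.prodCongr_apply, Prod.map,
    MeasurableEquiv.piFinSuccAbove_apply, MeasurableEquiv.refl_apply]
  refine Prod.ext rfl (Prod.ext ?_ ?_)
  · show y (Fin.succ (Fin.last (p+q))) = _
    congr 1
  · funext j
    show y (Fin.succ ((Fin.last (p+q)).succAbove j)) = _
    rw [h1]

lemma measurable_Tset : MeasurableSet (Tset p q) := by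
  apply MeasurableSet.inter
  · exact (measurableSet_Icc).preimage measurable_fst
  apply MeasurableSet.inter
  · exact (measurableSet_Icc).preimage (measurable_fst.comp measurable_snd)
  · show MeasurableSet {x : ℝ × (ℝ × (Fin (p+q) → ℝ)) | ∀ j, _}
    rw [Set.setOf_forall]
    apply MeasurableSet.iInter
    intro j
    apply MeasurableSet.inter
    · exact measurableSet_le (f := fun x : ℝ × (ℝ × (Fin (p+q) → ℝ)) => max (-1) (x.1 + x.2.1 - (if (j:ℕ)+1 ≤ p then (0:ℝ) else 1)))
        (g := fun x : ℝ × (ℝ × (Fin (p+q) → ℝ)) => x.2.2 j) (by fun_prop) (by fun_prop)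
    · exact measurableSet_le (f := fun x : ℝ × (ℝ × (Fin (p+q) → ℝ)) => x.2.2 j)
        (g := fun x : ℝ × (ℝ × (Fin (p+q) → ℝ)) => min 0 (x.1 + x.2.1 - (if (j:ℕ)+1 ≤ p then (0:ℝ) else 1) + 1)) (by fun_prop) (by fun_prop)

end

lemma S_eq (p q : ℕ) :
    {y : Fin (p+q+2) → ℝ | (∀ i, -1 ≤ y i ∧ y i ≤ 0) ∧
      ∀ i, 1 ≤ i → i ≤ p+q →
        (if i ≤ p then (0 : ℝ) else 1) - 1 ≤ Ycoord y 0 + Ycoord y (p+q+1) - Ycoord y i ∧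
        Ycoord y 0 + Ycoord y (p+q+1) - Ycoord y i ≤ (if i ≤ p then (0 : ℝ) else 1)}
    = Emap p q ⁻¹' Tset p q := by
  have hY : ∀ (y : Fin (p+q+2) → ℝ) (i : ℕ) (h : i < p+q+2), Ycoord y i = y ⟨i, h⟩ := by
    intro y i h; simp [Ycoord, h]
  ext y
  have h0 : Ycoord y 0 = y 0 := by rw [hY y 0 (by omega)]; congr 1
  have hl : Ycoord y (p+q+1) = y (Fin.last (p+q+1)) := by
    rw [hY y (p+q+1) (by omega)]; rfl
  simp only [Set.mem_setOf_eq, Set.mem_preimage, Emap_apply, Tset, Set.mem_Icc,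
    max_le_iff, le_min_iff, h0, hl]
  constructor
  · rintro ⟨hbox, hcon⟩
    refine ⟨hbox 0, hbox _, fun j => ?_⟩
    have h := hcon ((j:ℕ)+1) (by omega) (by omega)
    rw [hY y ((j:ℕ)+1) (by omega)] at h
    have hb := hbox ⟨(j:ℕ)+1, by omega⟩
    constructor
    · constructor
      · exact hb.1
      · split_ifs at h ⊢ <;> linarith [h.1, h.2]
    · constructor
      · exact hb.2
      · split_ifs at h ⊢ <;> linarith [h.1, h.2]
  · rintro ⟨ha, hb, hj⟩
    constructor
    · intro i
      rcases Nat.lt_trichotomy (i:ℕ) (p+q+1) with hi | hi | hi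
      · rcases Nat.eq_zero_or_pos (i:ℕ) with h1 | h1
        · have : i = 0 := by ext; simpa using h1
          rw [this]; exact ha
        · have h := hj ⟨(i:ℕ)-1, by omega⟩
          have : (⟨((i:ℕ)-1)+1, by omega⟩ : Fin (p+q+2)) = i := by ext; simp; omega
          rw [this] at h
          exact ⟨h.1.1, h.2.1⟩
      · have : i = Fin.last (p+q+1) := by ext; simpa using hi
        rw [this]; exact hb
      · exact absurd i.isLt (by omega)
    · intro i h1 h2
      rw [hY y i (by omega)]
      have h := hj ⟨i-1, by omega⟩
      have : (⟨(i-1)+1, by omega⟩ : Fin (p+q+2)) = ⟨i, by omega⟩ := by ext; simp; omega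
      rw [this] at h
      have hc : (i-1+1 ≤ p) ↔ (i ≤ p) := by omega
      simp only [Fin.val_mk, hc] at h
      constructor
      · split_ifs at h ⊢ <;> linarith [h.1.2, h.2.2]
      · split_ifs at h ⊢ <;> linarith [h.1.2, h.2.2]

lemma vol_preimage (p q : ℕ) :
    volume (Emap p q ⁻¹' Tset p q) = volume (Tset p q) := by
  have mp1 := MeasureTheory.volume_preserving_piFinSuccAbove (fun _ : Fin (p+q+2) => ℝ) 0
  have mp2 := MeasureTheory.volume_preserving_piFinSuccAbove
    (fun _ : Fin (p+q+1) => ℝ) (Fin.last (p+q))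
  have mp : MeasurePreserving (Emap p q) volume volume := by
    refine MeasurePreserving.comp (f := ⇑(MeasurableEquiv.piFinSuccAbove (fun _ : Fin (p+q+2) => ℝ) 0))
      (g := ⇑((MeasurableEquiv.refl ℝ).prodCongr
        (MeasurableEquiv.piFinSuccAbove (fun _ : Fin (p+q+1) => ℝ) (Fin.last (p+q))))) ?_ mp1
    have : ⇑((MeasurableEquiv.refl ℝ).prodCongr
        (MeasurableEquiv.piFinSuccAbove (fun _ : Fin (p+q+1) => ℝ) (Fin.last (p+q))))
        = Prod.map id ⇑(MeasurableEquiv.piFinSuccAbove (fun _ : Fin (p+q+1) => ℝ) (Fin.last (p+q))) := rfl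
    rw [this, show (volume : Measure (ℝ × (Fin (p+q+1) → ℝ))) = Measure.prod volume volume from rfl,
      show (volume : Measure (ℝ × (ℝ × (Fin (p+q) → ℝ)))) = Measure.prod volume volume from rfl]
    exact (MeasurePreserving.id volume).prod mp2
  exact mp.measure_preimage (measurable_Tset p q).nullMeasurableSet

lemma vol_T_iterated (p q : ℕ) :
    volume (Tset p q) = ∫⁻ a, ∫⁻ b, volume {z : Fin (p+q) → ℝ | (a, b, z) ∈ Tset p q} := by
  rw [show (volume : Measure (ℝ × (ℝ × (Fin (p+q) → ℝ)))) = Measure.prod volume volume from rfl,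
    Measure.prod_apply (measurable_Tset p q)]
  apply lintegral_congr
  intro a
  rw [show (volume : Measure (ℝ × (Fin (p+q) → ℝ))) = Measure.prod volume volume from rfl,
    Measure.prod_apply ((measurable_Tset p q).preimage measurable_prodMk_left)]
  rfl

noncomputable def Gfun (p q : ℕ) (s : ℝ) : ℝ≥0∞ :=
  ∏ j : Fin (p+q), ENNReal.ofReal
    ((min 0 (s - (if (j:ℕ)+1 ≤ p then (0:ℝ) else 1) + 1)) -
     (max (-1) (s - (if (j:ℕ)+1 ≤ p then (0:ℝ) else 1))))

lemma slice_vol (p q : ℕ) (a b : ℝ) (ha : a ∈ Set.Icc (-1:ℝ) 0) (hb : b ∈ Set.Icc (-1:ℝ) 0) :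
    volume {z : Fin (p+q) → ℝ | (a, b, z) ∈ Tset p q} = Gfun p q (a+b) := by
  have : {z : Fin (p+q) → ℝ | (a, b, z) ∈ Tset p q}
      = Set.pi Set.univ (fun j : Fin (p+q) => Set.Icc
        (max (-1) (a + b - (if (j:ℕ)+1 ≤ p then (0:ℝ) else 1)))
        (min 0 (a + b - (if (j:ℕ)+1 ≤ p then (0:ℝ) else 1) + 1))) := by
    ext z
    simp only [Tset, Set.mem_setOf_eq, Set.mem_univ_pi, Set.mem_Icc]
    constructor
    · rintro ⟨-, -, h⟩; exact h
    · intro h; exact ⟨ha, hb, h⟩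
  rw [this, volume_pi_pi, Gfun]
  exact Finset.prod_congr rfl fun j _ => Real.volume_Icc

lemma slice_empty (p q : ℕ) (a b : ℝ) (h : a ∉ Set.Icc (-1:ℝ) 0 ∨ b ∉ Set.Icc (-1:ℝ) 0) :
    {z : Fin (p+q) → ℝ | (a, b, z) ∈ Tset p q} = ∅ := by
  ext z
  simp only [Tset, Set.mem_setOf_eq, Set.mem_empty_iff_false, iff_false]
  rintro ⟨h1, h2, -⟩
  rcases h with h | h <;> [exact h h1; exact h h2]

noncomputable def gf (p q : ℕ) (s : ℝ) : ℝ := (-s)^p * (s+1)^q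

lemma continuous_gf (p q : ℕ) : Continuous (gf p q) := by
  unfold gf; continuity

lemma Gfun_eq (p q : ℕ) (hq : 0 < q) (s : ℝ) (hs0 : s ≤ 0) :
    Gfun p q s = ENNReal.ofReal (gf p q (max (-1) s)) := by
  rcases le_or_gt (-1) s with h1 | h1
  · rw [max_eq_right h1]
    have h2 : Gfun p q s = ∏ j : Fin (p+q),
        (fun i : ℕ => if i+1 ≤ p then ENNReal.ofReal (-s) else ENNReal.ofReal (s+1)) (j:ℕ) := by
      apply Finset.prod_congr rfl
      intro j _
      simp only
      split_ifs with hj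
      · congr 1
        rw [show s - (0:ℝ) + 1 = s + 1 by ring, min_eq_left (by linarith),
          show s - (0:ℝ) = s by ring, max_eq_right h1]
        ring
      · congr 1
        rw [show s - (1:ℝ) + 1 = s by ring, min_eq_right hs0,
          max_eq_left (by linarith)]
        ring
    rw [h2]
    rw [Fin.prod_univ_eq_prod_range
      (fun i : ℕ => if i+1 ≤ p then ENNReal.ofReal (-s) else ENNReal.ofReal (s+1)) (p+q),
      Finset.prod_range_add]
    rw [Finset.prod_congr rfl (fun i hi => if_pos (by simp at hi; omega)),
      Finset.prod_congr rfl (fun i (hi : i ∈ Finset.range q) => if_neg (by omega)),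
      Finset.prod_const, Finset.prod_const, Finset.card_range, Finset.card_range]
    rw [gf, ENNReal.ofReal_mul (pow_nonneg (by linarith) p), ENNReal.ofReal_pow (by linarith),
      ENNReal.ofReal_pow (by linarith)]
  · rw [max_eq_left h1.le]
    have : gf p q (-1) = 0 := by
      simp [gf, zero_pow hq.ne']
    rw [this, ENNReal.ofReal_zero, Gfun]
    apply Finset.prod_eq_zero (Finset.mem_univ (⟨p, by omega⟩ : Fin (p+q)))
    rw [if_neg (by simp), show s - (1:ℝ) + 1 = s by ring, min_eq_right (by linarith),
      max_eq_left (by linarith)]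
    rw [ENNReal.ofReal_eq_zero]
    linarith

lemma vol_T_set (p q : ℕ) (hq : 0 < q) :
    volume (Tset p q) = ∫⁻ a in Set.Icc (-1:ℝ) 0, ∫⁻ b in Set.Icc (-1:ℝ) 0,
      ENNReal.ofReal (gf p q (max (-1) (a+b))) := by
  rw [vol_T_iterated, ← lintegral_indicator measurableSet_Icc]
  apply lintegral_congr
  intro a
  by_cases ha : a ∈ Set.Icc (-1:ℝ) 0
  · rw [Set.indicator_of_mem ha, ← lintegral_indicator measurableSet_Icc]
    apply lintegral_congr
    intro b
    by_cases hb : b ∈ Set.Icc (-1:ℝ) 0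
    · rw [Set.indicator_of_mem hb, slice_vol p q a b ha hb,
        Gfun_eq p q hq _ (by have := ha.2; have := hb.2; linarith)]
    · rw [Set.indicator_of_notMem hb, slice_empty p q a b (Or.inr hb), measure_empty]
  · rw [Set.indicator_of_notMem ha]
    have h : ∀ b, volume {z : Fin (p+q) → ℝ | (a, b, z) ∈ Tset p q} = 0 := fun b => by
      rw [slice_empty p q a b (Or.inl ha), measure_empty]
    simp [h]

lemma inner_int (p q : ℕ) (hq : 0 < q) (a : ℝ) (ha : a ∈ Set.Icc (-1:ℝ) 0) :
    ∫⁻ b in Set.Icc (-1:ℝ) 0, ENNReal.ofReal (gf p q (max (-1) (a+b)))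
      = ENNReal.ofReal (∫ s in (-1:ℝ)..a, gf p q s) := by
  obtain ⟨ha1, ha2⟩ := ha
  have hF : Continuous (fun x : ℝ => gf p q (max (-1) x)) :=
    (continuous_gf p q).comp (continuous_const.max continuous_id)
  have hcont : Continuous (fun b : ℝ => gf p q (max (-1) (a+b))) :=
    hF.comp (continuous_const.add continuous_id)
  have hnn : 0 ≤ᵐ[volume.restrict (Set.Icc (-1:ℝ) 0)]
      (fun b : ℝ => gf p q (max (-1) (a+b))) := by
    filter_upwards [MeasureTheory.ae_restrict_mem measurableSet_Icc] with b hb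
    show (0:ℝ) ≤ gf p q (max (-1) (a+b))
    rw [gf]
    have h1 : (-1:ℝ) ≤ max (-1) (a+b) := le_max_left _ _
    have h2 : max (-1) (a+b) ≤ 0 := max_le (by norm_num) (by have := hb.2; linarith)
    exact mul_nonneg (pow_nonneg (by linarith) p) (pow_nonneg (by linarith) q)
  rw [← MeasureTheory.ofReal_integral_eq_lintegral_ofReal hcont.integrableOn_Icc hnn]
  congr 1
  rw [MeasureTheory.integral_Icc_eq_integral_Ioc,
    ← intervalIntegral.integral_of_le (by norm_num : (-1:ℝ) ≤ 0),
    intervalIntegral.integral_comp_add_left (fun x => gf p q (max (-1) x)) ]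
  rw [show a + -1 = a - 1 by ring, show a + 0 = a by ring]
  have hsplit := intervalIntegral.integral_add_adjacent_intervals
    (hF.intervalIntegrable (μ := volume) (a-1) (-1)) (hF.intervalIntegrable (μ := volume) (-1) a)
  rw [← hsplit]
  have hz : ∫ x in (a-1)..(-1:ℝ), gf p q (max (-1) x) = 0 := by
    rw [intervalIntegral.integral_congr (g := fun _ => (0:ℝ))]
    · simp
    · intro x hx
      rw [Set.uIcc_of_le (by linarith)] at hx
      have hx1 : x ≤ -1 := hx.2
      show gf p q (max (-1) x) = 0
      rw [max_eq_left hx1]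
      simp [gf, zero_pow hq.ne']
  have hg : ∫ x in (-1:ℝ)..a, gf p q (max (-1) x) = ∫ s in (-1:ℝ)..a, gf p q s := by
    apply intervalIntegral.integral_congr
    intro x hx
    rw [Set.uIcc_of_le (by linarith)] at hx
    show gf p q (max (-1) x) = gf p q x
    rw [max_eq_right hx.1]
  rw [hz, hg, zero_add]

lemma outer_int (p q : ℕ) :
    ∫⁻ a in Set.Icc (-1:ℝ) 0, ENNReal.ofReal (∫ s in (-1:ℝ)..a, gf p q s)
      = ENNReal.ofReal (∫ a in (-1:ℝ)..0, ∫ s in (-1:ℝ)..a, gf p q s) := by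
  have hK : Continuous (fun a : ℝ => ∫ s in (-1:ℝ)..a, gf p q s) :=
    intervalIntegral.continuous_primitive
      (fun a b => (continuous_gf p q).intervalIntegrable (μ := volume) a b) (-1)
  have hnn : 0 ≤ᵐ[volume.restrict (Set.Icc (-1:ℝ) 0)]
      (fun a : ℝ => ∫ s in (-1:ℝ)..a, gf p q s) := by
    filter_upwards [MeasureTheory.ae_restrict_mem measurableSet_Icc] with a ha
    show (0:ℝ) ≤ _
    apply intervalIntegral.integral_nonneg ha.1
    intro x hx
    have h1 : (-1:ℝ) ≤ x := hx.1
    have h2 : x ≤ 0 := le_trans hx.2 ha.2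
    exact mul_nonneg (pow_nonneg (by linarith) p) (pow_nonneg (by linarith) q)
  rw [← MeasureTheory.ofReal_integral_eq_lintegral_ofReal hK.integrableOn_Icc hnn]
  congr 1
  rw [MeasureTheory.integral_Icc_eq_integral_Ioc,
    ← intervalIntegral.integral_of_le (by norm_num : (-1:ℝ) ≤ 0)]

lemma parts_int (p q : ℕ) :
    ∫ a in (-1:ℝ)..0, (∫ s in (-1:ℝ)..a, gf p q s)
      = ∫ x in (0:ℝ)..1, x^q * (1-x)^(p+1) := by
  set K : ℝ → ℝ := fun a => ∫ s in (-1:ℝ)..a, gf p q s with hKdef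
  have hKc : Continuous K :=
    intervalIntegral.continuous_primitive
      (fun a b => (continuous_gf p q).intervalIntegrable (μ := volume) a b) (-1)
  have hderiv : ∀ a ∈ Set.uIcc (-1:ℝ) 0, HasDerivAt (fun a => a * K a) (K a + a * gf p q a) a := by
    intro a _
    have h1 : HasDerivAt K (gf p q a) a := by
      apply intervalIntegral.integral_hasDerivAt_right
        ((continuous_gf p q).intervalIntegrable (μ := volume) (-1) a)
        ((continuous_gf p q).stronglyMeasurableAtFilter _ _)
        (continuous_gf p q).continuousAt
    have := (hasDerivAt_id a).mul h1
    refine this.congr_deriv ?_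
    simp only [id_eq, one_mul]
  have key : ∫ a in (-1:ℝ)..0, (K a + a * gf p q a) = 0 * K 0 - (-1) * K (-1) := by
    apply intervalIntegral.integral_eq_sub_of_hasDerivAt hderiv
    apply IntervalIntegrable.add (hKc.intervalIntegrable (μ := volume) _ _)
    exact (continuous_id'.mul (continuous_gf p q)).intervalIntegrable (μ := volume) _ _
  have hK1 : K (-1) = 0 := intervalIntegral.integral_same
  rw [hK1] at key
  rw [intervalIntegral.integral_add (g := fun a => a * gf p q a) (hKc.intervalIntegrable (μ := volume) _ _)
    ((continuous_id'.mul (continuous_gf p q)).intervalIntegrable (μ := volume) _ _)] at key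
  have h2 : ∫ a in (-1:ℝ)..0, a * gf p q a = - ∫ x in (0:ℝ)..1, x^q * (1-x)^(p+1) := by
    have hc : ∀ a : ℝ, a * gf p q a = -((fun x => x^q * (1-x)^(p+1)) (a + 1)) := by
      intro a
      simp only [gf]
      ring_nf
    rw [intervalIntegral.integral_congr (fun a _ => hc a), intervalIntegral.integral_neg,
      intervalIntegral.integral_comp_add_right (fun x => x^q * (1-x)^(p+1)) 1]
    norm_num
  rw [h2] at key
  linarith [key]

lemma beta_step (m n : ℕ) :
    ((m:ℝ)+1) * ∫ x in (0:ℝ)..1, x^m * (1-x)^(n+1) =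
    ((n:ℝ)+1) * ∫ x in (0:ℝ)..1, x^(m+1) * (1-x)^n := by
  have key : ∫ x in (0:ℝ)..1,
      (((m:ℝ)+1) * (x^m * (1-x)^(n+1)) - ((n:ℝ)+1) * (x^(m+1) * (1-x)^n)) = 0 := by
    have hF : ∀ x ∈ Set.uIcc (0:ℝ) 1, HasDerivAt (fun x : ℝ => x^(m+1) * (1-x)^(n+1))
        (((m:ℝ)+1) * (x^m * (1-x)^(n+1)) - ((n:ℝ)+1) * (x^(m+1) * (1-x)^n)) x := by
      intro x _
      have h1 : HasDerivAt (fun x : ℝ => x^(m+1)) (((m:ℝ)+1) * x^m) x := by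
        simpa using hasDerivAt_pow (m+1) x
      have h2 : HasDerivAt (fun x : ℝ => (1-x)^(n+1)) (-(((n:ℝ)+1) * (1-x)^n)) x := by
        have := ((hasDerivAt_pow (n+1) (1-x)).comp x
          ((hasDerivAt_const x (1:ℝ)).sub (hasDerivAt_id x)))
        refine this.congr_deriv ?_
        push_cast; ring
      have := h1.mul h2
      refine this.congr_deriv ?_
      ring
    have := intervalIntegral.integral_eq_sub_of_hasDerivAt hF (by
      apply Continuous.intervalIntegrable; continuity)
    simpa using this
  have hi1 : IntervalIntegrable (fun x : ℝ => x^m * (1-x)^(n+1)) volume 0 1 := by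
    apply Continuous.intervalIntegrable; continuity
  have hi2 : IntervalIntegrable (fun x : ℝ => x^(m+1) * (1-x)^n) volume 0 1 := by
    apply Continuous.intervalIntegrable; continuity
  rw [intervalIntegral.integral_sub ((hi1.const_mul _)) ((hi2.const_mul _)),
    intervalIntegral.integral_const_mul, intervalIntegral.integral_const_mul] at key
  linarith

lemma beta_nat (n : ℕ) : ∀ m : ℕ, ∫ x in (0:ℝ)..1, x^m * (1-x)^n =
    (Nat.factorial m * Nat.factorial n : ℕ) / (Nat.factorial (m+n+1) : ℕ) := by
  induction n with
  | zero =>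
    intro m
    simp only [pow_zero, mul_one, integral_pow]
    have h : (Nat.factorial (m+0+1) : ℝ) = (m+1) * Nat.factorial m := by
      simp [Nat.factorial_succ]
    rw [h]
    have hm : (Nat.factorial m : ℝ) ≠ 0 := by positivity
    field_simp
    simp
  | succ n ih =>
    intro m
    have h := beta_step m n
    rw [ih (m+1)] at h
    have hm1 : ((m:ℝ)+1) ≠ 0 := by positivity
    have e1 : (Nat.factorial (m+1+n+1) : ℝ) = Nat.factorial (m+(n+1)+1) := by
      norm_num; ring_nf
    have e2 : (Nat.factorial (m+1) : ℝ) = (m+1) * Nat.factorial m := by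
      simp [Nat.factorial_succ]
    have e3 : (Nat.factorial (n+1) : ℝ) = (n+1) * Nat.factorial n := by
      simp [Nat.factorial_succ]
    have hfne : (Nat.factorial (m+(n+1)+1) : ℝ) ≠ 0 := by positivity
    push_cast at h ⊢
    rw [e1, e2] at h
    rw [e3]
    field_simp at h ⊢
    exact mul_left_cancel₀ hm1 (by linear_combination ((m:ℝ)+1) * h)

theorem stmt10 (t p q : ℕ) (ht : 2 ≤ t) (hq : 0 < q) (hpq : p + q = t - 1) :
    volume {y : Fin (t + 1) → ℝ |
      (∀ i, -1 ≤ y i ∧ y i ≤ 0) ∧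
      ∀ i, 1 ≤ i → i ≤ t - 1 →
        (if i ≤ p then (0 : ℝ) else 1) - 1 ≤ Ycoord y 0 + Ycoord y t - Ycoord y i ∧
        Ycoord y 0 + Ycoord y t - Ycoord y i ≤ (if i ≤ p then (0 : ℝ) else 1)} =
    ((Nat.factorial q * Nat.factorial (t - q) : ℕ) : ℝ≥0∞) /
      (Nat.factorial (t + 1) : ℝ≥0∞) := by
  obtain rfl : t = p + q + 1 := by omega
  have hsub : p + q + 1 - q = p + 1 := by omega
  have hsub2 : p + q + 1 + 1 = p + q + 2 := rfl
  rw [hsub, hsub2]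
  show volume {y : Fin (p+q+2) → ℝ |
      (∀ i, -1 ≤ y i ∧ y i ≤ 0) ∧
      ∀ i, 1 ≤ i → i ≤ p + q →
        (if i ≤ p then (0 : ℝ) else 1) - 1 ≤ Ycoord y 0 + Ycoord y (p+q+1) - Ycoord y i ∧
        Ycoord y 0 + Ycoord y (p+q+1) - Ycoord y i ≤ (if i ≤ p then (0 : ℝ) else 1)} = _
  rw [S_eq p q, vol_preimage p q, vol_T_set p q hq]
  rw [setLIntegral_congr_fun measurableSet_Icc
    (fun a ha => inner_int p q hq a ha)]
  rw [outer_int p q, parts_int p q, beta_nat (p+1) q]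
  have h1 : q + (p+1) + 1 = p + q + 2 := by omega
  rw [h1]
  rw [ENNReal.ofReal_div_of_pos (by positivity)]
  push_cast
  simp [ENNReal.ofReal_natCast, ENNReal.ofReal_mul, Nat.cast_nonneg]
end

section
/- Let t ≥ 2 and q with 1 ≤ q ≤ t−1, p = t−1−q. The set of permutations w ∈ S_{t+1} satisfying (i) des(w_1 ⋯ w_{t+1−i}) = c_i + ∑_{ℓ=i}^{t−1} α_ℓ for some (α_1,…,α_{t−1}) ∈ {0,1}^{t−1} and each i = 1,…,t−1, where (c_1,…,c_{t−1}) = (0^p, 1^q), and (ii) des(w_{t+1−i} ⋯ w_{t+1}) ∈ {∑_{ℓ=1}^{i−1}α_ℓ, ∑_{ℓ=1}^{i−1}α_ℓ + 1} with w_{t+1−i} < w_{t+1} in the first case and w_{t+1−i} > w_{t+1} in the second, for each i = 2,…,t, is exactly the set 𝒰_p = {w ∈ S_{t+1} : w_2,…,w_{t−p} < w_{t+1} = q+1 < w_1, w_{t+1−p},…,w_t} when p ≤ t−2. -/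
open MeasureTheory Finset ENNReal

section Helpers

variable {d : ℕ} (w : Equiv.Perm (Fin d))

lemma ov_val (x : Fin d) : ov w (x.val + 1) = (w x).val + 1 := by
  have hx := x.isLt
  rw [ov, dif_pos ⟨by omega, by omega⟩]
  have h : (⟨x.val + 1 - 1, by omega⟩ : Fin d) = x := by ext; simp
  rw [h]

lemma ov_ne {i j : ℕ} (hi1 : 1 ≤ i) (hi2 : i ≤ d) (hj1 : 1 ≤ j) (hj2 : j ≤ d)
    (hij : i ≠ j) : ov w i ≠ ov w j := by
  rw [ov, ov, dif_pos ⟨hi1, hi2⟩, dif_pos ⟨hj1, hj2⟩]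
  intro h
  have h2 : w ⟨i - 1, by omega⟩ = w ⟨j - 1, by omega⟩ := by
    ext; omega
  have h3 := w.injective h2
  simp only [Fin.mk.injEq] at h3
  omega

lemma des_self (a : ℕ) : des w a a = 0 := by
  rw [des, Finset.Ico_self, Finset.filter_empty, Finset.card_empty]

lemma des_add {a b c : ℕ} (hab : a ≤ b) (hbc : b ≤ c) :
    des w a c = des w a b + des w b c := by
  rw [des, des, des, ← Finset.Ico_union_Ico_eq_Ico hab hbc, Finset.filter_union,
    Finset.card_union_of_disjoint]
  exact Finset.disjoint_filter_filter (Finset.Ico_disjoint_Ico_consecutive a b c)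

lemma des_single (b : ℕ) : des w b (b + 1) = if ov w (b + 1) < ov w b then 1 else 0 := by
  rw [des, Nat.Ico_succ_singleton, Finset.filter_singleton]
  split <;> simp

lemma des_succ {a b : ℕ} (hab : a ≤ b) :
    des w a (b + 1) = des w a b + (if ov w (b + 1) < ov w b then 1 else 0) := by
  rw [des_add w hab (Nat.le_succ b), des_single]

lemma des_pop {a b : ℕ} (h : a < b) :
    des w a b = (if ov w (a + 1) < ov w a then 1 else 0) + des w (a + 1) b := by
  rw [des_add w (Nat.le_succ a) h, des_single]

lemma des_cast {a b a' b' : ℕ} (h1 : a = a') (h2 : b = b') :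
    des w a b = des w a' b' := by rw [h1, h2]

lemma ov_cast {i i' : ℕ} (h : i = i') : ov w i = ov w i' := by rw [h]

end Helpers

lemma sumIcc_split (α : ℕ → ℕ) (i k : ℕ) (h1 : 1 ≤ i) (h2 : i ≤ k + 1) :
    (∑ ℓ ∈ Icc 1 (i - 1), α ℓ) + ∑ ℓ ∈ Icc i k, α ℓ = ∑ ℓ ∈ Icc 1 k, α ℓ := by
  rw [show (1:ℕ) = 0 + 1 from rfl, Finset.Icc_add_one_left_eq_Ioc, Finset.Icc_add_one_left_eq_Ioc,
    show i = (i-1)+1 from by omega, Finset.Icc_add_one_left_eq_Ioc]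
  exact Finset.sum_Ioc_consecutive _ (by omega) (by omega)

lemma sumIcc_pop (α : ℕ → ℕ) (i k : ℕ) (h : i ≤ k) :
    ∑ ℓ ∈ Icc i k, α ℓ = α i + ∑ ℓ ∈ Icc (i + 1) k, α ℓ := by
  have he : Icc i k = insert i (Icc (i+1) k) := by
    ext x; simp only [Finset.mem_Icc, Finset.mem_insert]; omega
  rw [he, Finset.sum_insert (by simp only [Finset.mem_Icc]; omega)]

lemma count_lt {n : ℕ} (w : Equiv.Perm (Fin n)) (c : Fin n) :
    ((univ : Finset (Fin n)).filter (fun x => (w x).val < c.val)).card = c.val := by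
  have h : ((univ : Finset (Fin n)).filter (fun x => (w x).val < c.val)).card
      = (Finset.Iio c).card := by
    apply Finset.card_bij (fun x _ => w x)
    · intro a ha
      simp only [Finset.mem_filter, Finset.mem_univ, true_and] at ha
      rw [Finset.mem_Iio, Fin.lt_def]
      exact ha
    · intro a _ b _ h
      exact w.injective h
    · intro b hb
      rw [Finset.mem_Iio, Fin.lt_def] at hb
      refine ⟨w.symm b, ?_, by simp⟩
      simp only [Finset.mem_filter, Finset.mem_univ, true_and, Equiv.apply_symm_apply]
      exact hb
  rw [h, Fin.card_Iio]

lemma count_small {n : ℕ} (q : ℕ) (hq : q < n) :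
    ((univ : Finset (Fin n)).filter (fun x => 1 ≤ x.val ∧ x.val ≤ q)).card = q := by
  have h : ((univ : Finset (Fin n)).filter (fun x => 1 ≤ x.val ∧ x.val ≤ q)).card
      = (Finset.Icc 1 q).card := by
    apply Finset.card_bij (fun x _ => x.val)
    · intro a ha
      simp only [Finset.mem_filter, Finset.mem_univ, true_and] at ha
      rw [Finset.mem_Icc]
      exact ha
    · intro a _ b _ h
      exact Fin.ext h
    · intro b hb
      simp only [Finset.mem_Icc] at hb
      refine ⟨⟨b, by omega⟩, ?_, rfl⟩
      simp only [Finset.mem_filter, Finset.mem_univ, true_and]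
      exact hb
  rw [h, Nat.card_Icc]
  omega

theorem stmt11 (t p q : ℕ) (ht : 2 ≤ t) (hq1 : 1 ≤ q) (hq2 : q ≤ t - 1)
    (hp : p = t - 1 - q) (hpt : p ≤ t - 2) (w : Equiv.Perm (Fin (t + 1))) :
    (∃ α : ℕ → ℕ, (∀ ℓ, α ℓ ≤ 1) ∧
      (∀ i, 1 ≤ i → i ≤ t - 1 →
        des w 1 (t + 1 - i) =
          (if i ≤ p then 0 else 1) + ∑ ℓ ∈ Finset.Icc i (t - 1), α ℓ) ∧
      (∀ i, 2 ≤ i → i ≤ t →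
        (des w (t + 1 - i) (t + 1) = (∑ ℓ ∈ Finset.Icc 1 (i - 1), α ℓ) ∧
          ov w (t + 1 - i) < ov w (t + 1)) ∨
        (des w (t + 1 - i) (t + 1) = (∑ ℓ ∈ Finset.Icc 1 (i - 1), α ℓ) + 1 ∧
          ov w (t + 1) < ov w (t + 1 - i)))) ↔
    (ov w (t + 1) = q + 1 ∧
      (∀ i, 2 ≤ i → i ≤ t - p → ov w i < q + 1) ∧
      q + 1 < ov w 1 ∧
      (∀ i, t + 1 - p ≤ i → i ≤ t → q + 1 < ov w i)) := by
  have htp : t - p = q + 1 := by omega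
  have ht1p : t + 1 - p = q + 2 := by omega
  constructor
  · -- Forward direction
    rintro ⟨α, hα, h1, h2⟩
    obtain ⟨hG1, hG2, hG3⟩ :
        (ov w (t + 1) < ov w 1) ∧ (∀ j, 2 ≤ j → j ≤ q + 1 → ov w j < ov w (t + 1)) ∧
          (∀ j, q + 2 ≤ j → j ≤ t → ov w (t + 1) < ov w j) := by
      by_cases ht2 : t = 2
      · -- small case t = 2 (p = 0, q = 1)
        have hp0 : p = 0 := by omega
        have e1 := h1 1 le_rfl (by omega)
        rw [des_cast w rfl (show t + 1 - 1 = t from by omega), if_neg (show ¬(1 ≤ p) from by omega)] at e1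
        have e2 : des w 1 t = (if ov w 2 < ov w 1 then 1 else 0) + des w 2 t := by
          have h' := des_pop w (a := 1) (b := t) (by omega)
          rwa [des_cast w (show 1 + 1 = 2 from by norm_num) rfl,
            ov_cast w (show 1 + 1 = 2 from by norm_num)] at h'
        have e3 : des w 2 t = 0 := by
          rw [des_cast w rfl (show t = 2 from ht2)]; exact des_self w 2
        have e4 := h2 2 le_rfl (by omega)
        rw [des_cast w (show t + 1 - 2 = 1 from by omega) rfl,
          ov_cast w (show t + 1 - 2 = 1 from by omega),
          show Finset.Icc 1 (2 - 1) = Finset.Icc 1 1 from by norm_num,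
          Finset.Icc_self, Finset.sum_singleton] at e4
        have e5 : des w 1 (t + 1) = des w 1 t + (if ov w (t + 1) < ov w t then 1 else 0) :=
          des_succ w (by omega)
        rw [show Finset.Icc 1 (t - 1) = Finset.Icc 1 1 from by rw [show t - 1 = 1 from by omega],
          Finset.Icc_self, Finset.sum_singleton] at e1
        rcases e4 with ⟨f1, f2⟩ | ⟨f1, f2⟩
        · exfalso; omega
        · refine ⟨f2, ?_, ?_⟩
          · intro j hj1 hj2
            have hwt : ov w t < ov w (t + 1) := by
              by_cases hct : ov w (t + 1) < ov w t
              · rw [if_pos hct] at e5; omega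
              · have hne := ov_ne w (i := t) (j := t + 1) (by omega) (by omega) (by omega)
                  (by omega) (by omega)
                omega
            rw [ov_cast w (show j = t from by omega)]
            exact hwt
          · intro j hj1 hj2; omega
      · -- main case t ≥ 3
        have ht3 : 3 ≤ t := by omega
        have e12 := h1 (t - 1) (by omega) le_rfl
        rw [des_cast w rfl (show t + 1 - (t - 1) = 2 from by omega), if_neg (show ¬(t - 1 ≤ p) from by omega),
          Finset.Icc_self, Finset.sum_singleton] at e12
        have e2T := h2 (t - 1) (by omega) (by omega)
        rw [des_cast w (show t + 1 - (t - 1) = 2 from by omega) rfl,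
          ov_cast w (show t + 1 - (t - 1) = 2 from by omega),
          show Finset.Icc 1 (t - 1 - 1) = Finset.Icc 1 (t - 2) from by
            rw [show t - 1 - 1 = t - 2 from by omega]] at e2T
        have eD : des w 1 (t + 1) = des w 1 2 + des w 2 (t + 1) := des_add w (by omega) (by omega)
        have hsum2 : (∑ ℓ ∈ Icc 1 (t - 2), α ℓ) + α (t - 1) = ∑ ℓ ∈ Icc 1 (t - 1), α ℓ := by
          have h := Finset.sum_Icc_succ_top (a := 1) (b := t - 2) (by omega) α
          rw [show t - 2 + 1 = t - 1 from by omega] at h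
          exact h.symm
        have eT := h2 t (by omega) le_rfl
        rw [des_cast w (show t + 1 - t = 1 from by omega) rfl,
          ov_cast w (show t + 1 - t = 1 from by omega)] at eT
        obtain ⟨hG1, hD⟩ :
            (ov w (t + 1) < ov w 1) ∧
              des w 1 (t + 1) = (∑ ℓ ∈ Icc 1 (t - 1), α ℓ) + 1 := by
          rcases eT with ⟨f1, f2⟩ | ⟨f1, f2⟩
          · exfalso; rcases e2T with ⟨g1, g2⟩ | ⟨g1, g2⟩ <;> omega
          · exact ⟨f2, f1⟩
        have key : ∀ i, 2 ≤ i → i ≤ t - 1 →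
            ((i ≤ p → ov w (t + 1) < ov w (t + 1 - i)) ∧
              (p < i → ov w (t + 1 - i) < ov w (t + 1))) := by
          intro i hi2 hit
          have ha := h1 i (by omega) hit
          have hadd : des w 1 (t + 1) = des w 1 (t + 1 - i) + des w (t + 1 - i) (t + 1) :=
            des_add w (by omega) (by omega)
          have hsp := sumIcc_split α i (t - 1) (by omega) (by omega)
          rcases h2 i (by omega) (by omega) with ⟨f1, f2⟩ | ⟨f1, f2⟩
          · refine ⟨fun hip => ?_, fun _ => f2⟩
            exfalso; rw [if_pos hip] at ha; omega
          · refine ⟨fun _ => f2, fun hip => ?_⟩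
            exfalso; rw [if_neg (show ¬(i ≤ p) from by omega)] at ha; omega
        have eA := h1 1 le_rfl (by omega)
        rw [des_cast w rfl (show t + 1 - 1 = t from by omega)] at eA
        have eB := h1 2 (by omega) (by omega)
        rw [des_cast w rfl (show t + 1 - 2 = t - 1 from by omega)] at eB
        have eC : des w 1 t = des w 1 (t - 1) + (if ov w t < ov w (t - 1) then 1 else 0) := by
          have h' := des_succ w (a := 1) (b := t - 1) (by omega)
          rwa [des_cast w rfl (show t - 1 + 1 = t from by omega),
            ov_cast w (show t - 1 + 1 = t from by omega)] at h'
        have eE : α 1 + (∑ ℓ ∈ Icc 2 (t - 1), α ℓ) = ∑ ℓ ∈ Icc 1 (t - 1), α ℓ := by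
          have h := sumIcc_pop α 1 (t - 1) (by omega)
          rw [show Finset.Icc (1 + 1) (t - 1) = Finset.Icc 2 (t - 1) from by norm_num] at h
          exact h.symm
        have eF : des w (t - 1) (t + 1) =
            (if ov w t < ov w (t - 1) then 1 else 0) +
              (if ov w (t + 1) < ov w t then 1 else 0) := by
          have h' := des_pop w (a := t - 1) (b := t + 1) (by omega)
          rw [des_cast w (show t - 1 + 1 = t from by omega) rfl,
            ov_cast w (show t - 1 + 1 = t from by omega)] at h'
          rw [h', des_single]
        have e22 := h2 2 (by omega) (by omega)
        rw [des_cast w (show t + 1 - 2 = t - 1 from by omega) rfl,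
          ov_cast w (show t + 1 - 2 = t - 1 from by omega),
          show Finset.Icc 1 (2 - 1) = Finset.Icc 1 1 from by norm_num,
          Finset.Icc_self, Finset.sum_singleton] at e22
        have hkey2 := key 2 le_rfl (by omega)
        rw [ov_cast w (show t + 1 - 2 = t - 1 from by omega)] at hkey2
        have hnet : ov w t ≠ ov w (t + 1) :=
          ov_ne w (by omega) (by omega) (by omega) (by omega) (by omega)
        have posT : (p = 0 → ov w t < ov w (t + 1)) ∧ (1 ≤ p → ov w (t + 1) < ov w t) := by
          rcases e22 with ⟨f1, f2⟩ | ⟨f1, f2⟩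
          · have hple1 : p ≤ 1 := by
              by_contra hc
              exact absurd f2 (Nat.lt_asymm (hkey2.1 (by omega)))
            by_cases hp0 : p = 0
            · rw [if_neg (show ¬(1 ≤ p) from by omega)] at eA
              rw [if_neg (show ¬(2 ≤ p) from by omega)] at eB
              refine ⟨fun _ => ?_, fun h1p => by omega⟩
              by_cases hct : ov w (t + 1) < ov w t
              · exfalso; rw [if_pos hct] at eF; omega
              · omega
            · rw [if_pos (show 1 ≤ p from by omega)] at eA
              rw [if_neg (show ¬(2 ≤ p) from by omega)] at eB
              refine ⟨fun h0 => by omega, fun _ => ?_⟩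
              by_cases hct : ov w (t + 1) < ov w t
              · exact hct
              · exfalso; rw [if_neg hct] at eF
                have hα1 := hα 1
                omega
          · have hp2 : 2 ≤ p := by
              by_contra hc
              exact absurd f2 (Nat.lt_asymm (hkey2.2 (by omega)))
            rw [if_pos (show 1 ≤ p from by omega)] at eA
            rw [if_pos (show 2 ≤ p from by omega)] at eB
            refine ⟨fun h0 => by omega, fun _ => ?_⟩
            by_cases hct : ov w (t + 1) < ov w t
            · exact hct
            · exfalso; rw [if_neg hct] at eF; omega
        refine ⟨hG1, ?_, ?_⟩
        · intro j hj2 hjq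
          by_cases hjt : j ≤ t - 1
          · have hk := (key (t + 1 - j) (by omega) (by omega)).2 (by omega)
            rwa [ov_cast w (show t + 1 - (t + 1 - j) = j from by omega)] at hk
          · rw [ov_cast w (show j = t from by omega)]
            exact posT.1 (by omega)
        · intro j hj2 hjt
          by_cases hjt1 : j ≤ t - 1
          · have hk := (key (t + 1 - j) (by omega) (by omega)).1 (by omega)
            rwa [ov_cast w (show t + 1 - (t + 1 - j) = j from by omega)] at hk
          · rw [ov_cast w (show j = t from by omega)]
            exact posT.2 (by omega)
    -- common tail: counting argument
    have htlt : t < t + 1 := by omega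
    have hovt : ov w (t + 1) = (w ⟨t, htlt⟩).val + 1 := ov_val w ⟨t, htlt⟩
    have hiff : ∀ x : Fin (t + 1),
        ((w x).val < (w ⟨t, htlt⟩).val ↔ (1 ≤ x.val ∧ x.val ≤ q)) := by
      intro x
      have hx := x.isLt
      have hov := ov_val w x
      constructor
      · intro hlt
        by_contra hcon
        push_neg at hcon
        rcases Nat.eq_zero_or_pos x.val with h0 | hpos
        · have hg := hG1
          rw [ov_cast w (show (1 : ℕ) = x.val + 1 from by omega)] at hg
          rw [hov, hovt] at hg
          omega
        · have hq' : q < x.val := hcon hpos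
          by_cases hxt : x.val ≤ t - 1
          · have hk := hG3 (x.val + 1) (by omega) (by omega)
            rw [hov, hovt] at hk
            omega
          · have hxe : x = ⟨t, htlt⟩ := Fin.ext (show x.val = t from by omega)
            rw [hxe] at hlt
            omega
      · rintro ⟨hx1, hx2⟩
        have hk := hG2 (x.val + 1) (by omega) (by omega)
        rw [hov, hovt] at hk
        omega
    have hcard := count_lt w (w ⟨t, htlt⟩)
    rw [Finset.filter_congr (fun x _ => hiff x), count_small q (by omega)] at hcard
    have hfin : ov w (t + 1) = q + 1 := by rw [hovt]; omega
    refine ⟨hfin, ?_, ?_, ?_⟩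
    · intro i hi1 hi2
      rw [← hfin]
      exact hG2 i hi1 (by omega)
    · rw [← hfin]; exact hG1
    · intro i hi1 hi2
      rw [← hfin]
      exact hG3 i (by omega) hi2
  · -- Backward direction
    rintro ⟨hv, hsmall, h1big, hbig⟩
    have hs2 : ∀ j, 2 ≤ j → j ≤ q + 1 → ov w j < q + 1 := by
      intro j hj1 hj2; exact hsmall j hj1 (by omega)
    have hb2 : ∀ j, q + 2 ≤ j → j ≤ t → q + 1 < ov w j := by
      intro j hj1 hj2; exact hbig j (by omega) hj2
    have hd1 : ov w 2 < ov w 1 := lt_trans (hs2 2 le_rfl (by omega)) h1big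
    have hdqp : 1 ≤ p → ov w (q + 1) < ov w (q + 2) := by
      intro hp1
      exact lt_trans (hs2 (q + 1) (by omega) le_rfl) (hb2 (q + 2) le_rfl (by omega))
    have hdt1 : 1 ≤ p → ov w (t + 1) < ov w t := by
      intro hp1; rw [hv]; exact hb2 t (by omega) le_rfl
    have hdt0 : p = 0 → ov w t < ov w (t + 1) := by
      intro hp0; rw [hv]; exact hs2 t (by omega) (by omega)
    set α : ℕ → ℕ := fun ℓ => if ℓ = p then 1 else if ℓ = t - 1 then 0
        else if 1 ≤ ℓ ∧ ℓ ≤ t - 2 then (if ov w (t - ℓ + 1) < ov w (t - ℓ) then 1 else 0) else 0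
      with hαdef
    have hαp : α p = 1 := by simp [hαdef]
    have hαt1 : α (t - 1) = 0 := by
      simp only [hαdef]
      rw [if_neg (show ¬(t - 1 = p) from by omega)]
      simp
    have hαeval : ∀ ℓ, 1 ≤ ℓ → ℓ ≤ t - 2 → ℓ ≠ p →
        α ℓ = (if ov w (t - ℓ + 1) < ov w (t - ℓ) then 1 else 0) := by
      intro ℓ a b c
      simp only [hαdef]; rw [if_neg c, if_neg (show ¬(ℓ = t - 1) from by omega), if_pos ⟨a, b⟩]
    have hαle : ∀ ℓ, α ℓ ≤ 1 := by
      intro ℓ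
      simp only [hαdef]
      split_ifs <;> omega
    have crel : ∀ i, 1 ≤ i → i ≤ t - 2 →
        (if ov w (t - i + 1) < ov w (t - i) then 1 else 0) + (if i + 1 ≤ p then 0 else 1)
          = α i + (if i ≤ p then 0 else 1) := by
      intro i hi1 hi2
      by_cases hip : i = p
      · rw [hip, hαp, if_neg (show ¬(p + 1 ≤ p) from by omega), if_pos (le_refl p)]
        have h0 : ¬ ov w (t - p + 1) < ov w (t - p) := by
          rw [ov_cast w (show t - p + 1 = q + 2 from by omega),
            ov_cast w (show t - p = q + 1 from by omega)]
          exact Nat.lt_asymm (hdqp (by omega))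
        rw [if_neg h0]
      · rw [hαeval i hi1 hi2 hip]
        have h' : (if i + 1 ≤ p then (0 : ℕ) else 1) = (if i ≤ p then 0 else 1) := by
          split_ifs <;> omega
        rw [h']
    have P : ∀ j, 2 ≤ j → j ≤ t → des w 1 j =
        (if t + 1 - j ≤ p then 0 else 1) + ∑ ℓ ∈ Icc (t + 1 - j) (t - 1), α ℓ := by
      intro j hj
      induction j, hj using Nat.le_induction with
      | base =>
        intro _
        have e1 : des w 1 2 = des w 1 1 + (if ov w 2 < ov w 1 then 1 else 0) := by
          have h' := des_succ w (a := 1) (b := 1) le_rfl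
          rwa [des_cast w rfl (show 1 + 1 = 2 from by norm_num),
            ov_cast w (show 1 + 1 = 2 from by norm_num)] at h'
        rw [e1, des_self, if_pos hd1,
          show t + 1 - 2 = t - 1 from by omega, if_neg (show ¬(t - 1 ≤ p) from by omega),
          Finset.Icc_self, Finset.sum_singleton, hαt1]
      | succ j hj ih =>
        intro hjt
        have ihe := ih (by omega)
        rw [show t + 1 - j = t - j + 1 from by omega] at ihe
        have hstep : des w 1 (j + 1) = des w 1 j + (if ov w (j + 1) < ov w j then 1 else 0) :=
          des_succ w (by omega)
        have hcr := crel (t - j) (by omega) (by omega)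
        rw [ov_cast w (show t - (t - j) + 1 = j + 1 from by omega),
          ov_cast w (show t - (t - j) = j from by omega)] at hcr
        rw [show t + 1 - (j + 1) = t - j from by omega,
          sumIcc_pop α (t - j) (t - 1) (by omega)]
        omega
    set e : ℕ → ℕ := fun i => if i = t then 1 else if i ≤ p then 1 else 0 with hedef
    have hsign : ∀ i, 2 ≤ i → i ≤ t →
        (e i = 1 ∧ ov w (t + 1) < ov w (t + 1 - i)) ∨
          (e i = 0 ∧ ov w (t + 1 - i) < ov w (t + 1)) := by
      intro i hi1 hi2
      by_cases hit : i = t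
      · left
        refine ⟨by simp only [hedef]; rw [if_pos hit], ?_⟩
        rw [ov_cast w (show t + 1 - i = 1 from by omega), hv]
        exact h1big
      · by_cases hip : i ≤ p
        · left
          refine ⟨by simp only [hedef]; rw [if_neg hit, if_pos hip], ?_⟩
          rw [hv]
          exact hb2 (t + 1 - i) (by omega) (by omega)
        · right
          refine ⟨by simp only [hedef]; rw [if_neg hit, if_neg hip], ?_⟩
          rw [hv]
          exact hs2 (t + 1 - i) (by omega) (by omega)
    have Q : ∀ i, 2 ≤ i → i ≤ t → des w (t + 1 - i) (t + 1) =
        (∑ ℓ ∈ Icc 1 (i - 1), α ℓ) + e i := by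
      intro i hi
      induction i, hi using Nat.le_induction with
      | base =>
        intro _
        rw [des_cast w (show t + 1 - 2 = t - 1 from by omega) rfl,
          show Finset.Icc 1 (2 - 1) = Finset.Icc 1 1 from by norm_num,
          Finset.Icc_self, Finset.sum_singleton]
        have e1 : des w (t - 1) (t + 1) =
            (if ov w t < ov w (t - 1) then 1 else 0) +
              (if ov w (t + 1) < ov w t then 1 else 0) := by
          have h' := des_pop w (a := t - 1) (b := t + 1) (by omega)
          rw [des_cast w (show t - 1 + 1 = t from by omega) rfl,
            ov_cast w (show t - 1 + 1 = t from by omega)] at h'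
          rw [h', des_single]
        rw [e1]
        by_cases ht2 : t = 2
        · have hp0 : p = 0 := by omega
          have ha1 : α 1 = 0 := by
            have h' := hαt1
            rw [show t - 1 = 1 from by omega] at h'
            exact h'
          have he2 : e 2 = 1 := by simp only [hedef]; rw [if_pos (show (2:ℕ) = t from by omega)]
          have hc : ov w t < ov w (t - 1) := by
            rw [ov_cast w (show t - 1 = 1 from by omega)]
            exact lt_trans (hs2 t (by omega) (by omega)) h1big
          have hct : ¬ ov w (t + 1) < ov w t := Nat.lt_asymm (hdt0 hp0)
          rw [if_pos hc, if_neg hct, ha1, he2]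
        · have ht3 : 3 ≤ t := by omega
          have he2 : e 2 = if 2 ≤ p then 1 else 0 := by
            simp only [hedef]; rw [if_neg (show ¬((2:ℕ) = t) from by omega)]
          by_cases hp1 : p = 1
          · have ha1 : α 1 = 1 := by
              have h' := hαp
              rw [hp1] at h'
              exact h'
            have hc : ¬ ov w t < ov w (t - 1) := by
              rw [ov_cast w (show t = q + 2 from by omega),
                ov_cast w (show t - 1 = q + 1 from by omega)]
              exact Nat.lt_asymm (hdqp (by omega))
            have hct : ov w (t + 1) < ov w t := hdt1 (by omega)
            rw [if_neg hc, if_pos hct, ha1, he2, if_neg (show ¬(2 ≤ p) from by omega)]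
          · have ha1 : α 1 = (if ov w t < ov w (t - 1) then 1 else 0) := by
              have h' := hαeval 1 le_rfl (by omega) (show ¬((1:ℕ) = p) from by omega)
              rwa [ov_cast w (show t - 1 + 1 = t from by omega)] at h'
            rw [ha1, he2]
            by_cases hp0 : p = 0
            · have hct : ¬ ov w (t + 1) < ov w t := Nat.lt_asymm (hdt0 hp0)
              rw [if_neg hct, if_neg (show ¬(2 ≤ p) from by omega)]
            · have hct : ov w (t + 1) < ov w t := hdt1 (by omega)
              rw [if_pos hct, if_pos (show 2 ≤ p from by omega)]
      | succ i hi ih =>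
        intro hit
        have ihe := ih (by omega)
        have hpop : des w (t - i) (t + 1) =
            (if ov w (t + 1 - i) < ov w (t - i) then 1 else 0) + des w (t + 1 - i) (t + 1) := by
          have h' := des_pop w (a := t - i) (b := t + 1) (by omega)
          rwa [des_cast w (show t - i + 1 = t + 1 - i from by omega) rfl,
            ov_cast w (show t - i + 1 = t + 1 - i from by omega)] at h'
        rw [des_cast w (show t + 1 - (i + 1) = t - i from by omega) rfl, hpop, ihe,
          show (i + 1) - 1 = i from by omega]
        have hsum : ∑ ℓ ∈ Icc 1 i, α ℓ = (∑ ℓ ∈ Icc 1 (i - 1), α ℓ) + α i := by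
          have h := Finset.sum_Icc_succ_top (a := 1) (b := i - 1) (by omega) α
          rw [show i - 1 + 1 = i from by omega] at h
          exact h
        rw [hsum]
        by_cases hit1 : i = t - 1
        · have ha : α i = 0 := by rw [hit1]; exact hαt1
          have hc : ov w (t + 1 - i) < ov w (t - i) := by
            rw [ov_cast w (show t + 1 - i = 2 from by omega),
              ov_cast w (show t - i = 1 from by omega)]
            exact hd1
          have he1 : e i = 0 := by
            simp only [hedef]
            rw [if_neg (show ¬(i = t) from by omega), if_neg (show ¬(i ≤ p) from by omega)]
          have he2 : e (i + 1) = 1 := by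
            simp only [hedef]; rw [if_pos (show i + 1 = t from by omega)]
          rw [if_pos hc, ha, he1, he2]
          omega
        · have hcr := crel i (by omega) (by omega)
          rw [ov_cast w (show t - i + 1 = t + 1 - i from by omega)] at hcr
          have he1 : e i = if i ≤ p then 1 else 0 := by
            simp only [hedef]; rw [if_neg (show ¬(i = t) from by omega)]
          have he2 : e (i + 1) = if i + 1 ≤ p then 1 else 0 := by
            simp only [hedef]; rw [if_neg (show ¬(i + 1 = t) from by omega)]
          rw [he1, he2]
          split_ifs at hcr ⊢ <;> omega
    refine ⟨α, hαle, ?_, ?_⟩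
    · intro i hi1 hi2
      have h' := P (t + 1 - i) (by omega) (by omega)
      rw [show t + 1 - (t + 1 - i) = i from by omega] at h'
      exact h'
    · intro i hi1 hi2
      rcases hsign i hi1 hi2 with ⟨he, hlt⟩ | ⟨he, hlt⟩
      · right
        refine ⟨?_, hlt⟩
        rw [Q i hi1 hi2, he]
      · left
        refine ⟨?_, hlt⟩
        rw [Q i hi1 hi2, he]
        omega
end

section
/- The Euclidean volume of the polytope {(z_1,…,z_5) ∈ ℝ^5 : 0 ≤ z_1 ≤ 1, 0 ≤ z_{i} − z_{i−1} ≤ 1 for i = 2,…,5, 2 ≤ z_5 ≤ 3, 1 ≤ z_4 − z_1 ≤ 2} equals 54/120 = 9/20. -/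
open MeasureTheory Finset ENNReal

open Classical in
noncomputable def ind (p : Prop) : ℝ≥0∞ := if p then 1 else 0

lemma ind_mul (p q : Prop) : ind p * ind q = ind (p ∧ q) := by
  classical
  by_cases hp : p <;> by_cases hq : q <;> simp [ind, hp, hq]

lemma ind_ne_top (p : Prop) : ind p ≠ ⊤ := by
  classical by_cases hp : p <;> simp [ind, hp]

lemma ind_congr {p q : Prop} (h : p ↔ q) : ind p = ind q := by
  classical by_cases hp : p
  · simp [ind, hp, h.mp hp]
  · have hq : ¬ q := fun hq => hp (h.mpr hq)
    simp [ind, hp, hq]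

lemma lint_mem {s : Set ℝ} (hs : MeasurableSet s) : ∫⁻ t, ind (t ∈ s) = volume s := by
  classical
  rw [← lintegral_indicator_one hs]
  refine lintegral_congr fun t => ?_
  by_cases ht : t ∈ s <;> simp [ind, ht]

lemma lint_Icc (a b : ℝ) (hab : a ≤ b) (g : ℝ → ℝ) (hg : Continuous g)
    (hpos : ∀ t ∈ Set.Icc a b, 0 ≤ g t) :
    ∫⁻ t, ind (t ∈ Set.Icc a b) * ENNReal.ofReal (g t) = ENNReal.ofReal (∫ t in a..b, g t) := by
  classical
  have h1 : (fun t => ind (t ∈ Set.Icc a b) * ENNReal.ofReal (g t))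
      = (Set.Icc a b).indicator (fun t => ENNReal.ofReal (g t)) := by
    funext t
    by_cases ht : t ∈ Set.Icc a b <;> simp [ind, ht]
  rw [h1, lintegral_indicator measurableSet_Icc,
    ← ofReal_integral_eq_lintegral_ofReal (hg.integrableOn_Icc)
      ((ae_restrict_iff' measurableSet_Icc).2 (ae_of_all _ hpos)),
    intervalIntegral.integral_of_le hab, integral_Icc_eq_integral_Ioc]

lemma lint_Ioc (a b : ℝ) (hab : a ≤ b) (g : ℝ → ℝ) (hg : Continuous g)
    (hpos : ∀ t ∈ Set.Ioc a b, 0 ≤ g t) :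
    ∫⁻ t, ind (t ∈ Set.Ioc a b) * ENNReal.ofReal (g t) = ENNReal.ofReal (∫ t in a..b, g t) := by
  classical
  have h1 : (fun t => ind (t ∈ Set.Ioc a b) * ENNReal.ofReal (g t))
      = (Set.Ioc a b).indicator (fun t => ENNReal.ofReal (g t)) := by
    funext t
    by_cases ht : t ∈ Set.Ioc a b <;> simp [ind, ht]
  rw [h1, lintegral_indicator measurableSet_Ioc,
    ← ofReal_integral_eq_lintegral_ofReal ((hg.integrableOn_Icc).mono_set Set.Ioc_subset_Icc_self)
      ((ae_restrict_iff' measurableSet_Ioc).2 (ae_of_all _ hpos)),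
    intervalIntegral.integral_of_le hab]

lemma ipoly (a b c0 c1 c2 c3 c4 : ℝ) :
    ∫ x in a..b, (c0 + c1*x + c2*x^2 + c3*x^3 + c4*x^4) =
      c0*(b-a) + c1*(b^2-a^2)/2 + c2*(b^3-a^3)/3 + c3*(b^4-a^4)/4 + c4*(b^5-a^5)/5 := by
  have I : ∀ c : ℝ, ∀ n : ℕ, IntervalIntegrable (fun x : ℝ => c * x ^ n) volume a b := fun c n =>
    ((continuous_const.mul (continuous_pow n))).intervalIntegrable a b
  have h : (fun x : ℝ => c0 + c1*x + c2*x^2 + c3*x^3 + c4*x^4)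
      = fun x : ℝ => c0 * x^0 + (c1*x^1 + (c2*x^2 + (c3*x^3 + c4*x^4))) := by
    funext x; ring
  rw [h, intervalIntegral.integral_add (I c0 0) ((I c1 1).add ((I c2 2).add ((I c3 3).add (I c4 4)))),
    intervalIntegral.integral_add (I c1 1) ((I c2 2).add ((I c3 3).add (I c4 4))),
    intervalIntegral.integral_add (I c2 2) ((I c3 3).add (I c4 4)),
    intervalIntegral.integral_add (I c3 3) (I c4 4)]
  simp only [intervalIntegral.integral_const_mul, integral_pow]
  push_cast
  ring

noncomputable def mf (d : ℝ) : ℝ := min (d+1) 3 - max d 2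
noncomputable def Wv (v : ℝ) : ℝ := -v^2 + 3*v - 3/2
noncomputable def Phi (v : ℝ) : ℝ := -v^3/3 + 3*v^2/2 - 3*v/2
noncomputable def Vd (d : ℝ) : ℝ := if d ≤ 2 then Phi d + 1/3 else 1/3 - Phi (d-1)

noncomputable def Fz (z : Fin 5 → ℝ) : ℝ≥0∞ :=
  ind (0 ≤ z 0 ∧ z 0 ≤ 1) * (ind (0 ≤ z 1 - z 0 ∧ z 1 - z 0 ≤ 1) *
  (ind (0 ≤ z 2 - z 1 ∧ z 2 - z 1 ≤ 1) * (ind (0 ≤ z 3 - z 2 ∧ z 3 - z 2 ≤ 1) *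
  (ind (0 ≤ z 4 - z 3 ∧ z 4 - z 3 ≤ 1) * (ind (2 ≤ z 4 ∧ z 4 ≤ 3) *
  ind (1 ≤ z 3 - z 0 ∧ z 3 - z 0 ≤ 2))))))

noncomputable def G1 (x : Fin 5 → ℝ) : ℝ≥0∞ :=
  ind (0 ≤ x 0 ∧ x 0 ≤ 1) * (ind (0 ≤ x 1 - x 0 ∧ x 1 - x 0 ≤ 1) *
  (ind (0 ≤ x 2 - x 1 ∧ x 2 - x 1 ≤ 1) * (ind (0 ≤ x 3 - x 2 ∧ x 3 - x 2 ≤ 1) *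
  (ENNReal.ofReal (mf (x 3)) * ind (1 ≤ x 3 - x 0 ∧ x 3 - x 0 ≤ 2)))))

noncomputable def G2 (x : Fin 5 → ℝ) : ℝ≥0∞ :=
  ind (0 ≤ x 0 ∧ x 0 ≤ 1) * (ind (0 ≤ x 3 - x 2 ∧ x 3 - x 2 ≤ 1) *
  (ENNReal.ofReal (mf (x 3)) * (ENNReal.ofReal (min (x 0 + 1) (x 2) - max (x 0) (x 2 - 1)) *
  ind (1 ≤ x 3 - x 0 ∧ x 3 - x 0 ≤ 2))))

noncomputable def G3 (x : Fin 5 → ℝ) : ℝ≥0∞ :=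
  ind (0 ≤ x 0 ∧ x 0 ≤ 1) * (ENNReal.ofReal (mf (x 3)) *
  (ENNReal.ofReal (Wv (x 3 - x 0)) * ind (1 ≤ x 3 - x 0 ∧ x 3 - x 0 ≤ 2)))

noncomputable def G4 (x : Fin 5 → ℝ) : ℝ≥0∞ :=
  ENNReal.ofReal (mf (x 3)) * ENNReal.ofReal (Vd (x 3))

lemma meas_ind {α : Type*} [MeasurableSpace α] {s : Set α} (hs : MeasurableSet s) :
    Measurable (fun x => ind (x ∈ s)) := by
  classical
  have : (fun x => ind (x ∈ s)) = s.indicator (fun _ => (1:ℝ≥0∞)) := by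
    funext x; by_cases hx : x ∈ s <;> simp [ind, hx]
  rw [this]; exact measurable_const.indicator hs

lemma meas_ind2 {α : Type*} [MeasurableSpace α] {e : α → ℝ} (he : Measurable e) (a b : ℝ) :
    Measurable fun x => ind (a ≤ e x ∧ e x ≤ b) :=
  meas_ind (he measurableSet_Icc)

lemma cont_mf : Continuous mf := by
  unfold mf; fun_prop

lemma meas_Vd : Measurable Vd := by
  unfold Vd Phi
  exact Measurable.ite (measurableSet_le measurable_id measurable_const) (by fun_prop) (by fun_prop)

lemma measp (i : Fin 5) : Measurable fun x : Fin 5 → ℝ => x i := measurable_pi_apply i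

lemma meas_oR {α : Type*} [MeasurableSpace α] {e : α → ℝ} (he : Measurable e) :
    Measurable fun x => ENNReal.ofReal (e x) := ENNReal.measurable_ofReal.comp he

lemma meas_Fz : Measurable Fz := by
  unfold Fz
  exact (meas_ind2 (measp 0) 0 1).mul ((meas_ind2 ((measp 1).sub (measp 0)) 0 1).mul
    ((meas_ind2 ((measp 2).sub (measp 1)) 0 1).mul ((meas_ind2 ((measp 3).sub (measp 2)) 0 1).mul
    ((meas_ind2 ((measp 4).sub (measp 3)) 0 1).mul ((meas_ind2 (measp 4) 2 3).mul
    (meas_ind2 ((measp 3).sub (measp 0)) 1 2))))))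

lemma meas_G1 : Measurable G1 := by
  unfold G1
  exact (meas_ind2 (measp 0) 0 1).mul ((meas_ind2 ((measp 1).sub (measp 0)) 0 1).mul
    ((meas_ind2 ((measp 2).sub (measp 1)) 0 1).mul ((meas_ind2 ((measp 3).sub (measp 2)) 0 1).mul
    ((meas_oR (cont_mf.measurable.comp (measp 3))).mul
    (meas_ind2 ((measp 3).sub (measp 0)) 1 2)))))

lemma meas_G2 : Measurable G2 := by
  unfold G2
  exact (meas_ind2 (measp 0) 0 1).mul ((meas_ind2 ((measp 3).sub (measp 2)) 0 1).mul
    ((meas_oR (cont_mf.measurable.comp (measp 3))).mul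
    ((meas_oR (by fun_prop : Measurable fun x : Fin 5 → ℝ => min (x 0 + 1) (x 2) - max (x 0) (x 2 - 1))).mul
    (meas_ind2 ((measp 3).sub (measp 0)) 1 2))))

lemma meas_G3 : Measurable G3 := by
  unfold G3 Wv
  exact (meas_ind2 (measp 0) 0 1).mul ((meas_oR (cont_mf.measurable.comp (measp 3))).mul
    ((meas_oR (by fun_prop : Measurable fun x : Fin 5 → ℝ => -(x 3 - x 0)^2 + 3*(x 3 - x 0) - 3/2)).mul
    (meas_ind2 ((measp 3).sub (measp 0)) 1 2)))

lemma meas_G4 : Measurable G4 := by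
  unfold G4
  exact (meas_oR (cont_mf.measurable.comp (measp 3))).mul
    (meas_oR (meas_Vd.comp (measp 3)))

lemma step1 (x : Fin 5 → ℝ) : ∫⁻ t, Fz (Function.update x 4 t) = G1 x := by
  have hupd : ∀ t : ℝ, Fz (Function.update x 4 t) =
      (ind (0 ≤ x 0 ∧ x 0 ≤ 1) * (ind (0 ≤ x 1 - x 0 ∧ x 1 - x 0 ≤ 1) *
       (ind (0 ≤ x 2 - x 1 ∧ x 2 - x 1 ≤ 1) * (ind (0 ≤ x 3 - x 2 ∧ x 3 - x 2 ≤ 1) *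
       ind (1 ≤ x 3 - x 0 ∧ x 3 - x 0 ≤ 2))))) *
      ind (t ∈ Set.Icc (max (x 3) 2) (min (x 3 + 1) 3)) := by
    intro t
    have hcomb : ind (0 ≤ t - x 3 ∧ t - x 3 ≤ 1) * ind (2 ≤ t ∧ t ≤ 3)
        = ind (t ∈ Set.Icc (max (x 3) 2) (min (x 3 + 1) 3)) := by
      rw [ind_mul]
      refine ind_congr ?_
      simp only [Set.mem_Icc, max_le_iff, le_min_iff]
      constructor
      · rintro ⟨⟨h1, h2⟩, h3, h4⟩; exact ⟨⟨by linarith, h3⟩, by linarith, h4⟩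
      · rintro ⟨⟨h1, h3⟩, h2, h4⟩; exact ⟨⟨by linarith, by linarith⟩, h3, h4⟩
    unfold Fz
    simp only [Function.update_self, Function.update_of_ne (show (0:Fin 5) ≠ 4 by decide),
      Function.update_of_ne (show (1:Fin 5) ≠ 4 by decide),
      Function.update_of_ne (show (2:Fin 5) ≠ 4 by decide),
      Function.update_of_ne (show (3:Fin 5) ≠ 4 by decide)]
    rw [← hcomb]; ring
  simp only [hupd]
  rw [lintegral_const_mul' _ _ (by
    refine ENNReal.mul_ne_top (ind_ne_top _) (ENNReal.mul_ne_top (ind_ne_top _)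
      (ENNReal.mul_ne_top (ind_ne_top _) (ENNReal.mul_ne_top (ind_ne_top _) (ind_ne_top _)))))]
  rw [lint_mem measurableSet_Icc, Real.volume_Icc]
  unfold G1 mf
  ring

lemma step2 (x : Fin 5 → ℝ) : ∫⁻ t, G1 (Function.update x 1 t) = G2 x := by
  have hupd : ∀ t : ℝ, G1 (Function.update x 1 t) =
      (ind (0 ≤ x 0 ∧ x 0 ≤ 1) * (ind (0 ≤ x 3 - x 2 ∧ x 3 - x 2 ≤ 1) *
       (ENNReal.ofReal (mf (x 3)) * ind (1 ≤ x 3 - x 0 ∧ x 3 - x 0 ≤ 2)))) *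
      ind (t ∈ Set.Icc (max (x 0) (x 2 - 1)) (min (x 0 + 1) (x 2))) := by
    intro t
    have hcomb : ind (0 ≤ t - x 0 ∧ t - x 0 ≤ 1) * ind (0 ≤ x 2 - t ∧ x 2 - t ≤ 1)
        = ind (t ∈ Set.Icc (max (x 0) (x 2 - 1)) (min (x 0 + 1) (x 2))) := by
      rw [ind_mul]
      refine ind_congr ?_
      simp only [Set.mem_Icc, max_le_iff, le_min_iff]
      constructor
      · rintro ⟨⟨h1, h2⟩, h3, h4⟩; exact ⟨⟨by linarith, by linarith⟩, by linarith, by linarith⟩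
      · rintro ⟨⟨h1, h3⟩, h2, h4⟩; exact ⟨⟨by linarith, by linarith⟩, by linarith, by linarith⟩
    unfold G1
    simp only [Function.update_self, Function.update_of_ne (show (0:Fin 5) ≠ 1 by decide),
      Function.update_of_ne (show (2:Fin 5) ≠ 1 by decide),
      Function.update_of_ne (show (3:Fin 5) ≠ 1 by decide)]
    rw [← hcomb]; ring
  simp only [hupd]
  rw [lintegral_const_mul' _ _ (by
    refine ENNReal.mul_ne_top (ind_ne_top _) (ENNReal.mul_ne_top (ind_ne_top _)
      (ENNReal.mul_ne_top ENNReal.ofReal_ne_top (ind_ne_top _))))]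
  rw [lint_mem measurableSet_Icc, Real.volume_Icc]
  unfold G2
  ring

lemma step3 (x : Fin 5 → ℝ) : ∫⁻ t, G2 (Function.update x 2 t) = G3 x := by
  by_cases hv : 1 ≤ x 3 - x 0 ∧ x 3 - x 0 ≤ 2
  case neg =>
    have hz : ind (1 ≤ x 3 - x 0 ∧ x 3 - x 0 ≤ 2) = 0 := by unfold ind; rw [if_neg hv]
    have hh : ∀ t : ℝ, G2 (Function.update x 2 t) = 0 := by
      intro t
      unfold G2
      simp only [Function.update_self, Function.update_of_ne (show (0:Fin 5) ≠ 2 by decide),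
        Function.update_of_ne (show (3:Fin 5) ≠ 2 by decide), hz, mul_zero]
    simp only [hh, lintegral_zero]
    unfold G3
    rw [hz]
    ring
  case pos =>
    obtain ⟨hv1, hv2⟩ := hv
    have hupd : ∀ t : ℝ, G2 (Function.update x 2 t) =
        (ind (0 ≤ x 0 ∧ x 0 ≤ 1) * (ENNReal.ofReal (mf (x 3)) *
         ind (1 ≤ x 3 - x 0 ∧ x 3 - x 0 ≤ 2))) *
        (ind (t ∈ Set.Icc (x 3 - 1) (x 3)) *
         ENNReal.ofReal (min (x 0 + 1) t - max (x 0) (t - 1))) := by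
      intro t
      have hcomb : ind (0 ≤ x 3 - t ∧ x 3 - t ≤ 1) = ind (t ∈ Set.Icc (x 3 - 1) (x 3)) := by
        refine ind_congr ?_
        simp only [Set.mem_Icc]
        constructor
        · rintro ⟨h1, h2⟩; exact ⟨by linarith, by linarith⟩
        · rintro ⟨h1, h2⟩; exact ⟨by linarith, by linarith⟩
      unfold G2
      simp only [Function.update_self, Function.update_of_ne (show (0:Fin 5) ≠ 2 by decide),
        Function.update_of_ne (show (3:Fin 5) ≠ 2 by decide)]
      rw [← hcomb]; ring
    simp only [hupd]
    rw [lintegral_const_mul' _ _ (by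
      refine ENNReal.mul_ne_top (ind_ne_top _)
        (ENNReal.mul_ne_top ENNReal.ofReal_ne_top (ind_ne_top _)))]
    have hpos : ∀ t ∈ Set.Icc (x 3 - 1) (x 3), 0 ≤ min (x 0 + 1) t - max (x 0) (t - 1) := by
      intro t ht
      simp only [Set.mem_Icc] at ht
      obtain ⟨hl, hr⟩ := ht
      have := max_le (le_min (by linarith : x 0 ≤ x 0 + 1) (by linarith : x 0 ≤ t))
        (le_min (by linarith : t - 1 ≤ x 0 + 1) (by linarith : t - 1 ≤ t))
      linarith [this]
    rw [lint_Icc _ _ (by linarith) _ (by fun_prop) hpos]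
    have hint : ∀ p q : ℝ, IntervalIntegrable
        (fun t => min (x 0 + 1) t - max (x 0) (t - 1)) volume p q :=
      fun p q => (Continuous.intervalIntegrable (by fun_prop) p q)
    have hsplit := intervalIntegral.integral_add_adjacent_intervals
      (a := x 3 - 1) (b := x 0 + 1) (c := x 3)
      (f := fun t => min (x 0 + 1) t - max (x 0) (t - 1)) (hint _ _) (hint _ _)
    rw [← hsplit]
    have e1 : ∫ t in (x 3 - 1)..(x 0 + 1), (min (x 0 + 1) t - max (x 0) (t - 1))
        = ∫ t in (x 3 - 1)..(x 0 + 1), (-(x 0) + 1*t + 0*t^2 + 0*t^3 + 0*t^4) := by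
      refine intervalIntegral.integral_congr fun t ht => ?_
      rw [Set.uIcc_of_le (by linarith)] at ht
      obtain ⟨hl, hr⟩ := ht
      rw [min_eq_right (by linarith), max_eq_left (by linarith)]
      ring
    have e2 : ∫ t in (x 0 + 1)..(x 3), (min (x 0 + 1) t - max (x 0) (t - 1))
        = ∫ t in (x 0 + 1)..(x 3), ((x 0 + 2) + (-1)*t + 0*t^2 + 0*t^3 + 0*t^4) := by
      refine intervalIntegral.integral_congr fun t ht => ?_
      rw [Set.uIcc_of_le (by linarith)] at ht
      obtain ⟨hl, hr⟩ := ht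
      rw [min_eq_left (by linarith), max_eq_right (by linarith)]
      ring
    rw [e1, e2, ipoly, ipoly]
    unfold G3 Wv
    have : (-(x 0) * (x 0 + 1 - (x 3 - 1)) + 1 * ((x 0 + 1) ^ 2 - (x 3 - 1) ^ 2) / 2 +
          0 * ((x 0 + 1) ^ 3 - (x 3 - 1) ^ 3) / 3 + 0 * ((x 0 + 1) ^ 4 - (x 3 - 1) ^ 4) / 4 +
          0 * ((x 0 + 1) ^ 5 - (x 3 - 1) ^ 5) / 5) +
        ((x 0 + 2) * (x 3 - (x 0 + 1)) + -1 * (x 3 ^ 2 - (x 0 + 1) ^ 2) / 2 +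
          0 * (x 3 ^ 3 - (x 0 + 1) ^ 3) / 3 + 0 * (x 3 ^ 4 - (x 0 + 1) ^ 4) / 4 +
          0 * (x 3 ^ 5 - (x 0 + 1) ^ 5) / 5) = -(x 3 - x 0)^2 + 3*(x 3 - x 0) - 3/2 := by
      ring
    rw [this]
    ring

lemma Wv_nonneg {v : ℝ} (h1 : 1 ≤ v) (h2 : v ≤ 2) : 0 ≤ Wv v := by
  unfold Wv
  nlinarith [mul_nonneg (by linarith : (0:ℝ) ≤ v - 1) (by linarith : (0:ℝ) ≤ 2 - v)]

lemma step4 (x : Fin 5 → ℝ) : ∫⁻ t, G3 (Function.update x 0 t) = G4 x := by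
  have hG3 : ∀ t : ℝ, G3 (Function.update x 0 t) =
      ENNReal.ofReal (mf (x 3)) *
      (ind (t ∈ Set.Icc (max 0 (x 3 - 2)) (min 1 (x 3 - 1))) *
        ENNReal.ofReal (Wv (x 3 - t))) := by
    intro t
    have hcomb : ind (0 ≤ t ∧ t ≤ 1) * ind (1 ≤ x 3 - t ∧ x 3 - t ≤ 2)
        = ind (t ∈ Set.Icc (max 0 (x 3 - 2)) (min 1 (x 3 - 1))) := by
      rw [ind_mul]
      refine ind_congr ?_
      simp only [Set.mem_Icc, max_le_iff, le_min_iff]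
      constructor
      · rintro ⟨⟨h1, h2⟩, h3, h4⟩; exact ⟨⟨h1, by linarith⟩, h2, by linarith⟩
      · rintro ⟨⟨h1, h3⟩, h2, h4⟩; exact ⟨⟨h1, h2⟩, by linarith, by linarith⟩
    unfold G3
    simp only [Function.update_self, Function.update_of_ne (show (3:Fin 5) ≠ 0 by decide)]
    rw [← hcomb]; ring
  simp only [hG3]
  rw [lintegral_const_mul' _ _ ENNReal.ofReal_ne_top]
  unfold G4
  by_cases hd : 1 ≤ x 3 ∧ x 3 ≤ 3
  case neg =>
    have hmf : mf (x 3) ≤ 0 := by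
      rcases not_and_or.1 hd with h | h <;> push_neg at h <;> unfold mf
      · have h1 := min_le_left (x 3 + 1) (3:ℝ)
        have h2 := le_max_right (x 3) (2:ℝ)
        linarith
      · have h1 := min_le_right (x 3 + 1) (3:ℝ)
        have h2 := le_max_left (x 3) (2:ℝ)
        linarith
    rw [ENNReal.ofReal_eq_zero.2 hmf]
    rw [zero_mul, zero_mul]
  case pos =>
    obtain ⟨hd1, hd3⟩ := hd
    congr 1
    by_cases h2 : x 3 ≤ 2
    case pos =>
      rw [max_eq_left (by linarith), min_eq_right (by linarith)]
      have hpos : ∀ t ∈ Set.Icc (0:ℝ) (x 3 - 1), 0 ≤ Wv (x 3 - t) := by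
        intro t ht
        simp only [Set.mem_Icc] at ht
        exact Wv_nonneg (by linarith [ht.2]) (by linarith [ht.1])
      rw [lint_Icc _ _ (by linarith) _ (by unfold Wv; fun_prop) hpos]
      congr 1
      have e1 : ∫ t in (0:ℝ)..(x 3 - 1), Wv (x 3 - t)
          = ∫ t in (0:ℝ)..(x 3 - 1),
            ((-(x 3)^2 + 3*(x 3) - 3/2) + (2*(x 3) - 3)*t + (-1)*t^2 + 0*t^3 + 0*t^4) := by
        refine intervalIntegral.integral_congr fun t _ => ?_
        unfold Wv; ring
      rw [e1, ipoly]
      unfold Vd Phi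
      rw [if_pos h2]
      ring
    case neg =>
      push_neg at h2
      rw [max_eq_right (by linarith), min_eq_left (by linarith)]
      have hpos : ∀ t ∈ Set.Icc (x 3 - 2) (1:ℝ), 0 ≤ Wv (x 3 - t) := by
        intro t ht
        simp only [Set.mem_Icc] at ht
        exact Wv_nonneg (by linarith [ht.2]) (by linarith [ht.1])
      rw [lint_Icc _ _ (by linarith) _ (by unfold Wv; fun_prop) hpos]
      congr 1
      have e1 : ∫ t in (x 3 - 2)..(1:ℝ), Wv (x 3 - t)
          = ∫ t in (x 3 - 2)..(1:ℝ),
            ((-(x 3)^2 + 3*(x 3) - 3/2) + (2*(x 3) - 3)*t + (-1)*t^2 + 0*t^3 + 0*t^4) := by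
        refine intervalIntegral.integral_congr fun t _ => ?_
        unfold Wv; ring
      rw [e1, ipoly]
      unfold Vd Phi
      rw [if_neg (by linarith)]
      ring

lemma step5 (x : Fin 5 → ℝ) : ∫⁻ t, G4 (Function.update x 3 t) = 54/120 := by
  have hpt : ∀ t : ℝ, G4 (Function.update x 3 t) =
      ind (t ∈ Set.Icc (1:ℝ) 2) * ENNReal.ofReal ((t-1)*(Phi t + 1/3)) +
      ind (t ∈ Set.Ioc (2:ℝ) 3) * ENNReal.ofReal ((3-t)*(1/3 - Phi (t-1))) := by
    intro t
    unfold G4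
    simp only [Function.update_self]
    have iIcc : ∀ (h : t ∈ Set.Icc (1:ℝ) 2), ind (t ∈ Set.Icc (1:ℝ) 2) = 1 := by
      intro h; unfold ind; rw [if_pos h]
    have iIoc : ∀ (h : t ∈ Set.Ioc (2:ℝ) 3), ind (t ∈ Set.Ioc (2:ℝ) 3) = 1 := by
      intro h; unfold ind; rw [if_pos h]
    rcases lt_or_ge t 1 with h1 | h1
    · have hmf : mf t ≤ 0 := by
        unfold mf
        have := min_le_left (t + 1) (3:ℝ); have := le_max_right t (2:ℝ); linarith
      have i1 : ind (t ∈ Set.Icc (1:ℝ) 2) = 0 := by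
        unfold ind; rw [if_neg (fun hm => absurd (Set.mem_Icc.1 hm).1 (by linarith))]
      have i2 : ind (t ∈ Set.Ioc (2:ℝ) 3) = 0 := by
        unfold ind; rw [if_neg (fun hm => absurd (Set.mem_Ioc.1 hm).1 (by linarith))]
      rw [ENNReal.ofReal_eq_zero.2 hmf, i1, i2, zero_mul, zero_mul, zero_mul, add_zero]
    · rcases le_or_gt t 2 with h2 | h2
      · have hmf : mf t = t - 1 := by
          unfold mf
          rw [min_eq_left (by linarith), max_eq_right (by linarith)]
          ring
        have i2 : ind (t ∈ Set.Ioc (2:ℝ) 3) = 0 := by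
          unfold ind; rw [if_neg (fun hm => absurd (Set.mem_Ioc.1 hm).1 (by linarith))]
        rw [hmf, iIcc (Set.mem_Icc.2 ⟨h1, h2⟩), i2, one_mul, zero_mul, add_zero]
        rw [← ENNReal.ofReal_mul (by linarith)]
        unfold Vd
        rw [if_pos h2]
      · rcases le_or_gt t 3 with h3 | h3
        · have hmf : mf t = 3 - t := by
            unfold mf
            rw [min_eq_right (by linarith), max_eq_left (by linarith)]
          have i1 : ind (t ∈ Set.Icc (1:ℝ) 2) = 0 := by
            unfold ind; rw [if_neg (fun hm => absurd (Set.mem_Icc.1 hm).2 (by linarith))]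
          rw [hmf, iIoc (Set.mem_Ioc.2 ⟨h2, h3⟩), i1, one_mul, zero_mul, zero_add]
          rw [← ENNReal.ofReal_mul (by linarith)]
          unfold Vd
          rw [if_neg (by linarith)]
        · have hmf : mf t ≤ 0 := by
            unfold mf
            have := min_le_right (t + 1) (3:ℝ); have := le_max_left t (2:ℝ); linarith
          have i1 : ind (t ∈ Set.Icc (1:ℝ) 2) = 0 := by
            unfold ind; rw [if_neg (fun hm => absurd (Set.mem_Icc.1 hm).2 (by linarith))]
          have i2 : ind (t ∈ Set.Ioc (2:ℝ) 3) = 0 := by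
            unfold ind; rw [if_neg (fun hm => absurd (Set.mem_Ioc.1 hm).2 (by linarith))]
          rw [ENNReal.ofReal_eq_zero.2 hmf, i1, i2, zero_mul, zero_mul, zero_mul, add_zero]
  simp only [hpt]
  rw [lintegral_add_left (f := fun t : ℝ =>
      ind (t ∈ Set.Icc (1:ℝ) 2) * ENNReal.ofReal ((t-1)*(Phi t + 1/3))) ((meas_ind measurableSet_Icc).mul
    (meas_oR (by unfold Phi; fun_prop)))]
  have hpos1 : ∀ t ∈ Set.Icc (1:ℝ) 2, 0 ≤ (t-1)*(Phi t + 1/3) := by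
    intro t ht
    simp only [Set.mem_Icc] at ht
    have ha : (0:ℝ) ≤ t - 1 := by linarith [ht.1]
    have hb : (0:ℝ) ≤ 2 - t := by linarith [ht.2]
    refine mul_nonneg ha ?_
    unfold Phi
    nlinarith [mul_nonneg (mul_nonneg ha ha) hb, mul_nonneg ha hb, mul_nonneg ha ha]
  have hpos2 : ∀ t ∈ Set.Ioc (2:ℝ) 3, 0 ≤ (3-t)*(1/3 - Phi (t-1)) := by
    intro t ht
    simp only [Set.mem_Ioc] at ht
    have ha : (0:ℝ) ≤ t - 2 := by linarith [ht.1]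
    have hb : (0:ℝ) ≤ 3 - t := by linarith [ht.2]
    refine mul_nonneg hb ?_
    unfold Phi
    nlinarith [mul_nonneg (mul_nonneg hb ha) hb, mul_nonneg hb ha, mul_nonneg hb hb,
      mul_nonneg ha ha]
  rw [lint_Icc 1 2 (by norm_num) _ (by unfold Phi; fun_prop) hpos1,
    lint_Ioc 2 3 (by norm_num) _ (by unfold Phi; fun_prop) hpos2]
  have e1 : ∫ t in (1:ℝ)..2, ((t-1)*(Phi t + 1/3))
      = ∫ t in (1:ℝ)..2, ((-1/3) + (11/6)*t + (-3)*t^2 + (11/6)*t^3 + (-1/3)*t^4) := by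
    refine intervalIntegral.integral_congr fun t _ => ?_
    unfold Phi; ring
  have e2 : ∫ t in (2:ℝ)..3, ((3-t)*(1/3 - Phi (t-1)))
      = ∫ t in (2:ℝ)..3, ((-9) + (39/2)*t + (-13)*t^2 + (7/2)*t^3 + (-1/3)*t^4) := by
    refine intervalIntegral.integral_congr fun t _ => ?_
    unfold Phi; ring
  rw [e1, e2, ipoly, ipoly]
  norm_num
  rw [← ENNReal.ofReal_add (by norm_num) (by norm_num)]
  rw [show (9:ℝ)/40 + 9/40 = 54/120 by norm_num]
  rw [ENNReal.ofReal_div_of_pos (by norm_num)]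
  norm_num

theorem stmt17' :
    volume {z : Fin 5 → ℝ |
      (0 ≤ z 0 ∧ z 0 ≤ 1) ∧
      (0 ≤ z 1 - z 0 ∧ z 1 - z 0 ≤ 1) ∧
      (0 ≤ z 2 - z 1 ∧ z 2 - z 1 ≤ 1) ∧
      (0 ≤ z 3 - z 2 ∧ z 3 - z 2 ≤ 1) ∧
      (0 ≤ z 4 - z 3 ∧ z 4 - z 3 ≤ 1) ∧
      (2 ≤ z 4 ∧ z 4 ≤ 3) ∧
      (1 ≤ z 3 - z 0 ∧ z 3 - z 0 ≤ 2)} = 54 / 120 := by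
  set S : Set (Fin 5 → ℝ) := {z : Fin 5 → ℝ |
      (0 ≤ z 0 ∧ z 0 ≤ 1) ∧
      (0 ≤ z 1 - z 0 ∧ z 1 - z 0 ≤ 1) ∧
      (0 ≤ z 2 - z 1 ∧ z 2 - z 1 ≤ 1) ∧
      (0 ≤ z 3 - z 2 ∧ z 3 - z 2 ≤ 1) ∧
      (0 ≤ z 4 - z 3 ∧ z 4 - z 3 ≤ 1) ∧
      (2 ≤ z 4 ∧ z 4 ≤ 3) ∧
      (1 ≤ z 3 - z 0 ∧ z 3 - z 0 ≤ 2)} with hSdef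
  have hS : MeasurableSet S :=
    ((measp 0) measurableSet_Icc).inter ((((measp 1).sub (measp 0)) measurableSet_Icc).inter
      ((((measp 2).sub (measp 1)) measurableSet_Icc).inter
      ((((measp 3).sub (measp 2)) measurableSet_Icc).inter
      ((((measp 4).sub (measp 3)) measurableSet_Icc).inter
      (((measp 4) measurableSet_Icc).inter
      (((measp 3).sub (measp 0)) measurableSet_Icc))))))
  have hFeq : ∀ z, S.indicator (1 : (Fin 5 → ℝ) → ℝ≥0∞) z = Fz z := by
    intro z
    by_cases h : z ∈ S
    · rw [Set.indicator_of_mem h]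
      obtain ⟨h1, h2, h3, h4, h5, h6, h7⟩ := h
      unfold Fz ind
      rw [if_pos h1, if_pos h2, if_pos h3, if_pos h4, if_pos h5, if_pos h6, if_pos h7]
      norm_num
    · rw [Set.indicator_of_notMem h]
      unfold Fz
      simp only [ind_mul]
      unfold ind
      exact (if_neg (fun hc => h hc)).symm
  rw [← lintegral_indicator_one hS, lintegral_congr hFeq]
  rw [show (volume : Measure (Fin 5 → ℝ)) = Measure.pi fun _ => volume from volume_pi]
  rw [lintegral_eq_lmarginal_univ (fun _ : Fin 5 => (0:ℝ))]
  rw [show (univ : Finset (Fin 5)) = insert 4 (insert 1 (insert 2 (insert 0 {3}))) by decide]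
  rw [lmarginal_insert' _ meas_Fz (by decide)]
  rw [show (fun x => ∫⁻ t, Fz (Function.update x 4 t) ∂(fun _ : Fin 5 => (volume : Measure ℝ)) 4)
      = G1 from funext step1]
  rw [lmarginal_insert' _ meas_G1 (by decide)]
  rw [show (fun x => ∫⁻ t, G1 (Function.update x 1 t) ∂(fun _ : Fin 5 => (volume : Measure ℝ)) 1)
      = G2 from funext step2]
  rw [lmarginal_insert' _ meas_G2 (by decide)]
  rw [show (fun x => ∫⁻ t, G2 (Function.update x 2 t) ∂(fun _ : Fin 5 => (volume : Measure ℝ)) 2)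
      = G3 from funext step3]
  rw [lmarginal_insert' _ meas_G3 (by decide)]
  rw [show (fun x => ∫⁻ t, G3 (Function.update x 0 t) ∂(fun _ : Fin 5 => (volume : Measure ℝ)) 0)
      = G4 from funext step4]
  rw [lmarginal_singleton]
  exact step5 _

theorem stmt17 :
    volume {z : Fin 5 → ℝ |
      (0 ≤ z 0 ∧ z 0 ≤ 1) ∧
      (0 ≤ z 1 - z 0 ∧ z 1 - z 0 ≤ 1) ∧
      (0 ≤ z 2 - z 1 ∧ z 2 - z 1 ≤ 1) ∧
      (0 ≤ z 3 - z 2 ∧ z 3 - z 2 ≤ 1) ∧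
      (0 ≤ z 4 - z 3 ∧ z 4 - z 3 ≤ 1) ∧
      (2 ≤ z 4 ∧ z 4 ≤ 3) ∧
      (1 ≤ z 3 - z 0 ∧ z 3 - z 0 ≤ 2)} = 54 / 120 := by
  exact stmt17'
end

section
/- The Euclidean volume of the polytope {(z_1,…,z_5) ∈ ℝ^5 : 0 ≤ z_1 ≤ 1, 0 ≤ z_i − z_{i−1} ≤ 1 for i = 2,…,5, 0 ≤ z_5 ≤ 1, 0 ≤ z_4 − z_1 ≤ 1} equals 1/120; equivalently, it is the number of w ∈ S_5 with w_1 < w_2 < w_3 < w_4 < w_5 divided by 5!. -/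
open MeasureTheory Finset ENNReal

noncomputable def g (n : ℕ) (a : ℝ) : ℝ≥0∞ :=
  if a ≤ 1 then ENNReal.ofReal ((1-a)^n / n.factorial) else 0

lemma mySlice (n : ℕ) (S : Set (ℝ × (Fin n → ℝ))) (hS : MeasurableSet S) :
    volume {z : Fin (n+1) → ℝ | (z 0, Fin.tail z) ∈ S} = ∫⁻ x, volume {y | (x, y) ∈ S} := by
  have hp := MeasureTheory.volume_preserving_piFinSuccAbove (fun _ : Fin (n+1) => ℝ) 0
  have : {z : Fin (n+1) → ℝ | (z 0, Fin.tail z) ∈ S}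
      = (MeasurableEquiv.piFinSuccAbove (fun _ : Fin (n+1) => ℝ) 0) ⁻¹' S := by
    ext z
    simp [MeasurableEquiv.piFinSuccAbove, Fin.insertNthEquiv, Fin.tail, Fin.succAbove, Fin.removeNth]
  rw [this, hp.measure_preimage hS.nullMeasurableSet]
  exact Measure.prod_apply hS

lemma intstep (n : ℕ) (a : ℝ) : ∫⁻ x in Set.Ici a, g n x = g (n+1) a := by
  by_cases ha : a ≤ 1
  · have hsplit : Set.Ici a = Set.Icc a 1 ∪ Set.Ioi 1 := by
      ext x; simp only [Set.mem_Ici, Set.mem_union, Set.mem_Icc, Set.mem_Ioi]; constructor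
      · intro h; rcases le_or_gt x 1 with h1 | h1
        · exact Or.inl ⟨h, h1⟩
        · exact Or.inr h1
      · rintro (⟨h, _⟩ | h) ; exact h; linarith
    rw [hsplit, lintegral_union measurableSet_Ioi (by
      intro s hs1 hs2 x hx
      exact absurd ((hs2 hx)) (not_lt.2 (hs1 hx).2))]
    have h2 : ∫⁻ x in Set.Ioi (1:ℝ), g n x = 0 := by
      have : ∫⁻ x in Set.Ioi (1:ℝ), g n x = ∫⁻ _ in Set.Ioi (1:ℝ), (0:ℝ≥0∞) :=
        setLIntegral_congr_fun measurableSet_Ioi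
          ((fun x hx => by
            simp [g, not_le.2 (Set.mem_Ioi.1 hx)]))
      rw [this, lintegral_zero]
    rw [h2, add_zero]
    have h1 : ∫⁻ x in Set.Icc a 1, g n x
        = ∫⁻ x in Set.Icc a 1, ENNReal.ofReal ((1-x)^n / n.factorial) := by
      refine setLIntegral_congr_fun measurableSet_Icc
        ((fun x hx => by simp [g, (Set.mem_Icc.1 hx).2]))
    rw [h1]
    rw [show (volume.restrict (Set.Icc a 1)) = volume.restrict (Set.Ioc a 1) from
      (Measure.restrict_congr_set MeasureTheory.Ioc_ae_eq_Icc).symm]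
    rw [← ofReal_integral_eq_lintegral_ofReal]
    · rw [← intervalIntegral.integral_of_le ha]
      have : ∫ x in a..1, (1-x)^n / n.factorial
          = ((∫ x in a..1, ((1:ℝ)-x)^n)) / n.factorial := by
        rw [intervalIntegral.integral_div]
      rw [this]
      have hc : ∫ x in a..1, ((1:ℝ)-x)^n = (1-a)^(n+1)/(n+1) := by
        rw [intervalIntegral.integral_comp_sub_left (fun u => u^n) 1]
        simp [integral_pow]
      rw [hc, g, if_pos ha]
      congr 1
      rw [Nat.factorial_succ]
      field_simp
      push_cast; ring
    · apply Continuous.integrableOn_Ioc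
      fun_prop
    · filter_upwards [self_mem_ae_restrict measurableSet_Ioc] with x hx
      have : (0:ℝ) ≤ 1 - x := by linarith [hx.2]
      positivity
  · have : ∀ x ∈ Set.Ici a, g n x = 0 := fun x hx => by
      simp [g]; intro h; linarith [Set.mem_Ici.1 hx]
    rw [setLIntegral_congr_fun measurableSet_Ici this]
    simp [g, ha]


lemma level {n k : ℕ} (B : ℝ → Set (Fin n → ℝ))
    (hSm : MeasurableSet {p : ℝ × (Fin n → ℝ) | p.2 ∈ B p.1})
    (hB : ∀ x, volume (B x) = g k x) (a : ℝ) :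
    volume {z : Fin (n+1) → ℝ | a ≤ z 0 ∧ Fin.tail z ∈ B (z 0)} = g (k+1) a := by
  have hS : MeasurableSet {p : ℝ × (Fin n → ℝ) | a ≤ p.1 ∧ p.2 ∈ B p.1} := by
    have : {p : ℝ × (Fin n → ℝ) | a ≤ p.1 ∧ p.2 ∈ B p.1}
        = {p : ℝ × (Fin n → ℝ) | a ≤ p.1} ∩ {p | p.2 ∈ B p.1} := rfl
    rw [this]
    exact (measurableSet_le measurable_const measurable_fst).inter hSm
  have h1 : {z : Fin (n+1) → ℝ | a ≤ z 0 ∧ Fin.tail z ∈ B (z 0)}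
      = {z : Fin (n+1) → ℝ | (z 0, Fin.tail z) ∈ {p : ℝ × (Fin n → ℝ) | a ≤ p.1 ∧ p.2 ∈ B p.1}} := rfl
  rw [h1, mySlice n _ hS]
  have h2 : ∀ x, volume {y : Fin n → ℝ | (x, y) ∈ {p : ℝ × (Fin n → ℝ) | a ≤ p.1 ∧ p.2 ∈ B p.1}}
      = (Set.Ici a).indicator (g k) x := by
    intro x
    by_cases hax : a ≤ x
    · have : {y : Fin n → ℝ | (x, y) ∈ {p : ℝ × (Fin n → ℝ) | a ≤ p.1 ∧ p.2 ∈ B p.1}} = B x := by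
        ext y; simp [hax]
      rw [this, Set.indicator_of_mem (Set.mem_Ici.mpr hax), hB]
    · have : {y : Fin n → ℝ | (x, y) ∈ {p : ℝ × (Fin n → ℝ) | a ≤ p.1 ∧ p.2 ∈ B p.1}} = ∅ := by
        ext y; simp [hax]
      rw [this, Set.indicator_of_notMem (by simpa using hax), measure_empty]
  simp_rw [h2]
  rw [lintegral_indicator measurableSet_Ici]
  exact intstep k a

lemma v1 (a : ℝ) : volume {z : Fin 1 → ℝ | a ≤ z 0 ∧ z 0 ≤ 1} = g 1 a := by
  have hp := MeasureTheory.volume_preserving_funUnique (Fin 1) ℝ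
  have h : {z : Fin 1 → ℝ | a ≤ z 0 ∧ z 0 ≤ 1}
      = (MeasurableEquiv.funUnique (Fin 1) ℝ) ⁻¹' (Set.Icc a 1) := by
    ext z; simp [MeasurableEquiv.funUnique, Set.mem_Icc]
  rw [h, show volume ((MeasurableEquiv.funUnique (Fin 1) ℝ) ⁻¹' (Set.Icc a 1)) = volume (Set.Icc a 1) from hp.measure_preimage (s := Set.Icc a 1) measurableSet_Icc.nullMeasurableSet, Real.volume_Icc]
  by_cases ha : a ≤ 1
  · simp [g, ha]
  · rw [g, if_neg ha, ENNReal.ofReal_eq_zero]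
    linarith [not_le.1 ha]

lemma v2 (a : ℝ) : volume {z : Fin 2 → ℝ | a ≤ z 0 ∧ z 0 ≤ z 1 ∧ z 1 ≤ 1} = g 2 a := by
  have hset : {z : Fin 2 → ℝ | a ≤ z 0 ∧ z 0 ≤ z 1 ∧ z 1 ≤ 1}
      = {z : Fin 2 → ℝ | a ≤ z 0 ∧
          Fin.tail z ∈ (fun x => {y : Fin 1 → ℝ | x ≤ y 0 ∧ y 0 ≤ 1}) (z 0)} := by
    ext z
    constructor
    · rintro ⟨h0, h1, h⟩; exact ⟨h0, h1, h⟩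
    · rintro ⟨h0, h1, h⟩; exact ⟨h0, h1, h⟩
  rw [hset]
  refine level (fun x => {y : Fin 1 → ℝ | x ≤ y 0 ∧ y 0 ≤ 1}) ?_ v1 a
  exact ((measurableSet_le measurable_fst ((measurable_pi_apply (X := fun _ : Fin 1 => ℝ) 0).comp measurable_snd)).inter (measurableSet_le ((measurable_pi_apply (X := fun _ : Fin 1 => ℝ) 0).comp measurable_snd) measurable_const))

lemma v3 (a : ℝ) :
    volume {z : Fin 3 → ℝ | a ≤ z 0 ∧ z 0 ≤ z 1 ∧ z 1 ≤ z 2 ∧ z 2 ≤ 1} = g 3 a := by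
  have hset : {z : Fin 3 → ℝ | a ≤ z 0 ∧ z 0 ≤ z 1 ∧ z 1 ≤ z 2 ∧ z 2 ≤ 1}
      = {z : Fin 3 → ℝ | a ≤ z 0 ∧
          Fin.tail z ∈ (fun x => {y : Fin 2 → ℝ | x ≤ y 0 ∧ y 0 ≤ y 1 ∧ y 1 ≤ 1}) (z 0)} := by
    ext z
    constructor
    · rintro ⟨h0, h1, h⟩; exact ⟨h0, h1, h⟩
    · rintro ⟨h0, h1, h⟩; exact ⟨h0, h1, h⟩
  rw [hset]
  refine level (fun x => {y : Fin 2 → ℝ | x ≤ y 0 ∧ y 0 ≤ y 1 ∧ y 1 ≤ 1}) ?_ v2 a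
  exact ((measurableSet_le measurable_fst ((measurable_pi_apply (X := fun _ : Fin 2 => ℝ) 0).comp measurable_snd)).inter ((measurableSet_le ((measurable_pi_apply (X := fun _ : Fin 2 => ℝ) 0).comp measurable_snd) ((measurable_pi_apply (X := fun _ : Fin 2 => ℝ) 1).comp measurable_snd)).inter (measurableSet_le ((measurable_pi_apply (X := fun _ : Fin 2 => ℝ) 1).comp measurable_snd) measurable_const)))

lemma v4 (a : ℝ) :
    volume {z : Fin 4 → ℝ | a ≤ z 0 ∧ z 0 ≤ z 1 ∧ z 1 ≤ z 2 ∧ z 2 ≤ z 3 ∧ z 3 ≤ 1} = g 4 a := by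
  have hset : {z : Fin 4 → ℝ | a ≤ z 0 ∧ z 0 ≤ z 1 ∧ z 1 ≤ z 2 ∧ z 2 ≤ z 3 ∧ z 3 ≤ 1}
      = {z : Fin 4 → ℝ | a ≤ z 0 ∧
          Fin.tail z ∈ (fun x => {y : Fin 3 → ℝ | x ≤ y 0 ∧ y 0 ≤ y 1 ∧ y 1 ≤ y 2 ∧ y 2 ≤ 1}) (z 0)} := by
    ext z
    constructor
    · rintro ⟨h0, h1, h⟩; exact ⟨h0, h1, h⟩
    · rintro ⟨h0, h1, h⟩; exact ⟨h0, h1, h⟩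
  rw [hset]
  refine level (fun x => {y : Fin 3 → ℝ | x ≤ y 0 ∧ y 0 ≤ y 1 ∧ y 1 ≤ y 2 ∧ y 2 ≤ 1}) ?_ v3 a
  exact ((measurableSet_le measurable_fst ((measurable_pi_apply (X := fun _ : Fin 3 => ℝ) 0).comp measurable_snd)).inter ((measurableSet_le ((measurable_pi_apply (X := fun _ : Fin 3 => ℝ) 0).comp measurable_snd) ((measurable_pi_apply (X := fun _ : Fin 3 => ℝ) 1).comp measurable_snd)).inter ((measurableSet_le ((measurable_pi_apply (X := fun _ : Fin 3 => ℝ) 1).comp measurable_snd) ((measurable_pi_apply (X := fun _ : Fin 3 => ℝ) 2).comp measurable_snd)).inter (measurableSet_le ((measurable_pi_apply (X := fun _ : Fin 3 => ℝ) 2).comp measurable_snd) measurable_const))))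

lemma v5 (a : ℝ) :
    volume {z : Fin 5 → ℝ | a ≤ z 0 ∧ z 0 ≤ z 1 ∧ z 1 ≤ z 2 ∧ z 2 ≤ z 3 ∧ z 3 ≤ z 4 ∧ z 4 ≤ 1} = g 5 a := by
  have hset : {z : Fin 5 → ℝ | a ≤ z 0 ∧ z 0 ≤ z 1 ∧ z 1 ≤ z 2 ∧ z 2 ≤ z 3 ∧ z 3 ≤ z 4 ∧ z 4 ≤ 1}
      = {z : Fin 5 → ℝ | a ≤ z 0 ∧
          Fin.tail z ∈ (fun x => {y : Fin 4 → ℝ | x ≤ y 0 ∧ y 0 ≤ y 1 ∧ y 1 ≤ y 2 ∧ y 2 ≤ y 3 ∧ y 3 ≤ 1}) (z 0)} := by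
    ext z
    constructor
    · rintro ⟨h0, h1, h⟩; exact ⟨h0, h1, h⟩
    · rintro ⟨h0, h1, h⟩; exact ⟨h0, h1, h⟩
  rw [hset]
  refine level (fun x => {y : Fin 4 → ℝ | x ≤ y 0 ∧ y 0 ≤ y 1 ∧ y 1 ≤ y 2 ∧ y 2 ≤ y 3 ∧ y 3 ≤ 1}) ?_ v4 a
  exact ((measurableSet_le measurable_fst ((measurable_pi_apply (X := fun _ : Fin 4 => ℝ) 0).comp measurable_snd)).inter ((measurableSet_le ((measurable_pi_apply (X := fun _ : Fin 4 => ℝ) 0).comp measurable_snd) ((measurable_pi_apply (X := fun _ : Fin 4 => ℝ) 1).comp measurable_snd)).inter ((measurableSet_le ((measurable_pi_apply (X := fun _ : Fin 4 => ℝ) 1).comp measurable_snd) ((measurable_pi_apply (X := fun _ : Fin 4 => ℝ) 2).comp measurable_snd)).inter ((measurableSet_le ((measurable_pi_apply (X := fun _ : Fin 4 => ℝ) 2).comp measurable_snd) ((measurable_pi_apply (X := fun _ : Fin 4 => ℝ) 3).comp measurable_snd)).inter (measurableSet_le ((measurable_pi_apply (X := fun _ : Fin 4 => ℝ) 3).comp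 measurable_snd) measurable_const)))))


theorem stmt18 :
    volume {z : Fin 5 → ℝ |
      (0 ≤ z 0 ∧ z 0 ≤ 1) ∧
      (0 ≤ z 1 - z 0 ∧ z 1 - z 0 ≤ 1) ∧
      (0 ≤ z 2 - z 1 ∧ z 2 - z 1 ≤ 1) ∧
      (0 ≤ z 3 - z 2 ∧ z 3 - z 2 ≤ 1) ∧
      (0 ≤ z 4 - z 3 ∧ z 4 - z 3 ≤ 1) ∧
      (0 ≤ z 4 ∧ z 4 ≤ 1) ∧
      (0 ≤ z 3 - z 0 ∧ z 3 - z 0 ≤ 1)} = 1 / 120 ∧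
    volume {z : Fin 5 → ℝ |
      (0 ≤ z 0 ∧ z 0 ≤ 1) ∧
      (0 ≤ z 1 - z 0 ∧ z 1 - z 0 ≤ 1) ∧
      (0 ≤ z 2 - z 1 ∧ z 2 - z 1 ≤ 1) ∧
      (0 ≤ z 3 - z 2 ∧ z 3 - z 2 ≤ 1) ∧
      (0 ≤ z 4 - z 3 ∧ z 4 - z 3 ≤ 1) ∧
      (0 ≤ z 4 ∧ z 4 ≤ 1) ∧
      (0 ≤ z 3 - z 0 ∧ z 3 - z 0 ≤ 1)} =
      (Nat.card {w : Equiv.Perm (Fin 5) //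
        ov w 1 < ov w 2 ∧ ov w 2 < ov w 3 ∧ ov w 3 < ov w 4 ∧ ov w 4 < ov w 5} : ℝ≥0∞) /
        (Nat.factorial 5 : ℝ≥0∞) := by
  have hset : {z : Fin 5 → ℝ |
      (0 ≤ z 0 ∧ z 0 ≤ 1) ∧
      (0 ≤ z 1 - z 0 ∧ z 1 - z 0 ≤ 1) ∧
      (0 ≤ z 2 - z 1 ∧ z 2 - z 1 ≤ 1) ∧
      (0 ≤ z 3 - z 2 ∧ z 3 - z 2 ≤ 1) ∧
      (0 ≤ z 4 - z 3 ∧ z 4 - z 3 ≤ 1) ∧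
      (0 ≤ z 4 ∧ z 4 ≤ 1) ∧
      (0 ≤ z 3 - z 0 ∧ z 3 - z 0 ≤ 1)}
      = {z : Fin 5 → ℝ | (0:ℝ) ≤ z 0 ∧ z 0 ≤ z 1 ∧ z 1 ≤ z 2 ∧ z 2 ≤ z 3 ∧ z 3 ≤ z 4 ∧ z 4 ≤ 1} := by
    ext z
    simp only [Set.mem_setOf_eq]
    constructor
    · rintro ⟨⟨a1,a2⟩,⟨b1,b2⟩,⟨c1,c2⟩,⟨d1,d2⟩,⟨e1,e2⟩,⟨f1,f2⟩,⟨g1,g2⟩⟩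
      exact ⟨a1, by linarith, by linarith, by linarith, by linarith, f2⟩
    · rintro ⟨a,b,c,d,e,f⟩
      refine ⟨⟨a, by linarith⟩, ⟨by linarith, by linarith⟩, ⟨by linarith, by linarith⟩,
        ⟨by linarith, by linarith⟩, ⟨by linarith, by linarith⟩, ⟨by linarith, f⟩,
        ⟨by linarith, by linarith⟩⟩
  have hvol : volume {z : Fin 5 → ℝ |
      (0 ≤ z 0 ∧ z 0 ≤ 1) ∧
      (0 ≤ z 1 - z 0 ∧ z 1 - z 0 ≤ 1) ∧
      (0 ≤ z 2 - z 1 ∧ z 2 - z 1 ≤ 1) ∧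
      (0 ≤ z 3 - z 2 ∧ z 3 - z 2 ≤ 1) ∧
      (0 ≤ z 4 - z 3 ∧ z 4 - z 3 ≤ 1) ∧
      (0 ≤ z 4 ∧ z 4 ≤ 1) ∧
      (0 ≤ z 3 - z 0 ∧ z 3 - z 0 ≤ 1)} = 1 / 120 := by
    rw [hset, v5 0]
    rw [g, if_pos (by norm_num : (0:ℝ) ≤ 1)]
    rw [show ((1:ℝ)-0)^5/((Nat.factorial 5 : ℕ) : ℝ) = (120:ℝ)⁻¹ by norm_num [Nat.factorial]]
    rw [ENNReal.ofReal_inv_of_pos (by norm_num), ENNReal.ofReal_ofNat, one_div]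
  refine ⟨hvol, ?_⟩
  rw [hvol]
  rw [show Nat.card {w : Equiv.Perm (Fin 5) //
        ov w 1 < ov w 2 ∧ ov w 2 < ov w 3 ∧ ov w 3 < ov w 4 ∧ ov w 4 < ov w 5} = 1 from by
      rw [Nat.card_eq_fintype_card]; decide]
  norm_num [Nat.factorial]
end

section
/- Fix integers d ≥ 2 and 1 ≤ k ≤ d, and for each (i,j) with 0 ≤ i < j ≤ d integers b_{ij} ≤ c_{ij} (possibly b_{ij} = −∞ or c_{ij} = +∞). Let P = {(z_1,…,z_d) ∈ ℝ^d : 0 ≤ z_i − z_{i−1} ≤ 1 for 1 ≤ i ≤ d (with z_0 = 0), k−1 ≤ z_d ≤ k, and b_{ij} ≤ z_j − z_i ≤ c_{ij} for all i < j}. Let W_P be the set of w = w_1 ⋯ w_d ∈ S_d (with w_0 := 0) such that des(w) = k−1, and for each i < j: des(w_i ⋯ w_j) ≥ b_{ij} with w_i < w_j whenever equality holds, and des(w_i ⋯ w_j) ≤ c_{ij} with w_i > w_j whenever equality holds. Then the Euclidean volume of P equals |W_P|/d!. -/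
open MeasureTheory Finset ENNReal

namespace LP

variable {d : ℕ}

lemma zcoord_pos (z : Fin d → ℝ) {ℓ : ℕ} (h1 : 1 ≤ ℓ) (h2 : ℓ ≤ d) :
    zcoord z ℓ = z ⟨ℓ - 1, by omega⟩ := dif_pos ⟨h1, h2⟩

lemma zcoord_zero (z : Fin d → ℝ) : zcoord z 0 = 0 := dif_neg (by omega)

lemma zcoord_fin (z : Fin d → ℝ) (a : Fin d) : zcoord z (a.val + 1) = z a := by
  rw [zcoord_pos z (by omega) (by omega)]
  congr 1

lemma ov_pos' (w : Equiv.Perm (Fin d)) {ℓ : ℕ} (h1 : 1 ≤ ℓ) (h2 : ℓ ≤ d) :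
    ov w ℓ = (w ⟨ℓ - 1, by omega⟩).val + 1 := dif_pos ⟨h1, h2⟩

lemma ov_zero (w : Equiv.Perm (Fin d)) : ov w 0 = 0 := dif_neg (by omega)

lemma ov_lt_iff (w : Equiv.Perm (Fin d)) {i j : ℕ} (hi1 : 1 ≤ i) (hid : i ≤ d)
    (hj1 : 1 ≤ j) (hjd : j ≤ d) :
    (ov w i < ov w j ↔ w ⟨i - 1, by omega⟩ < w ⟨j - 1, by omega⟩) := by
  rw [ov_pos' w hi1 hid, ov_pos' w hj1 hjd, Fin.lt_def]
  omega

lemma ov_ne (w : Equiv.Perm (Fin d)) {i j : ℕ} (hi1 : 1 ≤ i) (hj1 : 1 ≤ j)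
    (hjd : j ≤ d) (hij : i < j) : ov w i ≠ ov w j := by
  rw [ov_pos' w hi1 (by omega), ov_pos' w hj1 hjd]
  intro h
  have h2 : w ⟨i - 1, by omega⟩ = w ⟨j - 1, by omega⟩ := Fin.ext (by omega)
  have h3 := w.injective h2
  rw [Fin.mk.injEq] at h3
  omega

lemma ov_zero_lt (w : Equiv.Perm (Fin d)) {j : ℕ} (h1 : 1 ≤ j) (hj : j ≤ d) :
    ov w 0 < ov w j := by
  rw [ov_zero, ov_pos' w h1 hj]; omega

lemma ov_lt_or (w : Equiv.Perm (Fin d)) {i j : ℕ} (hij : i < j) (hjd : j ≤ d) :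
    ov w i < ov w j ∨ ov w j < ov w i := by
  rcases Nat.lt_or_ge i 1 with h | h
  · have : i = 0 := by omega
    subst this
    exact Or.inl (ov_zero_lt w (by omega) hjd)
  · exact (ov_ne w h (by omega) hjd hij).lt_or_gt

lemma des_add (w : Equiv.Perm (Fin d)) {a b c : ℕ} (hab : a ≤ b) (hbc : b ≤ c) :
    des w a c = des w a b + des w b c := by
  unfold des
  rw [← Finset.Ico_union_Ico_eq_Ico hab hbc, Finset.filter_union,
    Finset.card_union_of_disjoint
      (Finset.disjoint_filter_filter (Finset.Ico_disjoint_Ico_consecutive a b c))]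

lemma des_single (w : Equiv.Perm (Fin d)) (a : ℕ) :
    des w a (a + 1) = if ov w (a + 1) < ov w a then 1 else 0 := by
  unfold des
  rw [Nat.Ico_succ_singleton, Finset.filter_singleton]
  split_ifs <;> simp

lemma des_self (w : Equiv.Perm (Fin d)) (a : ℕ) : des w a a = 0 := by
  unfold des; simp

lemma des_zero (w : Equiv.Perm (Fin d)) {j : ℕ} (h1 : 1 ≤ j) :
    des w 0 j = des w 1 j := by
  rw [des_add w (Nat.zero_le 1) h1]
  have h := des_single w 0
  rw [ov_zero] at h
  simp only [Nat.not_lt_zero, if_false] at h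
  rw [zero_add] at h
  rw [h]
  omega

end LP

namespace LP

variable {d : ℕ}

/-- The open order cell of a permutation inside the unit cube. -/
def F (w : Equiv.Perm (Fin d)) : Set (Fin d → ℝ) :=
  {f | (∀ i, f i ∈ Set.Ioo (0:ℝ) 1) ∧ ∀ i j, w i < w j ↔ f i < f j}

/-- Integer translation vector of the alcove of `w`. -/
noncomputable def av (w : Equiv.Perm (Fin d)) : Fin d → ℝ :=
  fun i => (des w 1 (i.val + 1) : ℝ)

/-- The open alcove associated to `w`. -/
noncomputable def T (w : Equiv.Perm (Fin d)) : Set (Fin d → ℝ) :=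
  (fun z => z - av w) ⁻¹' F w

lemma zsub (w : Equiv.Perm (Fin d)) (z : Fin d → ℝ) {ℓ : ℕ} (h1 : 1 ≤ ℓ) (h2 : ℓ ≤ d)
    (a : Fin d) (ha : a.val = ℓ - 1) :
    (z - av w) a = zcoord z ℓ - (des w 1 ℓ : ℝ) := by
  have hℓ : ℓ - 1 + 1 = ℓ := by omega
  have haa : a = ⟨ℓ - 1, by omega⟩ := Fin.ext ha
  have hdes : des w 1 (ℓ - 1 + 1) = des w 1 ℓ := by rw [hℓ]
  rw [haa]
  simp only [Pi.sub_apply, av, zcoord_pos z h1 h2]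
  rw [hdes]

lemma key1 (w : Equiv.Perm (Fin d)) {z : Fin d → ℝ} (hz : z ∈ T w) {i j : ℕ}
    (hij : i < j) (hjd : j ≤ d) :
    (((des w i j : ℤ) - if ov w j < ov w i then 1 else 0 : ℤ) : ℝ) < zcoord z j - zcoord z i ∧
      zcoord z j - zcoord z i <
        (((des w i j : ℤ) - if ov w j < ov w i then 1 else 0 : ℤ) : ℝ) + 1 := by
  have hz' : z - av w ∈ F w := hz
  obtain ⟨hIoo, hiff⟩ := hz'
  have hj1 : 1 ≤ j := by omega
  set j' : Fin d := ⟨j - 1, by omega⟩ with hj'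
  have hzj : zcoord z j = (z - av w) j' + (des w 1 j : ℝ) := by
    have h := zsub w z hj1 hjd j' rfl
    linarith
  obtain ⟨hj0, hj1'⟩ := hIoo j'
  rcases Nat.lt_or_ge i 1 with hi0 | hi1
  · have hi : i = 0 := by omega
    subst hi
    rw [zcoord_zero]
    have h1 : ¬ (ov w j < ov w 0) := by rw [ov_zero]; omega
    rw [if_neg h1, des_zero w hj1, hzj]
    push_cast
    constructor <;> linarith
  · set i' : Fin d := ⟨i - 1, by omega⟩ with hi'
    have hzi : zcoord z i = (z - av w) i' + (des w 1 i : ℝ) := by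
      have h := zsub w z hi1 (by omega) i' rfl
      linarith
    have hadd : des w 1 j = des w 1 i + des w i j := des_add w hi1 hij.le
    have hovij : (ov w j < ov w i) ↔ (z - av w) j' < (z - av w) i' := by
      rw [ov_lt_iff w hj1 hjd hi1 (by omega)]
      exact hiff j' i'
    have hne : (z - av w) i' ≠ (z - av w) j' := by
      intro he
      have hne' : i' ≠ j' := by
        rw [hi', hj']
        intro hc
        rw [Fin.mk.injEq] at hc
        omega
      rcases (w.injective.ne hne').lt_or_gt with h | h
      · have := (hiff i' j').mp h
        rw [he] at this
        exact lt_irrefl _ this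
      · have := (hiff j' i').mp h
        rw [he] at this
        exact lt_irrefl _ this
    obtain ⟨hi0', hi1''⟩ := hIoo i'
    by_cases hlt : ov w j < ov w i
    · have hf : (z - av w) j' < (z - av w) i' := hovij.mp hlt
      rw [if_pos hlt, hzi, hzj, hadd]
      push_cast
      constructor <;> linarith
    · have hnf : ¬ (z - av w) j' < (z - av w) i' := fun hc => hlt (hovij.mpr hc)
      have hf : (z - av w) i' < (z - av w) j' := lt_of_le_of_ne (not_lt.mp hnf) hne
      rw [if_neg hlt, hzi, hzj, hadd]
      push_cast
      constructor <;> linarith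

lemma key_ne (w : Equiv.Perm (Fin d)) {z : Fin d → ℝ} (hz : z ∈ T w) {i j : ℕ}
    (hij : i < j) (hjd : j ≤ d) (m : ℤ) : zcoord z j - zcoord z i ≠ (m : ℝ) := by
  obtain ⟨h1, h2⟩ := key1 w hz hij hjd
  intro he
  rw [he] at h1 h2
  set q : ℤ := (des w i j : ℤ) - if ov w j < ov w i then 1 else 0
  have hq1 : q < m := by exact_mod_cast h1
  have hq2 : (m : ℝ) < ((q + 1 : ℤ) : ℝ) := by push_cast; linarith
  have hq2' : m < q + 1 := by exact_mod_cast hq2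
  omega

lemma pair_iff (w : Equiv.Perm (Fin d)) {z : Fin d → ℝ} (hz : z ∈ T w) {i j : ℕ}
    (hij : i < j) (hjd : j ≤ d) (bb : WithBot ℤ) (cc : WithTop ℤ) :
    ((∀ m : ℤ, bb = (m : WithBot ℤ) → (m : ℝ) ≤ zcoord z j - zcoord z i) ↔
      (bb ≤ ((des w i j : ℤ) : WithBot ℤ) ∧
        (bb = ((des w i j : ℤ) : WithBot ℤ) → ov w i < ov w j))) ∧
    ((∀ m : ℤ, cc = (m : WithTop ℤ) → zcoord z j - zcoord z i ≤ (m : ℝ)) ↔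
      (((des w i j : ℤ) : WithTop ℤ) ≤ cc ∧
        (cc = ((des w i j : ℤ) : WithTop ℤ) → ov w j < ov w i))) := by
  obtain ⟨h1, h2⟩ := key1 w hz hij hjd
  set q : ℤ := (des w i j : ℤ) - if ov w j < ov w i then 1 else 0 with hQ
  set r : ℝ := zcoord z j - zcoord z i
  have hle : ∀ m : ℤ, ((m : ℝ) ≤ r ↔ m ≤ q) := by
    intro m
    constructor
    · intro h
      have hx : (m : ℝ) < ((q + 1 : ℤ) : ℝ) := by push_cast; push_cast at h2; linarith
      have : m < q + 1 := by exact_mod_cast hx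
      omega
    · intro h
      have : (m : ℝ) ≤ (q : ℝ) := by exact_mod_cast h
      linarith
  have hge : ∀ m : ℤ, (r ≤ (m : ℝ) ↔ q + 1 ≤ m) := by
    intro m
    constructor
    · intro h
      have hx : ((q : ℤ) : ℝ) < (m : ℝ) := lt_of_lt_of_le h1 h
      have : q < m := by exact_mod_cast hx
      omega
    · intro h
      have : ((q + 1 : ℤ) : ℝ) ≤ (m : ℝ) := by exact_mod_cast h
      push_cast at this
      linarith
  have hor := ov_lt_or w hij hjd
  constructor
  · induction bb using WithBot.recBotCoe with
    | bot =>
      constructor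
      · intro _
        exact ⟨bot_le, fun h => absurd h.symm (by simp)⟩
      · intro _ m hm
        exact absurd hm.symm (by simp)
    | coe m =>
      have hL : (∀ m' : ℤ, (m : WithBot ℤ) = (m' : WithBot ℤ) → (m' : ℝ) ≤ r) ↔ (m : ℝ) ≤ r := by
        constructor
        · exact fun h => h m rfl
        · intro h m' hm'
          have : m = m' := by exact_mod_cast hm'
          rwa [← this]
      rw [hL, hle m, WithBot.coe_le_coe, WithBot.coe_inj]
      by_cases hlt : ov w j < ov w i
      · have hnot : ¬ ov w i < ov w j := by omega
        rw [hQ, if_pos hlt]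
        constructor
        · intro h
          exact ⟨by omega, fun he => by omega⟩
        · rintro ⟨hmd, himp⟩
          by_cases hmD : m = (des w i j : ℤ)
          · exact absurd (himp hmD) hnot
          · omega
      · have hio : ov w i < ov w j := hor.resolve_right hlt
        rw [hQ, if_neg hlt]
        constructor
        · intro h
          exact ⟨by omega, fun _ => hio⟩
        · rintro ⟨hmd, -⟩
          omega
  · induction cc using WithTop.recTopCoe with
    | top =>
      constructor
      · intro _
        exact ⟨le_top, fun h => absurd h.symm (by simp)⟩
      · intro _ m hm
        exact absurd hm.symm (by simp)
    | coe m =>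
      have hL : (∀ m' : ℤ, (m : WithTop ℤ) = (m' : WithTop ℤ) → r ≤ (m' : ℝ)) ↔ r ≤ (m : ℝ) := by
        constructor
        · exact fun h => h m rfl
        · intro h m' hm'
          have : m = m' := by exact_mod_cast hm'
          rwa [← this]
      rw [hL, hge m, WithTop.coe_le_coe, WithTop.coe_inj]
      by_cases hlt : ov w j < ov w i
      · rw [hQ, if_pos hlt]
        constructor
        · intro h
          exact ⟨by omega, fun _ => hlt⟩
        · rintro ⟨h, -⟩
          omega
      · rw [hQ, if_neg hlt]
        constructor
        · intro h
          exact ⟨by omega, fun he => by omega⟩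
        · rintro ⟨hmd, himp⟩
          by_cases he : m = (des w i j : ℤ)
          · exact absurd (himp he) hlt
          · omega

end LP

namespace LP

variable {d : ℕ}

lemma floor_step {u v : ℝ} (h1 : 0 < v - u) (h2 : v - u < 1) (hv : Int.fract v ≠ 0) :
    ⌊v⌋ = ⌊u⌋ + if Int.fract v < Int.fract u then 1 else 0 := by
  have hu1 : Int.fract u < 1 := Int.fract_lt_one u
  have hu0 : 0 ≤ Int.fract u := Int.fract_nonneg u
  have hveq : v = (Int.fract u + (v - u)) + (⌊u⌋ : ℤ) := by
    have := Int.self_sub_floor u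
    push_cast
    push_cast at this
    linarith
  by_cases hc : Int.fract u + (v - u) < 1
  · have hfl : ⌊v⌋ = ⌊u⌋ := by
      calc ⌊v⌋ = ⌊Int.fract u + (v - u) + (⌊u⌋ : ℤ)⌋ := by rw [← hveq]
      _ = ⌊Int.fract u + (v - u)⌋ + ⌊u⌋ := Int.floor_add_intCast _ _
      _ = 0 + ⌊u⌋ := by rw [Int.floor_eq_zero_iff.mpr ⟨by linarith, hc⟩]
      _ = ⌊u⌋ := by omega
    have hfr : Int.fract v = Int.fract u + (v - u) := by
      calc Int.fract v = Int.fract (Int.fract u + (v - u) + (⌊u⌋ : ℤ)) := by rw [← hveq]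
      _ = Int.fract (Int.fract u + (v - u)) := Int.fract_add_intCast _ _
      _ = Int.fract u + (v - u) := Int.fract_eq_self.mpr ⟨by linarith, hc⟩
    rw [hfl, hfr, if_neg (by linarith)]
    omega
  · push_neg at hc
    have hfr2 : Int.fract v = Int.fract (Int.fract u + (v - u)) := by
      calc Int.fract v = Int.fract (Int.fract u + (v - u) + (⌊u⌋ : ℤ)) := by rw [← hveq]
      _ = Int.fract (Int.fract u + (v - u)) := Int.fract_add_intCast _ _
    have hne : Int.fract u + (v - u) ≠ 1 := by
      intro h
      apply hv
      rw [hfr2, h, Int.fract_one]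
    have hgt : 1 < Int.fract u + (v - u) := lt_of_le_of_ne hc (Ne.symm hne)
    have hsplit : Int.fract u + (v - u) = (Int.fract u + (v - u) - 1) + ((1 : ℤ) : ℝ) := by
      push_cast; ring
    have hfl : ⌊v⌋ = ⌊u⌋ + 1 := by
      calc ⌊v⌋ = ⌊Int.fract u + (v - u) + (⌊u⌋ : ℤ)⌋ := by rw [← hveq]
      _ = ⌊Int.fract u + (v - u)⌋ + ⌊u⌋ := Int.floor_add_intCast _ _
      _ = ⌊(Int.fract u + (v - u) - 1) + ((1 : ℤ) : ℝ)⌋ + ⌊u⌋ := by rw [← hsplit]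
      _ = ⌊Int.fract u + (v - u) - 1⌋ + 1 + ⌊u⌋ := by rw [Int.floor_add_intCast]
      _ = 0 + 1 + ⌊u⌋ := by rw [Int.floor_eq_zero_iff.mpr ⟨by linarith, by linarith⟩]
      _ = ⌊u⌋ + 1 := by omega
    have hfr : Int.fract v = Int.fract u + (v - u) - 1 := by
      calc Int.fract v = Int.fract (Int.fract u + (v - u)) := hfr2
      _ = Int.fract ((Int.fract u + (v - u) - 1) + ((1 : ℤ) : ℝ)) := by rw [← hsplit]
      _ = Int.fract (Int.fract u + (v - u) - 1) := Int.fract_add_intCast _ _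
      _ = Int.fract u + (v - u) - 1 := Int.fract_eq_self.mpr ⟨by linarith, by linarith⟩
    rw [hfl, hfr, if_pos (by linarith)]

lemma exists_rank {f : Fin d → ℝ} (hinj : Function.Injective f) :
    ∃ w : Equiv.Perm (Fin d), ∀ a b, w a < w b ↔ f a < f b := by
  have hsm : StrictMono (f ∘ Tuple.sort f) :=
    (Tuple.monotone_sort f).strictMono_of_injective (hinj.comp (Tuple.sort f).injective)
  refine ⟨(Tuple.sort f)⁻¹, fun a b => ?_⟩
  have ha : f a = (f ∘ ⇑(Tuple.sort f)) ((Tuple.sort f)⁻¹ a) := by simp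
  have hb : f b = (f ∘ ⇑(Tuple.sort f)) ((Tuple.sort f)⁻¹ b) := by simp
  rw [ha, hb]
  exact (hsm.lt_iff_lt).symm

lemma perm_eq {w w' : Equiv.Perm (Fin d)} (h : ∀ a b, w a < w b ↔ w' a < w' b) :
    w = w' := by
  have hsm : StrictMono (⇑w' ∘ ⇑w.symm) := by
    intro a b hab
    have h2 : w (w.symm a) < w (w.symm b) := by simpa using hab
    exact (h _ _).mp h2
  have hsurj : Function.Surjective (⇑w' ∘ ⇑w.symm) :=
    w'.surjective.comp w.symm.surjective
  have hrange : Set.range (⇑w' ∘ ⇑w.symm) = Set.range (id : Fin d → Fin d) := by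
    rw [Set.range_eq_univ.mpr hsurj, Set.range_id]
  haveI : WellFoundedLT (Fin d) := inferInstance
  have heq : (⇑w' ∘ ⇑w.symm) = (id : Fin d → Fin d) :=
    (StrictMono.range_inj hsm (strictMono_id : StrictMono (id : Fin d → Fin d))).mp hrange
  apply Equiv.ext
  intro x
  have h3 := congrFun heq (w x)
  simpa using h3.symm

lemma exists_T {z : Fin d → ℝ}
    (hs : ∀ ℓ, 1 ≤ ℓ → ℓ ≤ d → 0 < zcoord z ℓ - zcoord z (ℓ - 1) ∧
      zcoord z ℓ - zcoord z (ℓ - 1) < 1)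
    (hg : ∀ i j : ℕ, i < j → j ≤ d → ∀ m : ℤ, zcoord z j - zcoord z i ≠ (m : ℝ)) :
    ∃ w : Equiv.Perm (Fin d), z ∈ T w := by
  have hnotint : ∀ (a : Fin d) (m : ℤ), z a ≠ (m : ℝ) := by
    intro a m h
    have h2 := hg 0 (a.val + 1) (by omega) (by omega) m
    rw [zcoord_fin, zcoord_zero, sub_zero] at h2
    exact h2 h
  have hfr0 : ∀ a : Fin d, Int.fract (z a) ≠ 0 := by
    intro a h
    apply hnotint a ⌊z a⌋
    have h2 := Int.self_sub_floor (z a)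
    rw [h] at h2
    linarith [h2]
  have hfI : ∀ a : Fin d, 0 < Int.fract (z a) ∧ Int.fract (z a) < 1 :=
    fun a => ⟨(Int.fract_nonneg (z a)).lt_of_ne (Ne.symm (hfr0 a)), Int.fract_lt_one (z a)⟩
  have hinj : Function.Injective (fun a : Fin d => Int.fract (z a)) := by
    intro a b' hab
    by_contra hne
    have hzz : z a - ⌊z a⌋ = z b' - ⌊z b'⌋ := by
      have ha := Int.self_sub_floor (z a)
      have hb := Int.self_sub_floor (z b')
      rw [ha, hb]
      exact hab
    rcases lt_or_gt_of_ne hne with h | h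
    · apply hg (a.val + 1) (b'.val + 1) (by exact_mod_cast Nat.add_lt_add_right h 1) (by omega)
        (⌊z b'⌋ - ⌊z a⌋)
      rw [zcoord_fin, zcoord_fin]
      push_cast
      linarith
    · apply hg (b'.val + 1) (a.val + 1) (by exact_mod_cast Nat.add_lt_add_right h 1) (by omega)
        (⌊z a⌋ - ⌊z b'⌋)
      rw [zcoord_fin, zcoord_fin]
      push_cast
      linarith
  obtain ⟨w, hw⟩ := exists_rank hinj
  have hfloor : ∀ ℓ, 1 ≤ ℓ → ℓ ≤ d → ⌊zcoord z ℓ⌋ = (des w 1 ℓ : ℤ) := by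
    intro ℓ h1
    induction ℓ, h1 using Nat.le_induction with
    | base =>
      intro hdd
      have h01 := hs 1 le_rfl hdd
      rw [show (1:ℕ) - 1 = 0 from rfl, zcoord_zero, sub_zero] at h01
      rw [des_self]
      exact_mod_cast Int.floor_eq_zero_iff.mpr ⟨le_of_lt h01.1, h01.2⟩
    | succ ℓ hℓ ih =>
      intro hsd
      have hld : ℓ ≤ d := by omega
      have hprev := ih hld
      have hstep := hs (ℓ + 1) (by omega) hsd
      rw [show ℓ + 1 - 1 = ℓ from rfl] at hstep
      set a' : Fin d := ⟨ℓ - 1, by omega⟩ with ha'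
      set b' : Fin d := ⟨ℓ, by omega⟩ with hb'
      have hza : zcoord z ℓ = z a' := zcoord_pos z hℓ hld
      have hzb : zcoord z (ℓ + 1) = z b' := zcoord_pos z (by omega) hsd
      have hfl := floor_step hstep.1 hstep.2 (by rw [hzb]; exact hfr0 b')
      rw [hza, hzb] at hfl
      have hdes2 : des w 1 (ℓ + 1) = des w 1 ℓ + if ov w (ℓ + 1) < ov w ℓ then 1 else 0 := by
        rw [des_add w (by omega : 1 ≤ ℓ) (by omega : ℓ ≤ ℓ + 1), des_single]
      have hiff2 : (Int.fract (z b') < Int.fract (z a')) ↔ (ov w (ℓ + 1) < ov w ℓ) := by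
        rw [ov_lt_iff w (by omega) hsd hℓ hld]
        have h5 := hw b' a'
        rw [show (⟨ℓ + 1 - 1, by omega⟩ : Fin d) = b' from rfl,
          show (⟨ℓ - 1, by omega⟩ : Fin d) = a' from rfl]
        exact h5.symm
      have hprev' : ⌊z a'⌋ = (des w 1 ℓ : ℤ) := by rw [← hza]; exact hprev
      rw [hzb, hfl, hprev', hdes2]
      by_cases hov : ov w (ℓ + 1) < ov w ℓ
      · rw [if_pos (hiff2.mpr hov), if_pos hov]
        push_cast
        ring
      · rw [if_neg (fun hc => hov (hiff2.mp hc)), if_neg hov]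
        push_cast
        ring
  refine ⟨w, ?_⟩
  have hfeq : z - av w = fun a : Fin d => Int.fract (z a) := by
    funext a
    have h3 := hfloor (a.val + 1) (by omega) (by omega)
    rw [zcoord_fin] at h3
    simp only [Pi.sub_apply, av]
    have hcast : ((des w 1 (a.val + 1) : ℕ) : ℝ) = ((⌊z a⌋ : ℤ) : ℝ) := by
      exact_mod_cast congrArg (fun n : ℤ => (n : ℝ)) h3.symm
    rw [hcast]
    exact Int.self_sub_floor (z a)
  show z - av w ∈ F w
  rw [hfeq]
  exact ⟨fun a => ⟨(hfI a).1, (hfI a).2⟩, hw⟩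

lemma T_disjoint {w w' : Equiv.Perm (Fin d)} (hne : w ≠ w') : Disjoint (T w) (T w') := by
  rw [Set.disjoint_left]
  intro z hz hz'
  have hz1 : z - av w ∈ F w := hz
  have hz2 : z - av w' ∈ F w' := hz'
  obtain ⟨hI, hiff⟩ := hz1
  obtain ⟨hI', hiff'⟩ := hz2
  have hav : av w = av w' := by
    funext a
    obtain ⟨h1, h2⟩ := hI a
    obtain ⟨h1', h2'⟩ := hI' a
    simp only [Pi.sub_apply, av] at h1 h2 h1' h2'
    have hc1 : ((des w 1 (a.val + 1) : ℕ) : ℝ) < ((des w' 1 (a.val + 1) : ℕ) : ℝ) + 1 := by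
      linarith
    have hc2 : ((des w' 1 (a.val + 1) : ℕ) : ℝ) < ((des w 1 (a.val + 1) : ℕ) : ℝ) + 1 := by
      linarith
    have hn1 : des w 1 (a.val + 1) < des w' 1 (a.val + 1) + 1 := by exact_mod_cast hc1
    have hn2 : des w' 1 (a.val + 1) < des w 1 (a.val + 1) + 1 := by exact_mod_cast hc2
    simp only [av]
    congr 1
    omega
  apply hne
  apply perm_eq
  intro a b
  rw [hiff a b]
  rw [hav]
  exact (hiff' a b).symm

lemma F_disjoint {w w' : Equiv.Perm (Fin d)} (hne : w ≠ w') : Disjoint (F w) (F w') := by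
  rw [Set.disjoint_left]
  intro f hf hf'
  exact hne (perm_eq fun a b => (hf.2 a b).trans (hf'.2 a b).symm)

end LP

namespace LP

variable {d : ℕ}

lemma null_linear (L : (Fin d → ℝ) →ₗ[ℝ] ℝ) (hL : L ≠ 0) (r : ℝ) :
    volume {z : Fin d → ℝ | L z = r} = 0 := by
  rcases Set.eq_empty_or_nonempty {z : Fin d → ℝ | L z = r} with h | ⟨x0, hx0⟩
  · simp [h]
  · have hx0' : L x0 = r := hx0
    have hset : {z : Fin d → ℝ | L z = r} =
        (fun z => -x0 + z) ⁻¹' ((LinearMap.ker L : Submodule ℝ (Fin d → ℝ)) : Set (Fin d → ℝ)) := by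
      ext z
      simp only [Set.mem_setOf_eq, Set.mem_preimage, SetLike.mem_coe, LinearMap.mem_ker,
        map_add, map_neg, hx0']
      constructor
      · intro h; rw [h]; ring
      · intro h; linarith
    rw [hset, measure_preimage_add]
    exact Measure.addHaar_submodule volume _ (fun h => hL (LinearMap.ker_eq_top.mp h))

lemma null_pair (a b : Fin d) (hab : a ≠ b) (r : ℝ) :
    volume {z : Fin d → ℝ | z a - z b = r} = 0 := by
  have hL : ((LinearMap.proj a : (Fin d → ℝ) →ₗ[ℝ] ℝ) -
      (LinearMap.proj b : (Fin d → ℝ) →ₗ[ℝ] ℝ)) ≠ 0 := by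
    intro h
    have h2 := LinearMap.congr_fun h (Pi.single a 1)
    simp only [LinearMap.sub_apply, LinearMap.proj_apply, LinearMap.zero_apply,
      Pi.single_eq_same, Pi.single_eq_of_ne hab.symm] at h2
    norm_num at h2
  have hset : {z : Fin d → ℝ | z a - z b = r} =
      {z : Fin d → ℝ | ((LinearMap.proj a : (Fin d → ℝ) →ₗ[ℝ] ℝ) -
        (LinearMap.proj b : (Fin d → ℝ) →ₗ[ℝ] ℝ)) z = r} := by
    ext z
    simp only [Set.mem_setOf_eq, LinearMap.sub_apply, LinearMap.proj_apply]
  rw [hset]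
  exact null_linear _ hL r

lemma null_coord (a : Fin d) (r : ℝ) : volume {z : Fin d → ℝ | z a = r} = 0 := by
  have hset : {z : Fin d → ℝ | z a = r} =
      {z : Fin d → ℝ | (LinearMap.proj a : (Fin d → ℝ) →ₗ[ℝ] ℝ) z = r} := by
    ext z
    simp only [Set.mem_setOf_eq, LinearMap.proj_apply]
  rw [hset]
  refine null_linear _ (fun h => ?_) r
  have h2 := LinearMap.congr_fun h (Pi.single a 1)
  simp only [LinearMap.proj_apply, LinearMap.zero_apply, Pi.single_eq_same] at h2
  norm_num at h2

lemma null_bad :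
    volume {z : Fin d → ℝ | ¬ ∀ i j : ℕ, i < j → j ≤ d →
      ∀ m : ℤ, zcoord z j - zcoord z i ≠ (m : ℝ)} = 0 := by
  have hsub : {z : Fin d → ℝ | ¬ ∀ i j : ℕ, i < j → j ≤ d →
        ∀ m : ℤ, zcoord z j - zcoord z i ≠ (m : ℝ)} ⊆
      ⋃ p : ℕ × ℕ × ℤ, {z : Fin d → ℝ |
        p.1 < p.2.1 ∧ p.2.1 ≤ d ∧ zcoord z p.2.1 - zcoord z p.1 = ((p.2.2 : ℤ) : ℝ)} := by
    intro z hz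
    simp only [Set.mem_setOf_eq] at hz
    push_neg at hz
    obtain ⟨i, j, hij, hjd, m, hm⟩ := hz
    exact Set.mem_iUnion.mpr ⟨⟨i, j, m⟩, hij, hjd, hm⟩
  refine measure_mono_null hsub (measure_iUnion_null fun p => ?_)
  obtain ⟨i, j, m⟩ := p
  dsimp only
  by_cases hc : i < j ∧ j ≤ d
  · obtain ⟨hij, hjd⟩ := hc
    rcases Nat.lt_or_ge i 1 with h0 | h1
    · have hi : i = 0 := by omega
      subst hi
      refine measure_mono_null (fun z hz => ?_) (null_coord ⟨j - 1, by omega⟩ ((m : ℤ) : ℝ))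
      have h3 := hz.2.2
      rwa [zcoord_pos z (by omega) hjd, zcoord_zero, sub_zero] at h3
    · refine measure_mono_null (fun z hz => ?_)
        (null_pair ⟨j - 1, by omega⟩ ⟨i - 1, by omega⟩
          (by intro h; rw [Fin.mk.injEq] at h; omega) ((m : ℤ) : ℝ))
      have h3 := hz.2.2
      rwa [zcoord_pos z (by omega) hjd, zcoord_pos z h1 (by omega)] at h3
  · refine measure_mono_null (fun z hz => ?_) (measure_empty (μ := volume))
    exact (hc ⟨hz.1, hz.2.1⟩).elim

lemma null_noninj : volume {f : Fin d → ℝ | ¬ Function.Injective f} = 0 := by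
  have hsub : {f : Fin d → ℝ | ¬ Function.Injective f} ⊆
      ⋃ p : Fin d × Fin d, {f : Fin d → ℝ | p.1 ≠ p.2 ∧ f p.1 - f p.2 = 0} := by
    intro f hf
    simp only [Set.mem_setOf_eq, Function.Injective, not_forall] at hf
    obtain ⟨a, b, hab, hne⟩ := hf
    exact Set.mem_iUnion.mpr ⟨(a, b), hne, by rw [hab]; ring⟩
  refine measure_mono_null hsub (measure_iUnion_null fun p => ?_)
  by_cases hp : p.1 = p.2
  · refine measure_mono_null (fun f hf => ?_) (measure_empty (μ := volume))
    exact (hf.1 hp).elim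
  · exact measure_mono_null (fun f hf => hf.2) (null_pair p.1 p.2 hp 0)

lemma F_measurable (w : Equiv.Perm (Fin d)) : MeasurableSet (F w) := by
  have h1 : MeasurableSet {f : Fin d → ℝ | ∀ i, f i ∈ Set.Ioo (0:ℝ) 1} := by
    rw [Set.setOf_forall]
    exact MeasurableSet.iInter fun i => (measurable_pi_apply i) measurableSet_Ioo
  have h2 : MeasurableSet {f : Fin d → ℝ | ∀ i j, w i < w j ↔ f i < f j} := by
    rw [Set.setOf_forall]
    refine MeasurableSet.iInter fun i => ?_
    rw [Set.setOf_forall]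
    refine MeasurableSet.iInter fun j => ?_
    by_cases hij : w i < w j
    · have : {f : Fin d → ℝ | w i < w j ↔ f i < f j} = {f | f i < f j} := by
        ext f; simp [hij]
      rw [this]
      exact measurableSet_lt (measurable_pi_apply i) (measurable_pi_apply j)
    · have : {f : Fin d → ℝ | w i < w j ↔ f i < f j} = {f | f i < f j}ᶜ := by
        ext f; simp [hij]
      rw [this]
      exact (measurableSet_lt (measurable_pi_apply i) (measurable_pi_apply j)).compl
  have hF : F w = {f : Fin d → ℝ | ∀ i, f i ∈ Set.Ioo (0:ℝ) 1} ∩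
      {f : Fin d → ℝ | ∀ i j, w i < w j ↔ f i < f j} := by
    ext f; exact Iff.rfl
  rw [hF]
  exact h1.inter h2

lemma T_measurable (w : Equiv.Perm (Fin d)) : MeasurableSet (T w) :=
  (F_measurable w).preimage ((continuous_id.sub continuous_const).measurable)

lemma vol_T_eq_F (w : Equiv.Perm (Fin d)) : volume (T w) = volume (F w) := by
  have hfun : (fun z : Fin d → ℝ => z - av w) = (fun z => -av w + z) := by
    funext z; rw [sub_eq_neg_add]
  rw [T, hfun, measure_preimage_add]

lemma F_subset_cube (w : Equiv.Perm (Fin d)) :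
    F w ⊆ Set.pi Set.univ (fun _ : Fin d => Set.Ioo (0:ℝ) 1) :=
  fun f hf i _ => hf.1 i

lemma vol_cube : volume (Set.pi Set.univ (fun _ : Fin d => Set.Ioo (0:ℝ) 1)) = 1 := by
  rw [volume_pi_pi]
  simp [Real.volume_Ioo]

lemma cube_subset : Set.pi Set.univ (fun _ : Fin d => Set.Ioo (0:ℝ) 1) ⊆
    (⋃ w : Equiv.Perm (Fin d), F w) ∪ {f : Fin d → ℝ | ¬ Function.Injective f} := by
  intro f hf
  by_cases hinj : Function.Injective f
  · obtain ⟨w, hw⟩ := exists_rank hinj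
    exact Or.inl (Set.mem_iUnion.mpr ⟨w, fun i => hf i (Set.mem_univ i), hw⟩)
  · exact Or.inr hinj

lemma F_vol_pair (w w' : Equiv.Perm (Fin d)) : volume (F w) = volume (F w') := by
  set e : Equiv.Perm (Fin d) := w'.trans w.symm with he
  have hco : ∀ i, w (e i) = w' i := by
    intro i
    simp [he, Equiv.trans_apply]
  have hset : F w = (fun f : Fin d → ℝ => f ∘ e) ⁻¹' F w' := by
    ext f
    simp only [Set.mem_preimage, F, Set.mem_setOf_eq, Function.comp]
    constructor
    · rintro ⟨hI, hiff⟩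
      refine ⟨fun i => hI (e i), fun i j => ?_⟩
      rw [← hco i, ← hco j]
      exact hiff (e i) (e j)
    · rintro ⟨hI, hiff⟩
      refine ⟨fun a => ?_, fun a b => ?_⟩
      · have h4 := hI (e.symm a)
        rwa [Equiv.apply_symm_apply] at h4
      · have h4 := hiff (e.symm a) (e.symm b)
        rw [← hco (e.symm a), ← hco (e.symm b), Equiv.apply_symm_apply,
          Equiv.apply_symm_apply] at h4
        exact h4
  rw [hset]
  have hmp : MeasurePreserving (fun f : Fin d → ℝ => f ∘ e) volume volume :=
    volume_preserving_arrowCongr' e.symm (MeasurableEquiv.refl ℝ) (MeasurePreserving.id _)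
  exact hmp.measure_preimage (F_measurable w').nullMeasurableSet

lemma vol_F (w0 : Equiv.Perm (Fin d)) :
    volume (F w0) = ((d.factorial : ℝ≥0∞))⁻¹ := by
  have hU : volume (⋃ w : Equiv.Perm (Fin d), F w) = ∑' w : Equiv.Perm (Fin d), volume (F w) :=
    measure_iUnion (fun w w' hne => F_disjoint hne) (fun w => F_measurable w)
  have hle1 : volume (⋃ w : Equiv.Perm (Fin d), F w) ≤ 1 := by
    rw [← vol_cube (d := d)]
    exact measure_mono (Set.iUnion_subset fun w => F_subset_cube w)
  have hge1 : (1 : ℝ≥0∞) ≤ volume (⋃ w : Equiv.Perm (Fin d), F w) := by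
    calc (1 : ℝ≥0∞) = volume (Set.pi Set.univ (fun _ : Fin d => Set.Ioo (0:ℝ) 1)) :=
          (vol_cube (d := d)).symm
    _ ≤ volume ((⋃ w : Equiv.Perm (Fin d), F w) ∪ {f : Fin d → ℝ | ¬ Function.Injective f}) :=
          measure_mono cube_subset
    _ ≤ volume (⋃ w : Equiv.Perm (Fin d), F w) + volume {f : Fin d → ℝ | ¬ Function.Injective f} :=
          measure_union_le _ _
    _ = volume (⋃ w : Equiv.Perm (Fin d), F w) := by rw [null_noninj, add_zero]
  have hone : volume (⋃ w : Equiv.Perm (Fin d), F w) = 1 := le_antisymm hle1 hge1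
  rw [hU, tsum_fintype] at hone
  rw [Finset.sum_congr rfl (fun w _ => F_vol_pair w w0), Finset.sum_const, Finset.card_univ,
    Fintype.card_perm, Fintype.card_fin] at hone
  have hne : (d.factorial : ℝ≥0∞) ≠ 0 := Nat.cast_ne_zero.mpr (Nat.factorial_ne_zero d)
  have hnt : (d.factorial : ℝ≥0∞) ≠ ⊤ := natCast_ne_top _
  have h1 : (d.factorial : ℝ≥0∞) * volume (F w0) = 1 := by
    rwa [nsmul_eq_mul] at hone
  have h2 := congrArg (fun x => (d.factorial : ℝ≥0∞)⁻¹ * x) h1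
  simp only [← mul_assoc, ENNReal.inv_mul_cancel hne hnt, one_mul, mul_one] at h2
  exact h2

lemma vol_T (w : Equiv.Perm (Fin d)) : volume (T w) = ((d.factorial : ℝ≥0∞))⁻¹ := by
  rw [vol_T_eq_F, vol_F]

end LP

theorem stmt19 (d k : ℕ) (hd : 2 ≤ d) (hk1 : 1 ≤ k) (hkd : k ≤ d)
    (b : ℕ → ℕ → WithBot ℤ) (c : ℕ → ℕ → WithTop ℤ)
    (hbc : ∀ i j, i < j → j ≤ d → ∀ m m' : ℤ,
      b i j = (m : WithBot ℤ) → c i j = (m' : WithTop ℤ) → m ≤ m') :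
    volume {z : Fin d → ℝ |
      (∀ i, 1 ≤ i → i ≤ d →
        0 ≤ zcoord z i - zcoord z (i - 1) ∧ zcoord z i - zcoord z (i - 1) ≤ 1) ∧
      ((k : ℝ) - 1 ≤ zcoord z d ∧ zcoord z d ≤ (k : ℝ)) ∧
      (∀ i j, i < j → j ≤ d →
        (∀ m : ℤ, b i j = (m : WithBot ℤ) → (m : ℝ) ≤ zcoord z j - zcoord z i) ∧
        (∀ m : ℤ, c i j = (m : WithTop ℤ) → zcoord z j - zcoord z i ≤ (m : ℝ)))} =
    (Nat.card {w : Equiv.Perm (Fin d) //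
        des w 1 d = k - 1 ∧
        ∀ i j, i < j → j ≤ d →
          (b i j ≤ ((des w i j : ℤ) : WithBot ℤ) ∧
            (b i j = ((des w i j : ℤ) : WithBot ℤ) → ov w i < ov w j)) ∧
          (((des w i j : ℤ) : WithTop ℤ) ≤ c i j ∧
            (c i j = ((des w i j : ℤ) : WithTop ℤ) → ov w j < ov w i))} : ℝ≥0∞) /
      (Nat.factorial d : ℝ≥0∞) := by
  classical
  have hd1 : 1 ≤ d := by omega
  set P : Set (Fin d → ℝ) := {z : Fin d → ℝ |
      (∀ i, 1 ≤ i → i ≤ d →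
        0 ≤ zcoord z i - zcoord z (i - 1) ∧ zcoord z i - zcoord z (i - 1) ≤ 1) ∧
      ((k : ℝ) - 1 ≤ zcoord z d ∧ zcoord z d ≤ (k : ℝ)) ∧
      (∀ i j, i < j → j ≤ d →
        (∀ m : ℤ, b i j = (m : WithBot ℤ) → (m : ℝ) ≤ zcoord z j - zcoord z i) ∧
        (∀ m : ℤ, c i j = (m : WithTop ℤ) → zcoord z j - zcoord z i ≤ (m : ℝ)))} with hPdef
  set Wp : Equiv.Perm (Fin d) → Prop := fun w =>
      des w 1 d = k - 1 ∧
        ∀ i j, i < j → j ≤ d →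
          (b i j ≤ ((des w i j : ℤ) : WithBot ℤ) ∧
            (b i j = ((des w i j : ℤ) : WithBot ℤ) → ov w i < ov w j)) ∧
          (((des w i j : ℤ) : WithTop ℤ) ≤ c i j ∧
            (c i j = ((des w i j : ℤ) : WithTop ℤ) → ov w j < ov w i)) with hWpdef
  set Wfin : Finset (Equiv.Perm (Fin d)) := Finset.univ.filter Wp with hWfin
  have hTP : ∀ w : Equiv.Perm (Fin d), Wp w → LP.T w ⊆ P := by
    intro w hw z hz
    refine ⟨?_, ?_, ?_⟩
    · intro i h1 hid
      obtain ⟨hk1', hk2'⟩ := LP.key1 w hz (show i - 1 < i by omega) hid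
      have hdes : des w (i - 1) i = if ov w i < ov w (i - 1) then 1 else 0 := by
        have h := LP.des_single w (i - 1)
        rwa [show i - 1 + 1 = i by omega] at h
      rw [hdes] at hk1' hk2'
      split_ifs at hk1' hk2' <;> push_cast at hk1' hk2' <;> constructor <;> linarith
    · obtain ⟨hk1', hk2'⟩ := LP.key1 w hz (show (0:ℕ) < d by omega) (le_refl d)
      have h0 : ¬ (ov w d < ov w 0) := by rw [LP.ov_zero]; omega
      rw [if_neg h0, LP.des_zero w hd1, hw.1, LP.zcoord_zero] at hk1' hk2'
      push_cast [Nat.cast_sub hk1] at hk1' hk2'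
      constructor <;> linarith
    · intro i j hij hjd
      obtain ⟨hbiff, hciff⟩ := LP.pair_iff w hz hij hjd (b i j) (c i j)
      exact ⟨hbiff.mpr ((hw.2 i j hij hjd).1), hciff.mpr ((hw.2 i j hij hjd).2)⟩
  have hPT : ∀ z : Fin d → ℝ, z ∈ P →
      (∀ i j : ℕ, i < j → j ≤ d → ∀ m : ℤ, zcoord z j - zcoord z i ≠ (m : ℝ)) →
      ∃ w, Wp w ∧ z ∈ LP.T w := by
    intro z hzP hg
    obtain ⟨hP1, hP2, hP3⟩ := hzP
    have hstrict : ∀ ℓ, 1 ≤ ℓ → ℓ ≤ d → 0 < zcoord z ℓ - zcoord z (ℓ - 1) ∧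
        zcoord z ℓ - zcoord z (ℓ - 1) < 1 := by
      intro ℓ h1 h2
      obtain ⟨ha, hb'⟩ := hP1 ℓ h1 h2
      have hne0 := hg (ℓ - 1) ℓ (by omega) h2 0
      have hne1 := hg (ℓ - 1) ℓ (by omega) h2 1
      push_cast at hne0 hne1
      exact ⟨lt_of_le_of_ne ha (Ne.symm hne0), lt_of_le_of_ne hb' hne1⟩
    obtain ⟨w, hzT⟩ := LP.exists_T hstrict hg
    obtain ⟨hu1, hu2⟩ := LP.key1 w hzT (show (0:ℕ) < d by omega) (le_refl d)
    have h0 : ¬ (ov w d < ov w 0) := by rw [LP.ov_zero]; omega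
    rw [if_neg h0, LP.des_zero w hd1, LP.zcoord_zero] at hu1 hu2
    push_cast at hu1 hu2
    have hdes : des w 1 d = k - 1 := by
      have e1 : ((des w 1 d : ℕ) : ℝ) < (k : ℝ) := by
        have := hP2.2
        linarith
      have e2 : (k : ℝ) - 1 < ((des w 1 d : ℕ) : ℝ) + 1 := by
        have := hP2.1
        linarith
      have n1 : des w 1 d < k := by exact_mod_cast e1
      have n2 : (k : ℝ) < ((des w 1 d + 2 : ℕ) : ℝ) := by push_cast; linarith
      have n2' : k < des w 1 d + 2 := by exact_mod_cast n2
      omega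
    refine ⟨w, ⟨hdes, fun i j hij hjd => ?_⟩, hzT⟩
    obtain ⟨hbiff, hciff⟩ := LP.pair_iff w hzT hij hjd (b i j) (c i j)
    exact ⟨hbiff.mp ((hP3 i j hij hjd).1), hciff.mp ((hP3 i j hij hjd).2)⟩
  set U : Set (Fin d → ℝ) := ⋃ w ∈ Wfin, LP.T w with hUdef
  have hUP : U ⊆ P := by
    intro z hz
    rw [hUdef, Set.mem_iUnion₂] at hz
    obtain ⟨w, hwW, hzT⟩ := hz
    rw [hWfin, Finset.mem_filter] at hwW
    exact hTP w hwW.2 hzT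
  have hPsub : P \ U ⊆ {z : Fin d → ℝ | ¬ ∀ i j : ℕ, i < j → j ≤ d →
      ∀ m : ℤ, zcoord z j - zcoord z i ≠ (m : ℝ)} := by
    rintro z ⟨hzP, hzU⟩
    simp only [Set.mem_setOf_eq]
    intro hgen
    obtain ⟨w, hWw, hzT⟩ := hPT z hzP hgen
    refine hzU ?_
    rw [hUdef]
    exact Set.mem_biUnion (by rw [hWfin]; exact Finset.mem_filter.mpr ⟨Finset.mem_univ w, hWw⟩) hzT
  have hvolPU : volume P = volume U := by
    refine measure_congr (MeasureTheory.ae_eq_set.mpr ⟨?_, ?_⟩)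
    · exact measure_mono_null hPsub LP.null_bad
    · rw [Set.diff_eq_empty.mpr hUP]
      exact measure_empty
  have hUvol : volume U = (Wfin.card : ℝ≥0∞) * ((d.factorial : ℝ≥0∞))⁻¹ := by
    rw [hUdef, measure_biUnion_finset (fun w _ w' _ hne => LP.T_disjoint hne)
      (fun w _ => LP.T_measurable w)]
    rw [Finset.sum_congr rfl (fun w _ => LP.vol_T w), Finset.sum_const, nsmul_eq_mul]
  have hcard : (Nat.card {w : Equiv.Perm (Fin d) // Wp w}) = Wfin.card := by
    rw [Nat.card_eq_fintype_card, hWfin]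
    exact Fintype.card_subtype Wp
  rw [hvolPU, hUvol, hcard, div_eq_mul_inv]
end
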